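/- arXiv:1906.07619 — 4 statements merged into one kernel-verified Lean document; each statement's English description precedes it below -/
import Mathlib

section
/- Let G be a maximal 3-γc-vertex critical graph of order n. Then ω(G) ≤ n − 3, and equality holds if and only if G is isomorphic to the cycle C₅ on five vertices. -/
open Finset

variable {V : Type*}

/-- `D` is a connected dominating set of `G`: every vertex is in `D` or adjacent to a
vertex of `D`, and the subgraph induced by `D` is connected. -/
def IsConnDomSet (G : SimpleGraph V) (D : Set V) : Prop :=
  (∀ v : V, v ∈ D ∨ ∃ u ∈ D, G.Adj u v) ∧ (G.induce D).Connected

/-- The connected domination number `γc(G)`. -/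
noncomputable def gammaC (G : SimpleGraph V) [Fintype V] : ℕ :=
  sInf {k | ∃ D : Finset V, D.card = k ∧ IsConnDomSet G ↑D}

/-- The independence number `α(G)`. -/
noncomputable def alpha (G : SimpleGraph V) [Fintype V] : ℕ :=
  sSup {k | ∃ I : Finset V, I.card = k ∧ (↑I : Set V).Pairwise fun u v => ¬ G.Adj u v}

/-- The clique number `ω(G)`. -/
noncomputable def omegaNum (G : SimpleGraph V) [Fintype V] : ℕ :=
  sSup {k | ∃ W : Finset V, W.card = k ∧ (↑W : Set V).Pairwise G.Adj}

/-- The minimum degree `δ(G)`. -/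
noncomputable def minDeg (G : SimpleGraph V) [Fintype V] : ℕ :=
  sInf {k | ∃ v : V, (G.neighborSet v).ncard = k}

/-- The vertex connectivity `κ(G)`: the minimum size of a set of vertices whose
deletion leaves a graph that is disconnected or has at most one vertex
(so `κ = n - 1` for the complete graph on `n` vertices). -/
noncomputable def kappa (G : SimpleGraph V) [Fintype V] : ℕ :=
  sInf {k | ∃ S : Finset V, S.card = k ∧
    (¬ (G.induce (↑S : Set V)ᶜ).Connected ∨ ((↑S : Set V)ᶜ).Subsingleton)}

/-- `G` is `3`-`γc`-edge critical: `γc(G) = 3` and adding any missing edge decreases `γc`. -/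
def EdgeCritical3 (G : SimpleGraph V) [Fintype V] : Prop :=
  gammaC G = 3 ∧ ∀ u v : V, u ≠ v → ¬ G.Adj u v →
    gammaC (G ⊔ SimpleGraph.fromEdgeSet {s(u, v)}) < 3

/-- `G` is `3`-`γc`-vertex critical: `G` is `2`-connected, `γc(G) = 3` and deleting any
vertex decreases `γc`. -/
def VertexCritical3 (G : SimpleGraph V) [Fintype V] [DecidableEq V] : Prop :=
  2 ≤ kappa G ∧ gammaC G = 3 ∧ ∀ v : V, gammaC (G.induce {w | w ≠ v}) < 3

/-- `G` is maximal `3`-`γc`-vertex critical. -/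
def MaximalVertexCritical3 (G : SimpleGraph V) [Fintype V] [DecidableEq V] : Prop :=
  EdgeCritical3 G ∧ VertexCritical3 G

-- helpers
lemma exists_adj_of_conn {α : Type*} {H : SimpleGraph α} (h : H.Preconnected)
    {u w : α} (hne : u ≠ w) : ∃ t, H.Adj u t := by
  obtain ⟨p⟩ := h u w
  cases p with
  | nil => exact absurd rfl hne
  | cons h _ => exact ⟨_, h⟩

lemma induce_singleton_connected (G : SimpleGraph V) (a : V) :
    (G.induce ({a} : Set V)).Connected := by
  rw [SimpleGraph.connected_iff]
  refine ⟨fun u v => ?_, ⟨⟨a, rfl⟩⟩⟩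
  have : u = v := by
    rcases u with ⟨u, hu⟩; rcases v with ⟨v, hv⟩
    simp only [Set.mem_singleton_iff] at hu hv
    subst hu; subst hv; rfl
  rw [this]

lemma induce_pair_connected {G : SimpleGraph V} {a b : V} (hab : G.Adj a b) :
    (G.induce ({a, b} : Set V)).Connected := by
  have ha : a ∈ ({a, b} : Set V) := by simp
  rw [SimpleGraph.connected_iff]
  refine ⟨fun u v => ?_, ⟨⟨a, ha⟩⟩⟩
  have key : ∀ u : ({a, b} : Set V), (G.induce ({a, b} : Set V)).Reachable ⟨a, ha⟩ u := by
    rintro ⟨u, hu⟩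
    rcases hu with h | h
    · subst h; exact SimpleGraph.Reachable.refl _
    · simp only [Set.mem_singleton_iff] at h
      subst h
      exact SimpleGraph.Adj.reachable (by simp [hab])
  exact (key u).symm.trans (key v)

lemma gammaC_le {G : SimpleGraph V} [Fintype V] {D : Finset V}
    (hD : IsConnDomSet G ↑D) : gammaC G ≤ D.card :=
  Nat.sInf_le ⟨D, rfl, hD⟩

lemma no_cds_one {G : SimpleGraph V} [Fintype V] [DecidableEq V] (h3 : gammaC G = 3) (a : V)
    (hdom : ∀ v, v = a ∨ G.Adj a v) : False := by
  have hcds : IsConnDomSet G ↑({a} : Finset V) := by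
    constructor
    · intro v
      rcases hdom v with h | h
      · left; simp [h]
      · right; exact ⟨a, by simp, h⟩
    · rw [Finset.coe_singleton]; exact induce_singleton_connected G a
  have h1 := gammaC_le hcds
  rw [h3, Finset.card_singleton] at h1
  omega

lemma no_cds_two {G : SimpleGraph V} [Fintype V] [DecidableEq V] (h3 : gammaC G = 3)
    {a b : V} (hab : G.Adj a b)
    (hdom : ∀ v, v = a ∨ v = b ∨ G.Adj a v ∨ G.Adj b v) : False := by
  have hcds : IsConnDomSet G ↑({a, b} : Finset V) := by
    constructor
    · intro v
      rcases hdom v with h | h | h | h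
      · left; simp [h]
      · left; simp [h]
      · right; exact ⟨a, by simp, h⟩
      · right; exact ⟨b, by simp, h⟩
    · rw [Finset.coe_insert, Finset.coe_singleton]; exact induce_pair_connected hab
  have h1 := gammaC_le hcds
  have hc : ({a, b} : Finset V).card ≤ 2 := by
    refine le_trans (Finset.card_insert_le _ _) ?_
    simp
  omega

lemma exists_cds_le_two {α : Type*} [Fintype α] {H : SimpleGraph α} (hc : H.Connected)
    (hlt : gammaC H < 3) : ∃ D : Finset α, D.card ≤ 2 ∧ IsConnDomSet H ↑D := by
  have hne : {k | ∃ D : Finset α, D.card = k ∧ IsConnDomSet H ↑D}.Nonempty := by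
    refine ⟨_, Finset.univ, rfl, fun v => by left; simp, ?_⟩
    rw [Finset.coe_univ]
    exact (SimpleGraph.induceUnivIso H).connected_iff.mpr hc
  obtain ⟨D, hcard, hD⟩ := Nat.sInf_mem hne
  have : gammaC H = D.card := hcard.symm
  exact ⟨D, by omega, hD⟩

lemma finset_le_two_cases {α : Type*} [DecidableEq α] {D : Finset α} (h : D.card ≤ 2) :
    D = ∅ ∨ (∃ a, D = {a}) ∨ ∃ a b, a ≠ b ∧ D = {a, b} := by
  have h0 : D.card = 0 ∨ D.card = 1 ∨ D.card = 2 := by omega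
  rcases h0 with h0 | h0 | h0
  · exact Or.inl (Finset.card_eq_zero.mp h0)
  · exact Or.inr (Or.inl (Finset.card_eq_one.mp h0))
  · obtain ⟨a, b, hab, rfl⟩ := Finset.card_eq_two.mp h0
    exact Or.inr (Or.inr ⟨a, b, hab, rfl⟩)

set_option linter.unnecessarySimpa false in
lemma not_cds_empty {α : Type*} {H : SimpleGraph α}
    (h : IsConnDomSet H ↑(∅ : Finset α)) : False := by
  have := h.2.nonempty
  rw [Finset.coe_empty] at this
  simpa using this

lemma adj_of_cds_pair {α : Type*} [DecidableEq α] {H : SimpleGraph α} {a b : α}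
    (hne : a ≠ b) (h : IsConnDomSet H ↑({a, b} : Finset α)) : H.Adj a b := by
  have ha : a ∈ (↑({a, b} : Finset α) : Set α) := by simp
  have hb : b ∈ (↑({a, b} : Finset α) : Set α) := by simp
  obtain ⟨t, ht⟩ := exists_adj_of_conn h.2.preconnected
    (u := ⟨a, ha⟩) (w := ⟨b, hb⟩) (by simp [Subtype.ext_iff, hne])
  have h1 : H.Adj a ↑t := by simpa using ht
  have h2 : (↑t : α) = a ∨ (↑t : α) = b := by simpa using t.2
  rcases h2 with h2 | h2
  · rw [h2] at h1; exact absurd h1 (H.irrefl)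
  · rwa [h2] at h1

lemma kappa_conn {G : SimpleGraph V} [Fintype V] (h2 : 2 ≤ kappa G) : G.Connected := by
  by_contra hcon
  have hle : kappa G ≤ 0 := by
    refine Nat.sInf_le ⟨∅, Finset.card_empty, Or.inl fun hc => hcon ?_⟩
    have hset : (↑(∅ : Finset V) : Set V)ᶜ = Set.univ := by simp
    rw [hset] at hc
    exact (SimpleGraph.induceUnivIso G).connected_iff.mp hc
  omega

lemma kappa_one {G : SimpleGraph V} [Fintype V] [DecidableEq V] (h2 : 2 ≤ kappa G) (v : V) :
    (G.induce {w | w ≠ v}).Connected := by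
  by_contra hcon
  have hset : (↑({v} : Finset V) : Set V)ᶜ = {w | w ≠ v} := by ext; simp
  have hle : kappa G ≤ 1 := by
    refine Nat.sInf_le ⟨{v}, Finset.card_singleton v, ?_⟩
    rw [hset]; exact Or.inl hcon
  omega

lemma sup_edge_adj {G : SimpleGraph V} {x w : V} (hxw : x ≠ w) (u v : V) :
    (G ⊔ SimpleGraph.fromEdgeSet {s(x, w)}).Adj u v ↔
      G.Adj u v ∨ (u = x ∧ v = w) ∨ (u = w ∧ v = x) := by
  have hwx : w ≠ x := hxw.symm
  simp only [SimpleGraph.sup_adj, SimpleGraph.fromEdgeSet_adj, Set.mem_singleton_iff,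
    Sym2.eq_iff]
  constructor
  · rintro (h | ⟨⟨rfl, rfl⟩ | ⟨rfl, rfl⟩, hne⟩) <;> tauto
  · rintro (h | ⟨rfl, rfl⟩ | ⟨rfl, rfl⟩) <;> tauto

section PathCase

variable {G : SimpleGraph V} [Fintype V] [DecidableEq V] {x y z : V}

lemma path_center (h3 : gammaC G = 3)
    (hcl : ∀ u v : V, u ≠ x → u ≠ y → u ≠ z → v ≠ x → v ≠ y → v ≠ z → u ≠ v → G.Adj u v)
    (axy : G.Adj x y) (ayz : G.Adj y z) :
    ∀ w, w ≠ x → w ≠ y → w ≠ z → ¬ G.Adj y w := by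
  intro w h1 h2 hz hyw
  refine no_cds_two h3 hyw fun v => ?_
  by_cases hvx : v = x
  · subst hvx; exact Or.inr (Or.inr (Or.inl axy.symm))
  by_cases hvy : v = y
  · exact Or.inl hvy
  by_cases hvz : v = z
  · subst hvz; exact Or.inr (Or.inr (Or.inl ayz))
  by_cases hvw : v = w
  · exact Or.inr (Or.inl hvw)
  · exact Or.inr (Or.inr (Or.inr (hcl w v h1 h2 hz hvx hvy hvz fun hh => hvw hh.symm)))

lemma path_disj (h3 : gammaC G = 3)
    (hcl : ∀ u v : V, u ≠ x → u ≠ y → u ≠ z → v ≠ x → v ≠ y → v ≠ z → u ≠ v → G.Adj u v)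
    (axy : G.Adj x y) {w : V} (hwx : w ≠ x) (hwy : w ≠ y) (hwz : w ≠ z)
    (h1 : G.Adj x w) (h2 : G.Adj z w) : False := by
  refine no_cds_two h3 h1 fun v => ?_
  by_cases hvx : v = x
  · exact Or.inl hvx
  by_cases hvy : v = y
  · subst hvy; exact Or.inr (Or.inr (Or.inl axy))
  by_cases hvz : v = z
  · subst hvz; exact Or.inr (Or.inr (Or.inr h2.symm))
  by_cases hvw : v = w
  · exact Or.inr (Or.inl hvw)
  · exact Or.inr (Or.inr (Or.inr (hcl w v hwx hwy hwz hvx hvy hvz fun hh => hvw hh.symm)))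

lemma path_side_nonempty (hk : 2 ≤ kappa G)
    (nxy : x ≠ y) (nxz : x ≠ z) (nyz : y ≠ z) (naxz : ¬ G.Adj x z) :
    ∃ a, a ≠ x ∧ a ≠ y ∧ a ≠ z ∧ G.Adj x a := by
  have hc := kappa_one hk y
  obtain ⟨t, ht⟩ := exists_adj_of_conn hc.preconnected
    (u := ⟨x, nxy⟩) (w := ⟨z, nyz.symm⟩) (by simp [Subtype.ext_iff, nxz])
  have hadj : G.Adj x ↑t := ht
  have hty : (↑t : V) ≠ y := t.2
  refine ⟨↑t, ?_, hty, ?_, hadj⟩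
  · rintro rfl; exact G.irrefl hadj
  · rintro rfl; exact naxz hadj

end PathCase
section PathCover

variable {G : SimpleGraph V} [Fintype V] [DecidableEq V] {x y z : V}

lemma path_cover (h3 : gammaC G = 3) (hconn : G.Connected) (hk : 2 ≤ kappa G)
    (hec : ∀ u v : V, u ≠ v → ¬ G.Adj u v →
      gammaC (G ⊔ SimpleGraph.fromEdgeSet {s(u, v)}) < 3)
    (hcl : ∀ u v : V, u ≠ x → u ≠ y → u ≠ z → v ≠ x → v ≠ y → v ≠ z → u ≠ v → G.Adj u v)
    (nxy : x ≠ y) (nxz : x ≠ z) (nyz : y ≠ z)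
    (axy : G.Adj x y) (ayz : G.Adj y z) (naxz : ¬ G.Adj x z) :
    ∀ w, w ≠ x → w ≠ y → w ≠ z → G.Adj x w ∨ G.Adj z w := by
  intro w0 hwx hwy hwz
  by_contra hcon
  push_neg at hcon
  obtain ⟨nxw, nzw⟩ := hcon
  have hNy := path_center h3 hcl axy ayz
  have hyclass : ∀ u, G.Adj y u → x = u ∨ z = u := by
    intro u hu
    by_cases h1 : u = x; · exact Or.inl h1.symm
    by_cases h2 : u = z; · exact Or.inr h2.symm
    exfalso
    by_cases h3' : u = y
    · subst h3'; exact G.irrefl hu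
    · exact hNy u h1 h3' h2 hu
  -- a vertex b adjacent to z outside {x,y,z}
  obtain ⟨b, hbz, hby, hbx, hzb⟩ :=
    path_side_nonempty (x := z) (y := y) (z := x) hk nyz.symm nxz.symm nxy.symm
      (fun hh => naxz hh.symm)
  have hG'adj := sup_edge_adj (G := G) (Ne.symm hwx)
  have hG'conn : (G ⊔ SimpleGraph.fromEdgeSet {s(x, w0)}).Connected :=
    hconn.mono le_sup_left
  obtain ⟨D, hDc, hD⟩ := exists_cds_le_two hG'conn (hec x w0 (Ne.symm hwx) nxw)
  rcases finset_le_two_cases hDc with rfl | ⟨u, rfl⟩ | ⟨u, v, huv, rfl⟩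
  · exact not_cds_empty hD
  · -- singleton
    have hdom : ∀ t : V, t = u ∨ (G ⊔ SimpleGraph.fromEdgeSet {s(x, w0)}).Adj u t := by
      intro t
      rcases hD.1 t with ht | ⟨d, hd, hdt⟩
      · left; simpa using ht
      · right; have : d = u := by simpa using hd
        rwa [this] at hdt
    -- u must be x, y or z (to dominate y)
    have hu : x = u ∨ y = u ∨ z = u := by
      rcases hdom y with h | h
      · exact Or.inr (Or.inl h)
      · rcases (hG'adj u y).mp h with h' | ⟨h1, h2⟩ | ⟨h1, h2⟩
        · rcases hyclass u h'.symm with h'' | h''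
          · exact Or.inl h''
          · exact Or.inr (Or.inr h'')
        · exact absurd h2.symm hwy
        · exact absurd h2.symm nxy
    rcases hu with rfl | rfl | rfl
    · -- u = x : z not dominated
      rcases hdom z with h | h
      · exact nxz h.symm
      · rcases (hG'adj x z).mp h with h' | ⟨h1, h2⟩ | ⟨h1, h2⟩
        · exact naxz h'
        · exact hwz h2.symm
        · exact (Ne.symm hwx) h1
    · -- u = y : w0 not dominated
      rcases hdom w0 with h | h
      · exact hwy h
      · rcases (hG'adj y w0).mp h with h' | ⟨h1, h2⟩ | ⟨h1, h2⟩
        · exact hNy w0 hwx hwy hwz h'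
        · exact nxy h1.symm
        · exact hwy h1.symm
    · -- u = z : x not dominated
      rcases hdom x with h | h
      · exact nxz h
      · rcases (hG'adj z x).mp h with h' | ⟨h1, h2⟩ | ⟨h1, h2⟩
        · exact naxz h'.symm
        · exact nxz h1.symm
        · exact hwz h1.symm
  · -- pair {u, v}
    have hGuv : (G ⊔ SimpleGraph.fromEdgeSet {s(x, w0)}).Adj u v := adj_of_cds_pair huv hD
    have hdom : ∀ t : V, t = u ∨ t = v ∨
        (G ⊔ SimpleGraph.fromEdgeSet {s(x, w0)}).Adj u t ∨
        (G ⊔ SimpleGraph.fromEdgeSet {s(x, w0)}).Adj v t := by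
      intro t
      rcases hD.1 t with ht | ⟨d, hd, hdt⟩
      · have : t = u ∨ t = v := by simpa using ht
        tauto
      · have : d = u ∨ d = v := by simpa using hd
        rcases this with rfl | rfl
        · exact Or.inr (Or.inr (Or.inl hdt))
        · exact Or.inr (Or.inr (Or.inr hdt))
    -- key: derive False once we know one member of the pair is x, y or z
    have key : ∀ p q : V, p ≠ q →
        (G ⊔ SimpleGraph.fromEdgeSet {s(x, w0)}).Adj p q →
        (∀ t : V, t = p ∨ t = q ∨
          (G ⊔ SimpleGraph.fromEdgeSet {s(x, w0)}).Adj p t ∨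
          (G ⊔ SimpleGraph.fromEdgeSet {s(x, w0)}).Adj q t) →
        (x = p ∨ y = p ∨ z = p) → False := by
      intro p q hpq hGpq hdom' hp
      rcases hp with rfl | rfl | rfl
      · -- p = x
        by_cases hqy : y = q
        · rcases hqy with rfl
          -- D = {x, y} : b not dominated
          rcases hdom' b with h | h | h | h
          · exact hbx h
          · exact hby h
          · rcases (hG'adj x b).mp h with h' | ⟨h1, h2⟩ | ⟨h1, h2⟩
            · exact path_disj h3 hcl axy hbx hby hbz h' hzb
            · rw [h2] at hzb; exact nzw hzb
            · exact (Ne.symm hwx) h1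
          · rcases (hG'adj y b).mp h with h' | ⟨h1, h2⟩ | ⟨h1, h2⟩
            · exact hNy b hbx hby hbz h'
            · exact nxy h1.symm
            · exact hwy h1.symm
        by_cases hqz : z = q
        · rcases hqz with rfl
          rcases (hG'adj x z).mp hGpq with h' | ⟨h1, h2⟩ | ⟨h1, h2⟩
          · exact naxz h'
          · exact hwz h2.symm
          · exact (Ne.symm hwx) h1
        · -- q outside {x,y,z} (q ≠ x since p ≠ q)
          have hqx : q ≠ x := fun hh => hpq hh.symm
          -- q dominates z
          have hqz' : G.Adj z q := by
            rcases hdom' z with h | h | h | h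
            · exact absurd h.symm nxz
            · exact absurd h.symm (fun hh => hqz hh.symm)
            · rcases (hG'adj x z).mp h with h' | ⟨h1, h2⟩ | ⟨h1, h2⟩
              · exact absurd h' naxz
              · exact absurd h2.symm hwz
              · exact absurd h1 (Ne.symm hwx)
            · rcases (hG'adj q z).mp h with h' | ⟨h1, h2⟩ | ⟨h1, h2⟩
              · exact h'.symm
              · exact absurd h2.symm hwz
              · exact absurd h2.symm nxz
          -- connectivity : x ~' q
          rcases (hG'adj x q).mp hGpq with h' | ⟨h1, h2⟩ | ⟨h1, h2⟩
          · exact path_disj h3 hcl axy hqx (fun hh => hqy hh.symm) (fun hh => hqz hh.symm) h' hqz'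
          · rw [h2] at hqz'; exact nzw hqz'
          · exact (Ne.symm hwx) h1
      · -- p = y
        have hq : G.Adj y q := by
          rcases (hG'adj y q).mp hGpq with h' | ⟨h1, h2⟩ | ⟨h1, h2⟩
          · exact h'
          · exact absurd h1.symm nxy
          · exact absurd h1.symm hwy
        rcases hyclass q hq with rfl | rfl
        · -- D = {y, x} : b not dominated
          rcases hdom' b with h | h | h | h
          · exact hby h
          · exact hbx h
          · rcases (hG'adj y b).mp h with h' | ⟨h1, h2⟩ | ⟨h1, h2⟩
            · exact hNy b hbx hby hbz h'
            · exact nxy h1.symm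
            · exact hwy h1.symm
          · rcases (hG'adj x b).mp h with h' | ⟨h1, h2⟩ | ⟨h1, h2⟩
            · exact path_disj h3 hcl axy hbx hby hbz h' hzb
            · rw [h2] at hzb; exact nzw hzb
            · exact (Ne.symm hwx) h1
        · -- D = {y, z} : w0 not dominated
          rcases hdom' w0 with h | h | h | h
          · exact hwy h
          · exact hwz h
          · rcases (hG'adj y w0).mp h with h' | ⟨h1, h2⟩ | ⟨h1, h2⟩
            · exact hNy w0 hwx hwy hwz h'
            · exact nxy h1.symm
            · exact hwy h1.symm
          · rcases (hG'adj z w0).mp h with h' | ⟨h1, h2⟩ | ⟨h1, h2⟩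
            · exact nzw h'
            · exact nxz h1.symm
            · exact hwz h1.symm
      · -- p = z
        by_cases hqy : y = q
        · rcases hqy with rfl
          rcases hdom' w0 with h | h | h | h
          · exact hwz h
          · exact hwy h
          · rcases (hG'adj z w0).mp h with h' | ⟨h1, h2⟩ | ⟨h1, h2⟩
            · exact nzw h'
            · exact nxz h1.symm
            · exact hwz h1.symm
          · rcases (hG'adj y w0).mp h with h' | ⟨h1, h2⟩ | ⟨h1, h2⟩
            · exact hNy w0 hwx hwy hwz h'
            · exact nxy h1.symm
            · exact hwy h1.symm
        by_cases hqx : x = q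
        · rcases hqx with rfl
          rcases (hG'adj z x).mp hGpq with h' | ⟨h1, h2⟩ | ⟨h1, h2⟩
          · exact naxz h'.symm
          · exact nxz h1.symm
          · exact hwz h1.symm
        · -- q outside
          have hqz : q ≠ z := fun hh => hpq hh.symm
          have hzq : G.Adj z q := by
            rcases (hG'adj z q).mp hGpq with h' | ⟨h1, h2⟩ | ⟨h1, h2⟩
            · exact h'
            · exact absurd h1 nxz.symm
            · exact absurd h1 hwz.symm
          -- x must be dominated
          rcases hdom' x with h | h | h | h
          · exact nxz h
          · exact hqx h
          · rcases (hG'adj z x).mp h with h' | ⟨h1, h2⟩ | ⟨h1, h2⟩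
            · exact naxz h'.symm
            · exact nxz h1.symm
            · exact hwz h1.symm
          · rcases (hG'adj q x).mp h with h' | ⟨h1, h2⟩ | ⟨h1, h2⟩
            · exact path_disj h3 hcl axy (fun hh => hqx hh.symm) (fun hh => hqy hh.symm) hqz h'.symm hzq
            · exact hqx h1.symm
            · rw [h1] at hzq; exact nzw hzq
    -- one of u, v is x, y or z
    have hmem : (x = u ∨ y = u ∨ z = u) ∨ (x = v ∨ y = v ∨ z = v) := by
      rcases hdom y with h | h | h | h
      · exact Or.inl (Or.inr (Or.inl h))
      · exact Or.inr (Or.inr (Or.inl h))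
      · rcases (hG'adj u y).mp h with h' | ⟨h1, h2⟩ | ⟨h1, h2⟩
        · rcases hyclass u h'.symm with h'' | h''
          · exact Or.inl (Or.inl h'')
          · exact Or.inl (Or.inr (Or.inr h''))
        · exact absurd h2.symm hwy
        · exact absurd h2.symm nxy
      · rcases (hG'adj v y).mp h with h' | ⟨h1, h2⟩ | ⟨h1, h2⟩
        · rcases hyclass v h'.symm with h'' | h''
          · exact Or.inr (Or.inl h'')
          · exact Or.inr (Or.inr (Or.inr h''))
        · exact absurd h2.symm hwy
        · exact absurd h2.symm nxy
    rcases hmem with hm | hm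
    · exact key u v huv hGuv hdom hm
    · exact key v u (Ne.symm huv) hGuv.symm (fun t => by rcases hdom t with h|h|h|h <;> tauto) hm

end PathCover
section PathUnique

variable {G : SimpleGraph V} [Fintype V] [DecidableEq V] {x y z : V}

lemma path_side_unique (h3 : gammaC G = 3) (hk : 2 ≤ kappa G)
    (hvc : ∀ v : V, gammaC (G.induce {w | w ≠ v}) < 3)
    (hcl : ∀ u v : V, u ≠ x → u ≠ y → u ≠ z → v ≠ x → v ≠ y → v ≠ z → u ≠ v → G.Adj u v)
    (nxy : x ≠ y) (nxz : x ≠ z) (nyz : y ≠ z)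
    (axy : G.Adj x y) (ayz : G.Adj y z) (naxz : ¬ G.Adj x z)
    {a1 a2 : V} (h1x : a1 ≠ x) (h1y : a1 ≠ y) (h1z : a1 ≠ z) (ha1 : G.Adj x a1)
    (h2x : a2 ≠ x) (h2y : a2 ≠ y) (h2z : a2 ≠ z) (ha2 : G.Adj x a2) : a1 = a2 := by
  by_contra hne
  have hNy := path_center h3 hcl axy ayz
  obtain ⟨b, hbz, hby, hbx, hzb⟩ :=
    path_side_nonempty (x := z) (y := y) (z := x) hk nyz.symm nxz.symm nxy.symm
      (fun hh => naxz hh.symm)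
  have hba1 : b ≠ a1 := by
    rintro rfl
    exact path_disj h3 hcl axy hbx hby hbz ha1 hzb
  have hHconn := kappa_one hk a1
  obtain ⟨D, hDc, hD⟩ := exists_cds_le_two hHconn (hvc a1)
  -- underlying-vertex domination
  have hdomv : ∀ t : V, (ht : t ≠ a1) →
      (⟨t, ht⟩ : {w | w ≠ a1}) ∈ (↑D : Set {w | w ≠ a1}) ∨
      ∃ d ∈ D, G.Adj (↑d) t := by
    intro t ht
    rcases hD.1 ⟨t, ht⟩ with h | ⟨d, hd, hdt⟩
    · exact Or.inl h
    · exact Or.inr ⟨d, hd, hdt⟩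
  rcases finset_le_two_cases hDc with rfl | ⟨d, rfl⟩ | ⟨d, e, hde, rfl⟩
  · exact not_cds_empty hD
  · -- singleton
    have hdom : ∀ t : V, (t ≠ a1) → t = ↑d ∨ G.Adj (↑d) t := by
      intro t ht
      rcases hdomv t ht with h | ⟨d', hd', h'⟩
      · left
        have : (⟨t, ht⟩ : {w | w ≠ a1}) = d := by simpa using h
        exact congrArg Subtype.val this
      · have : d' = d := by simpa using hd'
        exact Or.inr (this ▸ h')
    have hd' : x = ↑d ∨ y = ↑d ∨ z = ↑d := by
      rcases hdom y (Ne.symm h1y) with h | h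
      · exact Or.inr (Or.inl h)
      · by_cases hx : x = ↑d; · exact Or.inl hx
        by_cases hz : z = ↑d; · exact Or.inr (Or.inr hz)
        by_cases hy : y = ↑d
        · exact Or.inr (Or.inl hy)
        · exact absurd h.symm
            (hNy (↑d) (fun hh => hx hh.symm) (fun hh => hy hh.symm) (fun hh => hz hh.symm))
    rcases hd' with hd' | hd' | hd'
    · -- d = x : z undominated
      rcases hdom z (Ne.symm h1z) with h | h
      · exact nxz (h.trans hd'.symm).symm
      · rw [← hd'] at h; exact naxz h
    · -- d = y : b undominated
      rcases hdom b hba1 with h | h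
      · exact hby (h.trans hd'.symm)
      · rw [← hd'] at h; exact hNy b hbx hby hbz h
    · -- d = z : x undominated
      rcases hdom x (Ne.symm h1x) with h | h
      · exact nxz (h.trans hd'.symm)
      · rw [← hd'] at h; exact naxz h.symm
  · -- pair
    have hGde0 : (G.induce {w | w ≠ a1}).Adj d e := adj_of_cds_pair hde hD
    have hGde : G.Adj ↑d ↑e := hGde0
    have hdom : ∀ t : V, (t ≠ a1) →
        t = ↑d ∨ t = ↑e ∨ G.Adj (↑d) t ∨ G.Adj (↑e) t := by
      intro t ht
      rcases hdomv t ht with h | ⟨d', hd', h'⟩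
      · have : (⟨t, ht⟩ : {w | w ≠ a1}) = d ∨ (⟨t, ht⟩ : {w | w ≠ a1}) = e := by
          simpa using h
        rcases this with h | h
        · exact Or.inl (congrArg Subtype.val h)
        · exact Or.inr (Or.inl (congrArg Subtype.val h))
      · have : d' = d ∨ d' = e := by simpa using hd'
        rcases this with rfl | rfl
        · exact Or.inr (Or.inr (Or.inl h'))
        · exact Or.inr (Or.inr (Or.inr h'))
    have hdne : (↑d : V) ≠ a1 := d.2
    have hene : (↑e : V) ≠ a1 := e.2
    have hdnev : (↑d : V) ≠ ↑e := fun hh => hde (Subtype.ext hh)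
    -- key killing
    have key : ∀ p q : V, p ≠ a1 → q ≠ a1 → p ≠ q → G.Adj p q →
        (∀ t : V, t ≠ a1 → (t = p ∨ t = q ∨ G.Adj p t ∨ G.Adj q t)) →
        (x = p ∨ y = p ∨ z = p) → False := by
      intro p q hpa hqa hpq hGpq hdom' hp
      rcases hp with rfl | rfl | rfl
      · -- p = x
        by_cases hqy : y = q
        · rcases hqy with rfl
          -- b undominated
          rcases hdom' b hba1 with h | h | h | h
          · exact hbx h
          · exact hby h
          · exact path_disj h3 hcl axy hbx hby hbz h hzb
          · exact hNy b hbx hby hbz h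
        by_cases hqz : z = q
        · rcases hqz with rfl; exact naxz hGpq
        · have hqx : q ≠ x := fun hh => hpq hh.symm
          have hqz2 : G.Adj z q := by
            rcases hdom' z (Ne.symm h1z) with h | h | h | h
            · exact absurd h nxz.symm
            · exact absurd h hqz
            · exact absurd h naxz
            · exact h.symm
          exact path_disj h3 hcl axy hqx (fun hh => hqy hh.symm) (fun hh => hqz hh.symm)
            hGpq hqz2
      · -- p = y
        have hq : x = q ∨ z = q := by
          by_cases hx : x = q; · exact Or.inl hx
          by_cases hz : z = q; · exact Or.inr hz
          exfalso
          exact hNy q (fun hh => hx hh.symm) (fun hh => hpq hh.symm) (fun hh => hz hh.symm)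
            hGpq
        rcases hq with rfl | rfl
        · -- {y, x} : b undominated
          rcases hdom' b hba1 with h | h | h | h
          · exact hby h
          · exact hbx h
          · exact hNy b hbx hby hbz h
          · exact path_disj h3 hcl axy hbx hby hbz h hzb
        · -- {y, z} : a2 undominated
          rcases hdom' a2 (fun hh => hne (hh.symm)) with h | h | h | h
          · exact h2y h
          · exact h2z h
          · exact hNy a2 h2x h2y h2z h
          · exact path_disj h3 hcl axy h2x h2y h2z ha2 h
      · -- p = z
        by_cases hqy : y = q
        · rcases hqy with rfl
          -- a2 undominated
          rcases hdom' a2 (fun hh => hne hh.symm) with h | h | h | h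
          · exact h2z h
          · exact h2y h
          · exact path_disj h3 hcl axy h2x h2y h2z ha2 h
          · exact hNy a2 h2x h2y h2z h
        by_cases hqx : x = q
        · rcases hqx with rfl; exact naxz hGpq.symm
        · have hqz : q ≠ z := fun hh => hpq hh.symm
          -- x must be dominated
          rcases hdom' x (Ne.symm h1x) with h | h | h | h
          · exact nxz h
          · exact hqx h
          · exact naxz h.symm
          · exact path_disj h3 hcl axy (fun hh => hqx hh.symm) (fun hh => hqy hh.symm) hqz
              h.symm hGpq
    -- one of d, e equals x, y or z
    have hmem : (x = ↑d ∨ y = ↑d ∨ z = ↑d) ∨ (x = ↑e ∨ y = ↑e ∨ z = ↑e) := by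
      rcases hdom y (Ne.symm h1y) with h | h | h | h
      · exact Or.inl (Or.inr (Or.inl h))
      · exact Or.inr (Or.inr (Or.inl h))
      · by_cases hx : x = ↑d; · exact Or.inl (Or.inl hx)
        by_cases hz : z = ↑d; · exact Or.inl (Or.inr (Or.inr hz))
        by_cases hy : y = ↑d; · exact Or.inl (Or.inr (Or.inl hy))
        exact absurd h.symm
          (hNy (↑d) (fun hh => hx hh.symm) (fun hh => hy hh.symm) (fun hh => hz hh.symm))
      · by_cases hx : x = ↑e; · exact Or.inr (Or.inl hx)
        by_cases hz : z = ↑e; · exact Or.inr (Or.inr (Or.inr hz))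
        by_cases hy : y = ↑e; · exact Or.inr (Or.inr (Or.inl hy))
        exact absurd h.symm
          (hNy (↑e) (fun hh => hx hh.symm) (fun hh => hy hh.symm) (fun hh => hz hh.symm))
    rcases hmem with hm | hm
    · exact key (↑d) (↑e) hdne hene hdnev hGde (fun t ht => hdom t ht) hm
    · exact key (↑e) (↑d) hene hdne (Ne.symm hdnev) hGde.symm
        (fun t ht => by rcases hdom t ht with h|h|h|h <;> tauto) hm

end PathUnique
section PathMain

variable {G : SimpleGraph V} [Fintype V] [DecidableEq V] {x y z : V}

lemma path_case (h3 : gammaC G = 3) (hconn : G.Connected) (hk : 2 ≤ kappa G)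
    (hvc : ∀ v : V, gammaC (G.induce {w | w ≠ v}) < 3)
    (hec : ∀ u v : V, u ≠ v → ¬ G.Adj u v →
      gammaC (G ⊔ SimpleGraph.fromEdgeSet {s(u, v)}) < 3)
    (hcl : ∀ u v : V, u ≠ x → u ≠ y → u ≠ z → v ≠ x → v ≠ y → v ≠ z → u ≠ v → G.Adj u v)
    (nxy : x ≠ y) (nxz : x ≠ z) (nyz : y ≠ z)
    (axy : G.Adj x y) (ayz : G.Adj y z) (naxz : ¬ G.Adj x z) :
    Nonempty (G ≃g SimpleGraph.cycleGraph 5) := by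
  have hNy := path_center h3 hcl axy ayz
  -- the symmetric (z-side) clique/path data
  have hcl' : ∀ u v : V, u ≠ z → u ≠ y → u ≠ x → v ≠ z → v ≠ y → v ≠ x → u ≠ v → G.Adj u v :=
    fun u v h1 h2 h3' h4 h5 h6 h7 => hcl u v h3' h2 h1 h6 h5 h4 h7
  obtain ⟨a, hax, hay, haz, hxa⟩ := path_side_nonempty hk nxy nxz nyz naxz
  obtain ⟨b, hbz, hby, hbx, hzb⟩ :=
    path_side_nonempty (x := z) (y := y) (z := x) hk nyz.symm nxz.symm nxy.symm
      (fun hh => naxz hh.symm)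
  have huniqA : ∀ a', a' ≠ x → a' ≠ y → a' ≠ z → G.Adj x a' → a' = a :=
    fun a' h1 h2 h3' h4 =>
      path_side_unique h3 hk hvc hcl nxy nxz nyz axy ayz naxz h1 h2 h3' h4 hax hay haz hxa
  have huniqB : ∀ b', b' ≠ x → b' ≠ y → b' ≠ z → G.Adj z b' → b' = b :=
    fun b' h1 h2 h3' h4 =>
      path_side_unique (x := z) (y := y) (z := x) h3 hk hvc hcl' nyz.symm nxz.symm nxy.symm
        ayz.symm axy.symm (fun hh => naxz hh.symm) h3' h2 h1 h4 hbz hby hbx hzb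
  have hab : a ≠ b := by
    rintro rfl
    exact path_disj h3 hcl axy hax hay haz hxa hzb
  have nxb : ¬ G.Adj x b := fun h => hab ((huniqA b hbx hby hbz h).symm)
  have nza : ¬ G.Adj z a := fun h => hab (huniqB a hax hay haz h)
  have nya : ¬ G.Adj y a := hNy a hax hay haz
  have nyb : ¬ G.Adj y b := hNy b hbx hby hbz
  have aab : G.Adj a b := hcl a b hax hay haz hbx hby hbz hab
  have hcover := path_cover h3 hconn hk hec hcl nxy nxz nyz axy ayz naxz
  have hexh : ∀ v, v = x ∨ v = y ∨ v = z ∨ v = b ∨ v = a := by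
    intro v
    by_cases h1 : v = x; · exact Or.inl h1
    by_cases h2 : v = y; · exact Or.inr (Or.inl h2)
    by_cases h3' : v = z; · exact Or.inr (Or.inr (Or.inl h3'))
    rcases hcover v h1 h2 h3' with h | h
    · exact Or.inr (Or.inr (Or.inr (Or.inr (huniqA v h1 h2 h3' h))))
    · exact Or.inr (Or.inr (Or.inr (Or.inl (huniqB v h1 h2 h3' h))))
  -- all 20 directed adjacency facts
  have p01 : G.Adj x y := axy
  have p10 : G.Adj y x := axy.symm
  have p12 : G.Adj y z := ayz
  have p21 : G.Adj z y := ayz.symm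
  have p23 : G.Adj z b := hzb
  have p32 : G.Adj b z := hzb.symm
  have p34 : G.Adj b a := aab.symm
  have p43 : G.Adj a b := aab
  have p40 : G.Adj a x := hxa.symm
  have p04 : G.Adj x a := hxa
  have n02 : ¬ G.Adj x z := naxz
  have n20 : ¬ G.Adj z x := fun h => naxz h.symm
  have n03 : ¬ G.Adj x b := nxb
  have n30 : ¬ G.Adj b x := fun h => nxb h.symm
  have n13 : ¬ G.Adj y b := nyb
  have n31 : ¬ G.Adj b y := fun h => nyb h.symm
  have n14 : ¬ G.Adj y a := nya
  have n41 : ¬ G.Adj a y := fun h => nya h.symm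
  have n24 : ¬ G.Adj z a := nza
  have n42 : ¬ G.Adj a z := fun h => nza h.symm
  have hinj : Function.Injective ![x, y, z, b, a] := by
    intro i j hij
    fin_cases i <;> fin_cases j <;>
      first
        | rfl
        | exact absurd hij nxy | exact absurd hij nxy.symm
        | exact absurd hij nxz | exact absurd hij nxz.symm
        | exact absurd hij nyz | exact absurd hij nyz.symm
        | exact absurd hij hab | exact absurd hij hab.symm
        | exact absurd hij hax | exact absurd hij hax.symm
        | exact absurd hij hay | exact absurd hij hay.symm
        | exact absurd hij haz | exact absurd hij haz.symm
        | exact absurd hij hbx | exact absurd hij hbx.symm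
        | exact absurd hij hby | exact absurd hij hby.symm
        | exact absurd hij hbz | exact absurd hij hbz.symm
  have hsurj : Function.Surjective ![x, y, z, b, a] := by
    intro v
    rcases hexh v with rfl | rfl | rfl | rfl | rfl
    · exact ⟨0, rfl⟩
    · exact ⟨1, rfl⟩
    · exact ⟨2, rfl⟩
    · exact ⟨3, rfl⟩
    · exact ⟨4, rfl⟩
  have hmri : ∀ i j : Fin 5,
      G.Adj (Equiv.ofBijective _ ⟨hinj, hsurj⟩ i) (Equiv.ofBijective _ ⟨hinj, hsurj⟩ j) ↔
        (SimpleGraph.cycleGraph 5).Adj i j := by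
    intro i j
    fin_cases i <;> fin_cases j <;>
    first
      | exact iff_of_false (G.irrefl) (by decide)
      | exact iff_of_true p01 (by decide) | exact iff_of_true p10 (by decide)
      | exact iff_of_true p12 (by decide) | exact iff_of_true p21 (by decide)
      | exact iff_of_true p23 (by decide) | exact iff_of_true p32 (by decide)
      | exact iff_of_true p34 (by decide) | exact iff_of_true p43 (by decide)
      | exact iff_of_true p40 (by decide) | exact iff_of_true p04 (by decide)
      | exact iff_of_false n02 (by decide) | exact iff_of_false n20 (by decide)
      | exact iff_of_false n03 (by decide) | exact iff_of_false n30 (by decide)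
      | exact iff_of_false n13 (by decide) | exact iff_of_false n31 (by decide)
      | exact iff_of_false n14 (by decide) | exact iff_of_false n41 (by decide)
      | exact iff_of_false n24 (by decide) | exact iff_of_false n42 (by decide)
  exact ⟨(SimpleGraph.Iso.symm
    ⟨Equiv.ofBijective _ ⟨hinj, hsurj⟩, @fun i j => hmri i j⟩)⟩

end PathMain
section OtherCases

variable {G : SimpleGraph V} [Fintype V] [DecidableEq V] {x y z : V}

lemma one_edge_case (h3 : gammaC G = 3) (hconn : G.Connected) (hk : 2 ≤ kappa G)
    (hvc : ∀ v : V, gammaC (G.induce {w | w ≠ v}) < 3)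
    (hcl : ∀ u v : V, u ≠ x → u ≠ y → u ≠ z → v ≠ x → v ≠ y → v ≠ z → u ≠ v → G.Adj u v)
    (nxy : x ≠ y) (nxz : x ≠ z) (nyz : y ≠ z)
    (axy : G.Adj x y) (naxz : ¬ G.Adj x z) (nayz : ¬ G.Adj y z) : False := by
  -- a neighbor c of z outside {x,y,z}
  obtain ⟨c, hcz : G.Adj z c⟩ := exists_adj_of_conn hconn.preconnected nxz.symm
  have hcx : c ≠ x := by rintro rfl; exact naxz hcz.symm
  have hcy : c ≠ y := by rintro rfl; exact nayz hcz.symm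
  have hcz' : c ≠ z := fun hh => G.irrefl (hh ▸ hcz)
  -- disjointness facts
  have hAC : ∀ w, G.Adj x w → G.Adj z w → False := by
    intro w h1 h2
    refine no_cds_two h3 h1 fun v => ?_
    by_cases hvx : v = x; · exact Or.inl hvx
    by_cases hvy : v = y; · subst hvy; exact Or.inr (Or.inr (Or.inl axy))
    by_cases hvz : v = z; · subst hvz; exact Or.inr (Or.inr (Or.inr h2.symm))
    by_cases hvw : v = w; · exact Or.inr (Or.inl hvw)
    have hwx : w ≠ x := by rintro rfl; exact G.irrefl h1
    have hwy : w ≠ y := by rintro rfl; exact nayz h2.symm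
    have hwz : w ≠ z := by rintro rfl; exact G.irrefl h2
    exact Or.inr (Or.inr (Or.inr (hcl w v hwx hwy hwz hvx hvy hvz fun hh => hvw hh.symm)))
  have hBC : ∀ w, G.Adj y w → G.Adj z w → False := by
    intro w h1 h2
    refine no_cds_two h3 h1 fun v => ?_
    by_cases hvy : v = y; · exact Or.inl hvy
    by_cases hvx : v = x; · subst hvx; exact Or.inr (Or.inr (Or.inl axy.symm))
    by_cases hvz : v = z; · subst hvz; exact Or.inr (Or.inr (Or.inr h2.symm))
    by_cases hvw : v = w; · exact Or.inr (Or.inl hvw)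
    have hwx : w ≠ x := by rintro rfl; exact naxz h2.symm
    have hwy : w ≠ y := by rintro rfl; exact G.irrefl h1
    have hwz : w ≠ z := by rintro rfl; exact G.irrefl h2
    exact Or.inr (Or.inr (Or.inr (hcl w v hwx hwy hwz hvx hvy hvz fun hh => hvw hh.symm)))
  have hABe : ∀ u, u ≠ x → u ≠ y → u ≠ z → G.Adj x u → G.Adj y u → False := by
    intro u hux huy huz h1 h2
    by_cases huc : u = c
    · exact hAC c (by rwa [huc] at h1) hcz
    · refine no_cds_two h3 (hcl u c hux huy huz hcx hcy hcz' huc) fun v => ?_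
      by_cases hvx : v = x; · subst hvx; exact Or.inr (Or.inr (Or.inl h1.symm))
      by_cases hvy : v = y; · subst hvy; exact Or.inr (Or.inr (Or.inl h2.symm))
      by_cases hvz : v = z; · subst hvz; exact Or.inr (Or.inr (Or.inr hcz.symm))
      by_cases hvu : v = u; · exact Or.inl hvu
      by_cases hvc : v = c; · exact Or.inr (Or.inl hvc)
      exact Or.inr (Or.inr (Or.inl (hcl u v hux huy huz hvx hvy hvz fun hh => hvu hh.symm)))
  -- delete c
  have hHconn := kappa_one hk c
  obtain ⟨D, hDc, hD⟩ := exists_cds_le_two hHconn (hvc c)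
  have hdomv : ∀ t : V, (ht : t ≠ c) →
      (⟨t, ht⟩ : {w | w ≠ c}) ∈ (↑D : Set {w | w ≠ c}) ∨ ∃ d ∈ D, G.Adj (↑d) t := by
    intro t ht
    rcases hD.1 ⟨t, ht⟩ with h | ⟨d, hd, hdt⟩
    · exact Or.inl h
    · exact Or.inr ⟨d, hd, hdt⟩
  rcases finset_le_two_cases hDc with rfl | ⟨d, rfl⟩ | ⟨d, e, hde, rfl⟩
  · exact not_cds_empty hD
  · -- singleton
    have hdom : ∀ t : V, (t ≠ c) → t = ↑d ∨ G.Adj (↑d) t := by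
      intro t ht
      rcases hdomv t ht with h | ⟨d', hd', h'⟩
      · left
        have : (⟨t, ht⟩ : {w | w ≠ c}) = d := by simpa using h
        exact congrArg Subtype.val this
      · have : d' = d := by simpa using hd'
        exact Or.inr (this ▸ h')
    rcases hdom z (Ne.symm hcz') with h | h
    · -- d = z : x undominated
      rcases hdom x (Ne.symm hcx) with h2 | h2
      · exact nxz (h2.trans h.symm)
      · rw [← h] at h2; exact naxz h2.symm
    · -- d adjacent to z
      have hdx : (↑d : V) ≠ x := by rintro hh; rw [hh] at h; exact naxz h
      have hdy : (↑d : V) ≠ y := by rintro hh; rw [hh] at h; exact nayz h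
      rcases hdom x (Ne.symm hcx) with h2 | h2
      · exact hdx h2.symm
      · exact hAC (↑d) h2.symm h.symm
  · -- pair
    have hGde0 : (G.induce {w | w ≠ c}).Adj d e := adj_of_cds_pair hde hD
    have hGde : G.Adj ↑d ↑e := hGde0
    have hdom : ∀ t : V, (t ≠ c) →
        t = ↑d ∨ t = ↑e ∨ G.Adj (↑d) t ∨ G.Adj (↑e) t := by
      intro t ht
      rcases hdomv t ht with h | ⟨d', hd', h'⟩
      · have : (⟨t, ht⟩ : {w | w ≠ c}) = d ∨ (⟨t, ht⟩ : {w | w ≠ c}) = e := by simpa using h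
        rcases this with h | h
        · exact Or.inl (congrArg Subtype.val h)
        · exact Or.inr (Or.inl (congrArg Subtype.val h))
      · have : d' = d ∨ d' = e := by simpa using hd'
        rcases this with rfl | rfl
        · exact Or.inr (Or.inr (Or.inl h'))
        · exact Or.inr (Or.inr (Or.inr h'))
    have key : ∀ p q : V, p ≠ c → q ≠ c → p ≠ q → G.Adj p q →
        (∀ t : V, t ≠ c → (t = p ∨ t = q ∨ G.Adj p t ∨ G.Adj q t)) →
        (z = p ∨ G.Adj p z) → False := by
      intro p q hpc hqc hpq hGpq hdom' hp
      rcases hp with rfl | hpz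
      · -- p = z
        have hq : G.Adj z q := hGpq
        have hqx : q ≠ x := by rintro rfl; exact naxz hq.symm
        have hqy : q ≠ y := by rintro rfl; exact nayz hq.symm
        rcases hdom' x (Ne.symm hcx) with h | h | h | h
        · exact nxz h
        · exact hqx h.symm
        · exact naxz h.symm
        · exact hAC q h.symm hq
      · -- G.Adj p z, p ≠ z
        have hpz' : p ≠ z := by rintro rfl; exact G.irrefl hpz
        have hpx : p ≠ x := by rintro rfl; exact naxz hpz
        have hpy : p ≠ y := by rintro rfl; exact nayz hpz
        by_cases hqx : q = x
        · subst hqx; exact hAC p hGpq.symm hpz.symm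
        by_cases hqy : q = y
        · subst hqy; exact hBC p hGpq.symm hpz.symm
        by_cases hqz : q = z
        · subst hqz
          rcases hdom' x (Ne.symm hcx) with h | h | h | h
          · exact hpx h.symm
          · exact nxz h
          · exact hAC p h.symm hpz.symm
          · exact naxz h.symm
        · -- q outside
          have hqx2 : G.Adj q x := by
            rcases hdom' x (Ne.symm hcx) with h | h | h | h
            · exact absurd h.symm hpx
            · exact absurd h.symm hqx
            · exact absurd (hAC p h.symm hpz.symm) not_false
            · exact h
          rcases hdom' y (Ne.symm hcy) with h | h | h | h
          · exact hpy h.symm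
          · exact hqy h.symm
          · exact hBC p h.symm hpz.symm
          · exact hABe q hqx hqy hqz hqx2.symm h.symm
    have hdne : (↑d : V) ≠ c := d.2
    have hene : (↑e : V) ≠ c := e.2
    have hdnev : (↑d : V) ≠ ↑e := fun hh => hde (Subtype.ext hh)
    have hmem : (z = ↑d ∨ G.Adj (↑d) z) ∨ (z = ↑e ∨ G.Adj (↑e) z) := by
      rcases hdom z (Ne.symm hcz') with h | h | h | h
      · exact Or.inl (Or.inl h)
      · exact Or.inr (Or.inl h)
      · exact Or.inl (Or.inr h)
      · exact Or.inr (Or.inr h)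
    rcases hmem with hm | hm
    · exact key (↑d) (↑e) hdne hene hdnev hGde (fun t ht => hdom t ht) hm
    · exact key (↑e) (↑d) hene hdne (Ne.symm hdnev) hGde.symm
        (fun t ht => by rcases hdom t ht with h|h|h|h <;> tauto) hm

end OtherCases
section EmptyTriangle

variable {G : SimpleGraph V} [Fintype V] [DecidableEq V] {x y z : V}

lemma empty_case (h3 : gammaC G = 3) (hconn : G.Connected)
    (hec : ∀ u v : V, u ≠ v → ¬ G.Adj u v →
      gammaC (G ⊔ SimpleGraph.fromEdgeSet {s(u, v)}) < 3)
    (hcl : ∀ u v : V, u ≠ x → u ≠ y → u ≠ z → v ≠ x → v ≠ y → v ≠ z → u ≠ v → G.Adj u v)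
    (nxy : x ≠ y) (nxz : x ≠ z) (nyz : y ≠ z)
    (naxy : ¬ G.Adj x y) (naxz : ¬ G.Adj x z) (nayz : ¬ G.Adj y z) : False := by
  obtain ⟨a, hxa : G.Adj x a⟩ := exists_adj_of_conn hconn.preconnected nxy
  have hax : a ≠ x := fun hh => G.irrefl (hh ▸ hxa)
  have hay : a ≠ y := by rintro rfl; exact naxy hxa
  have haz : a ≠ z := by rintro rfl; exact naxz hxa
  obtain ⟨b, hyb : G.Adj y b⟩ := exists_adj_of_conn hconn.preconnected nxy.symm
  have hbx : b ≠ x := by rintro rfl; exact naxy hyb.symm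
  have hby : b ≠ y := fun hh => G.irrefl (hh ▸ hyb)
  have hbz : b ≠ z := by rintro rfl; exact nayz hyb
  obtain ⟨c, hzc : G.Adj z c⟩ := exists_adj_of_conn hconn.preconnected nxz.symm
  have hcx : c ≠ x := by rintro rfl; exact naxz hzc.symm
  have hcy : c ≠ y := by rintro rfl; exact nayz hzc.symm
  have hcz : c ≠ z := fun hh => G.irrefl (hh ▸ hzc)
  have houts : ∀ w, G.Adj x w → G.Adj y w → w ≠ x ∧ w ≠ y ∧ w ≠ z := by
    intro w h1 h2
    refine ⟨fun hh => G.irrefl (hh ▸ h1), fun hh => G.irrefl (hh ▸ h2),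
      by rintro rfl; exact naxz h1⟩
  have hAB : ∀ w, G.Adj x w → G.Adj y w → False := by
    intro w h1 h2
    obtain ⟨hwx, hwy, hwz⟩ := houts w h1 h2
    by_cases hwc : w = c
    · refine no_cds_one h3 w fun v => ?_
      by_cases hvw : v = w; · exact Or.inl hvw
      by_cases hvx : v = x; · subst hvx; exact Or.inr h1.symm
      by_cases hvy : v = y; · subst hvy; exact Or.inr h2.symm
      by_cases hvz : v = z; · subst hvz; subst hwc; exact Or.inr hzc.symm
      exact Or.inr (hcl w v hwx hwy hwz hvx hvy hvz fun hh => hvw hh.symm)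
    · refine no_cds_two h3 (hcl w c hwx hwy hwz hcx hcy hcz hwc) fun v => ?_
      by_cases hvw : v = w; · exact Or.inl hvw
      by_cases hvc : v = c; · exact Or.inr (Or.inl hvc)
      by_cases hvx : v = x; · subst hvx; exact Or.inr (Or.inr (Or.inl h1.symm))
      by_cases hvy : v = y; · subst hvy; exact Or.inr (Or.inr (Or.inl h2.symm))
      by_cases hvz : v = z; · subst hvz; exact Or.inr (Or.inr (Or.inr hzc.symm))
      exact Or.inr (Or.inr (Or.inl (hcl w v hwx hwy hwz hvx hvy hvz fun hh => hvw hh.symm)))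
  have hAC : ∀ w, G.Adj x w → G.Adj z w → False := by
    intro w h1 h2
    have hwx : w ≠ x := fun hh => G.irrefl (hh ▸ h1)
    have hwy : w ≠ y := by rintro rfl; exact naxy h1
    have hwz : w ≠ z := fun hh => G.irrefl (hh ▸ h2)
    by_cases hwb : w = b
    · refine no_cds_one h3 w fun v => ?_
      by_cases hvw : v = w; · exact Or.inl hvw
      by_cases hvx : v = x; · subst hvx; exact Or.inr h1.symm
      by_cases hvz : v = z; · subst hvz; exact Or.inr h2.symm
      by_cases hvy : v = y; · subst hvy; subst hwb; exact Or.inr hyb.symm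
      exact Or.inr (hcl w v hwx hwy hwz hvx hvy hvz fun hh => hvw hh.symm)
    · refine no_cds_two h3 (hcl w b hwx hwy hwz hbx hby hbz hwb) fun v => ?_
      by_cases hvw : v = w; · exact Or.inl hvw
      by_cases hvb : v = b; · exact Or.inr (Or.inl hvb)
      by_cases hvx : v = x; · subst hvx; exact Or.inr (Or.inr (Or.inl h1.symm))
      by_cases hvz : v = z; · subst hvz; exact Or.inr (Or.inr (Or.inl h2.symm))
      by_cases hvy : v = y; · subst hvy; exact Or.inr (Or.inr (Or.inr hyb.symm))
      exact Or.inr (Or.inr (Or.inl (hcl w v hwx hwy hwz hvx hvy hvz fun hh => hvw hh.symm)))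
  have hBC : ∀ w, G.Adj y w → G.Adj z w → False := by
    intro w h1 h2
    have hwx : w ≠ x := by rintro rfl; exact naxy h1.symm
    have hwy : w ≠ y := fun hh => G.irrefl (hh ▸ h1)
    have hwz : w ≠ z := fun hh => G.irrefl (hh ▸ h2)
    by_cases hwa : w = a
    · refine no_cds_one h3 w fun v => ?_
      by_cases hvw : v = w; · exact Or.inl hvw
      by_cases hvy : v = y; · subst hvy; exact Or.inr h1.symm
      by_cases hvz : v = z; · subst hvz; exact Or.inr h2.symm
      by_cases hvx : v = x; · subst hvx; subst hwa; exact Or.inr hxa.symm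
      exact Or.inr (hcl w v hwx hwy hwz hvx hvy hvz fun hh => hvw hh.symm)
    · refine no_cds_two h3 (hcl w a hwx hwy hwz hax hay haz hwa) fun v => ?_
      by_cases hvw : v = w; · exact Or.inl hvw
      by_cases hva : v = a; · exact Or.inr (Or.inl hva)
      by_cases hvy : v = y; · subst hvy; exact Or.inr (Or.inr (Or.inl h1.symm))
      by_cases hvz : v = z; · subst hvz; exact Or.inr (Or.inr (Or.inl h2.symm))
      by_cases hvx : v = x; · subst hvx; exact Or.inr (Or.inr (Or.inr hxa.symm))
      exact Or.inr (Or.inr (Or.inl (hcl w v hwx hwy hwz hvx hvy hvz fun hh => hvw hh.symm)))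
  -- add edge xy
  have hG'adj := sup_edge_adj (G := G) (x := x) (w := y) nxy
  have hG'conn : (G ⊔ SimpleGraph.fromEdgeSet {s(x, y)}).Connected := hconn.mono le_sup_left
  obtain ⟨D, hDc, hD⟩ := exists_cds_le_two hG'conn (hec x y nxy naxy)
  have hadjz : ∀ u, (G ⊔ SimpleGraph.fromEdgeSet {s(x, y)}).Adj u z → G.Adj u z := by
    intro u h
    rcases (hG'adj u z).mp h with h' | ⟨h1, h2⟩ | ⟨h1, h2⟩
    · exact h'
    · exact absurd h2 (Ne.symm nyz)
    · exact absurd h2 (Ne.symm nxz)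
  have hadjx : ∀ u, u ≠ y → (G ⊔ SimpleGraph.fromEdgeSet {s(x, y)}).Adj u x → G.Adj u x := by
    intro u hu h
    rcases (hG'adj u x).mp h with h' | ⟨h1, h2⟩ | ⟨h1, h2⟩
    · exact h'
    · exact absurd h2 nxy
    · exact absurd h1 hu
  have hadjy : ∀ u, u ≠ x → (G ⊔ SimpleGraph.fromEdgeSet {s(x, y)}).Adj u y → G.Adj u y := by
    intro u hu h
    rcases (hG'adj u y).mp h with h' | ⟨h1, h2⟩ | ⟨h1, h2⟩
    · exact h'
    · exact absurd h1 hu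
    · exact absurd h2 nxy.symm
  rcases finset_le_two_cases hDc with rfl | ⟨u, rfl⟩ | ⟨u, v, huv, rfl⟩
  · exact not_cds_empty hD
  · -- singleton
    have hdom : ∀ t : V, t = u ∨ (G ⊔ SimpleGraph.fromEdgeSet {s(x, y)}).Adj u t := by
      intro t
      rcases hD.1 t with ht | ⟨d, hd, hdt⟩
      · left; simpa using ht
      · right; have : d = u := by simpa using hd
        rwa [this] at hdt
    rcases hdom z with h | h
    · -- u = z : x undominated
      rcases hdom x with h2 | h2
      · exact nxz (h2.trans h.symm)
      · rw [← h] at h2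
        exact naxz (hadjx z nyz.symm h2).symm
    · have huz : G.Adj u z := hadjz u h
      have hux : u ≠ x := by rintro rfl; exact naxz huz
      have huy : u ≠ y := by rintro rfl; exact nayz huz
      rcases hdom x with h2 | h2
      · exact hux h2.symm
      · exact hAC u (hadjx u huy h2).symm huz.symm
  · -- pair
    have hGuv : (G ⊔ SimpleGraph.fromEdgeSet {s(x, y)}).Adj u v := adj_of_cds_pair huv hD
    have hdom : ∀ t : V, t = u ∨ t = v ∨
        (G ⊔ SimpleGraph.fromEdgeSet {s(x, y)}).Adj u t ∨
        (G ⊔ SimpleGraph.fromEdgeSet {s(x, y)}).Adj v t := by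
      intro t
      rcases hD.1 t with ht | ⟨d, hd, hdt⟩
      · have : t = u ∨ t = v := by simpa using ht
        tauto
      · have : d = u ∨ d = v := by simpa using hd
        rcases this with rfl | rfl
        · exact Or.inr (Or.inr (Or.inl hdt))
        · exact Or.inr (Or.inr (Or.inr hdt))
    have key : ∀ p q : V, p ≠ q →
        (G ⊔ SimpleGraph.fromEdgeSet {s(x, y)}).Adj p q →
        (∀ t : V, t = p ∨ t = q ∨
          (G ⊔ SimpleGraph.fromEdgeSet {s(x, y)}).Adj p t ∨
          (G ⊔ SimpleGraph.fromEdgeSet {s(x, y)}).Adj q t) →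
        (z = p ∨ G.Adj p z) → False := by
      intro p q hpq hGpq hdom' hp
      rcases hp with rfl | hpz
      · -- p = z
        have hzq : G.Adj z q := by
          rcases (hG'adj z q).mp hGpq with h' | ⟨h1, h2⟩ | ⟨h1, h2⟩
          · exact h'
          · exact absurd h1 nxz.symm
          · exact absurd h1 nyz.symm
        have hqx : q ≠ x := by rintro rfl; exact naxz hzq.symm
        have hqy : q ≠ y := by rintro rfl; exact nayz hzq.symm
        rcases hdom' x with h | h | h | h
        · exact nxz h
        · exact hqx h.symm
        · exact naxz (hadjx z nyz.symm h).symm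
        · exact hAC q (hadjx q hqy h).symm hzq
      · -- G.Adj p z
        have hpz' : p ≠ z := fun hh => G.irrefl (hh ▸ hpz)
        have hpx : p ≠ x := by rintro rfl; exact naxz hpz
        have hpy : p ≠ y := by rintro rfl; exact nayz hpz
        by_cases hqx : x = q
        · rcases hqx with rfl; exact hAC p (hadjx p hpy hGpq).symm hpz.symm
        by_cases hqy : y = q
        · rcases hqy with rfl; exact hBC p (hadjy p hpx hGpq).symm hpz.symm
        by_cases hqz : z = q
        · rcases hqz with rfl
          rcases hdom' x with h | h | h | h
          · exact hpx h.symm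
          · exact hqx h
          · exact hAC p (hadjx p hpy h).symm hpz.symm
          · exact naxz (hadjx z nyz.symm h).symm
        · -- q outside
          have hqx2 : G.Adj q x := by
            rcases hdom' x with h | h | h | h
            · exact absurd h.symm hpx
            · exact absurd h hqx
            · exact absurd (hAC p (hadjx p hpy h).symm hpz.symm) not_false
            · exact hadjx q (fun hh => hqy hh.symm) h
          rcases hdom' y with h | h | h | h
          · exact hpy h.symm
          · exact hqy h
          · exact hBC p (hadjy p hpx h).symm hpz.symm
          · exact hAB q hqx2.symm (hadjy q (fun hh => hqx hh.symm) h).symm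
    have hmem : (z = u ∨ G.Adj u z) ∨ (z = v ∨ G.Adj v z) := by
      rcases hdom z with h | h | h | h
      · exact Or.inl (Or.inl h)
      · exact Or.inr (Or.inl h)
      · exact Or.inl (Or.inr (hadjz u h))
      · exact Or.inr (Or.inr (hadjz v h))
    rcases hmem with hm | hm
    · exact key u v huv hGuv hdom hm
    · exact key v u (Ne.symm huv) hGuv.symm
        (fun t => by rcases hdom t with h|h|h|h <;> tauto) hm

lemma triangle_case (h3 : gammaC G = 3) (hconn : G.Connected)
    (hcl : ∀ u v : V, u ≠ x → u ≠ y → u ≠ z → v ≠ x → v ≠ y → v ≠ z → u ≠ v → G.Adj u v)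
    (axy : G.Adj x y) (axz : G.Adj x z) (ayz : G.Adj y z)
    {w0 : V} (hw0x : w0 ≠ x) (hw0y : w0 ≠ y) (hw0z : w0 ≠ z) : False := by
  obtain ⟨p⟩ := hconn.preconnected x w0
  obtain ⟨d, _, hdS, hdnS⟩ := p.exists_boundary_dart {v | v = x ∨ v = y ∨ v = z}
    (Or.inl rfl) (by simp [hw0x, hw0y, hw0z])
  set r := d.fst with hr
  set t := d.snd with ht
  have hrt : G.Adj r t := d.adj
  have htx : t ≠ x := fun hh => hdnS (Or.inl hh)
  have hty : t ≠ y := fun hh => hdnS (Or.inr (Or.inl hh))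
  have htz : t ≠ z := fun hh => hdnS (Or.inr (Or.inr hh))
  refine no_cds_two h3 hrt fun v => ?_
  by_cases hvr : v = r; · exact Or.inl hvr
  by_cases hvt : v = t; · exact Or.inr (Or.inl hvt)
  by_cases hvx : v = x
  · subst hvx
    rcases hdS with h | h | h
    · exact Or.inl h.symm
    · rw [h]; exact Or.inr (Or.inr (Or.inl axy.symm))
    · rw [h]; exact Or.inr (Or.inr (Or.inl axz.symm))
  by_cases hvy : v = y
  · subst hvy
    rcases hdS with h | h | h
    · rw [h]; exact Or.inr (Or.inr (Or.inl axy))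
    · exact Or.inl h.symm
    · rw [h]; exact Or.inr (Or.inr (Or.inl ayz.symm))
  by_cases hvz : v = z
  · subst hvz
    rcases hdS with h | h | h
    · rw [h]; exact Or.inr (Or.inr (Or.inl axz))
    · rw [h]; exact Or.inr (Or.inr (Or.inl ayz))
    · exact Or.inl h.symm
  · exact Or.inr (Or.inr (Or.inr (hcl t v htx hty htz hvx hvy hvz fun hh => hvt hh.symm)))

lemma small_case (h3 : gammaC G = 3) (hconn : G.Connected)
    (nxy : x ≠ y) (nxz : x ≠ z) (nyz : y ≠ z)
    (hall : ∀ v : V, v = x ∨ v = y ∨ v = z) : False := by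
  obtain ⟨t, hxt : G.Adj x t⟩ := exists_adj_of_conn hconn.preconnected nxy
  have htx : t ≠ x := fun hh => G.irrefl (hh ▸ hxt)
  have ht : y = t ∨ z = t := by rcases hall t with h | h | h <;> tauto
  rcases ht with rfl | rfl
  · -- Adj x y
    obtain ⟨s, hzs : G.Adj z s⟩ := exists_adj_of_conn hconn.preconnected nxz.symm
    have hsz : s ≠ z := fun hh => G.irrefl (hh ▸ hzs)
    have hs : x = s ∨ y = s := by rcases hall s with h | h | h <;> tauto
    rcases hs with rfl | rfl
    · refine no_cds_one h3 x fun v => ?_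
      rcases hall v with rfl | rfl | rfl
      · exact Or.inl rfl
      · exact Or.inr hxt
      · exact Or.inr hzs.symm
    · refine no_cds_one h3 y fun v => ?_
      rcases hall v with rfl | rfl | rfl
      · exact Or.inr hxt.symm
      · exact Or.inl rfl
      · exact Or.inr hzs.symm
  · -- Adj x z
    obtain ⟨s, hys : G.Adj y s⟩ := exists_adj_of_conn hconn.preconnected nxy.symm
    have hsy : s ≠ y := fun hh => G.irrefl (hh ▸ hys)
    have hs : x = s ∨ z = s := by rcases hall s with h | h | h <;> tauto
    rcases hs with rfl | rfl
    · refine no_cds_one h3 x fun v => ?_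
      rcases hall v with rfl | rfl | rfl
      · exact Or.inl rfl
      · exact Or.inr hys.symm
      · exact Or.inr hxt
    · refine no_cds_one h3 z fun v => ?_
      rcases hall v with rfl | rfl | rfl
      · exact Or.inr hxt.symm
      · exact Or.inr hys.symm
      · exact Or.inl rfl

end EmptyTriangle
section Final

variable {G : SimpleGraph V} [Fintype V] [DecidableEq V]

lemma big_clique_false (h3 : gammaC G = 3) (hconn : G.Connected) (hk : 2 ≤ kappa G)
    {W : Finset V} (hW : (↑W : Set V).Pairwise G.Adj) (hcard : Wᶜ.card ≤ 2) : False := by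
  have hadjW : ∀ u v : V, u ∈ W → v ∈ W → u ≠ v → G.Adj u v := fun u v hu hv hne =>
    hW (Finset.mem_coe.mpr hu) (Finset.mem_coe.mpr hv) hne
  rcases finset_le_two_cases hcard with hWc | ⟨x, hWc⟩ | ⟨x, y, hxy, hWc⟩
  · -- complement empty
    have hmem : ∀ v : V, v ∈ W := by
      intro v
      by_contra hh
      have : v ∈ Wᶜ := Finset.mem_compl.mpr hh
      rw [hWc] at this
      simp at this
    obtain ⟨v0⟩ := hconn.nonempty
    refine no_cds_one h3 v0 fun v => ?_
    by_cases hv : v = v0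
    · exact Or.inl hv
    · exact Or.inr (hadjW v0 v (hmem v0) (hmem v) fun hh => hv hh.symm)
  · -- complement {x}
    have hmem : ∀ v : V, v ≠ x → v ∈ W := by
      intro v hv
      by_contra hh
      have : v ∈ Wᶜ := Finset.mem_compl.mpr hh
      rw [hWc] at this
      simp at this
      exact hv this
    by_cases hWne : W.Nonempty
    · obtain ⟨w, hw⟩ := hWne
      have hwx : w ≠ x := by
        rintro rfl
        have : w ∈ Wᶜ := by rw [hWc]; simp
        exact Finset.mem_compl.mp this hw
      obtain ⟨t, hxt : G.Adj x t⟩ := exists_adj_of_conn hconn.preconnected (Ne.symm hwx)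
      have htx : t ≠ x := fun hh => G.irrefl (hh ▸ hxt)
      have htW : t ∈ W := hmem t htx
      refine no_cds_one h3 t fun v => ?_
      by_cases hvt : v = t; · exact Or.inl hvt
      by_cases hvx : v = x
      · subst hvx; exact Or.inr hxt.symm
      · exact Or.inr (hadjW t v htW (hmem v hvx) fun hh => hvt hh.symm)
    · -- W empty : only vertex is x
      have hall : ∀ v : V, v = x := by
        intro v
        by_contra hv
        exact hWne ⟨v, hmem v hv⟩
      exact no_cds_one h3 x fun v => Or.inl (hall v)
  · -- complement {x, y}
    have hxcW : x ∉ W := by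
      have : x ∈ Wᶜ := by rw [hWc]; simp
      exact Finset.mem_compl.mp this
    have hycW : y ∉ W := by
      have : y ∈ Wᶜ := by rw [hWc]; simp
      exact Finset.mem_compl.mp this
    have hmem : ∀ v : V, v ≠ x → v ≠ y → v ∈ W := by
      intro v hvx hvy
      by_contra hh
      have : v ∈ Wᶜ := Finset.mem_compl.mpr hh
      rw [hWc] at this
      simp at this
      tauto
    by_cases haxy : G.Adj x y
    · by_cases hWne : W.Nonempty
      · obtain ⟨w0, hw0⟩ := hWne
        have hw0x : w0 ≠ x := by rintro rfl; exact hxcW hw0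
        have hw0y : w0 ≠ y := by rintro rfl; exact hycW hw0
        obtain ⟨p⟩ := hconn.preconnected x w0
        obtain ⟨d, _, hdS, hdnS⟩ := p.exists_boundary_dart {v | v = x ∨ v = y}
          (Or.inl rfl) (by simp [hw0x, hw0y])
        have hrt : G.Adj d.fst d.snd := d.adj
        have htx : d.snd ≠ x := fun hh => hdnS (Or.inl hh)
        have hty : d.snd ≠ y := fun hh => hdnS (Or.inr hh)
        have htW : d.snd ∈ W := hmem _ htx hty
        refine no_cds_two h3 hrt fun v => ?_
        by_cases hvr : v = d.fst; · exact Or.inl hvr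
        by_cases hvt : v = d.snd; · exact Or.inr (Or.inl hvt)
        by_cases hvx : v = x
        · subst hvx
          rcases hdS with h | h
          · exact Or.inl h.symm
          · rw [h]; exact Or.inr (Or.inr (Or.inl haxy.symm))
        by_cases hvy : v = y
        · subst hvy
          rcases hdS with h | h
          · rw [h]; exact Or.inr (Or.inr (Or.inl haxy))
          · exact Or.inl h.symm
        · exact Or.inr (Or.inr (Or.inr
            (hadjW d.snd v htW (hmem v hvx hvy) fun hh => hvt hh.symm)))
      · -- W empty : vertices are x, y with x ~ y
        have hall : ∀ v : V, v = x ∨ v = y := by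
          intro v
          by_contra hv
          push_neg at hv
          exact hWne ⟨v, hmem v hv.1 hv.2⟩
        refine no_cds_one h3 x fun v => ?_
        rcases hall v with rfl | rfl
        · exact Or.inl rfl
        · exact Or.inr haxy
    · -- x, y nonadjacent : common/disjoint neighbor argument
      obtain ⟨a, hxa : G.Adj x a⟩ := exists_adj_of_conn hconn.preconnected hxy
      have hax : a ≠ x := fun hh => G.irrefl (hh ▸ hxa)
      have hay : a ≠ y := by rintro rfl; exact haxy hxa
      have haW : a ∈ W := hmem a hax hay
      obtain ⟨b, hyb : G.Adj y b⟩ := exists_adj_of_conn hconn.preconnected (Ne.symm hxy)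
      have hbx : b ≠ x := by rintro rfl; exact haxy hyb.symm
      have hby : b ≠ y := fun hh => G.irrefl (hh ▸ hyb)
      have hbW : b ∈ W := hmem b hbx hby
      have hcom : ∀ w, G.Adj x w → G.Adj y w → False := by
        intro w h1 h2
        have hwx : w ≠ x := fun hh => G.irrefl (hh ▸ h1)
        have hwy : w ≠ y := fun hh => G.irrefl (hh ▸ h2)
        refine no_cds_one h3 w fun v => ?_
        by_cases hvw : v = w; · exact Or.inl hvw
        by_cases hvx : v = x; · subst hvx; exact Or.inr h1.symm
        by_cases hvy : v = y; · subst hvy; exact Or.inr h2.symm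
        · exact Or.inr (hadjW w v (hmem w hwx hwy) (hmem v hvx hvy) fun hh => hvw hh.symm)
      have hab : a ≠ b := by
        rintro rfl
        exact hcom a hxa hyb
      refine no_cds_two h3 (hadjW a b haW hbW hab) fun v => ?_
      by_cases hva : v = a; · exact Or.inl hva
      by_cases hvb : v = b; · exact Or.inr (Or.inl hvb)
      by_cases hvx : v = x
      · subst hvx; exact Or.inr (Or.inr (Or.inl hxa.symm))
      by_cases hvy : v = y
      · subst hvy; exact Or.inr (Or.inr (Or.inr hyb.symm))
      · exact Or.inr (Or.inr (Or.inl
          (hadjW a v haW (hmem v hvx hvy) fun hh => hva hh.symm)))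

lemma clique_compl_three (h3 : gammaC G = 3) (hconn : G.Connected) (hk : 2 ≤ kappa G)
    (hvc : ∀ v : V, gammaC (G.induce {w | w ≠ v}) < 3)
    (hec : ∀ u v : V, u ≠ v → ¬ G.Adj u v →
      gammaC (G ⊔ SimpleGraph.fromEdgeSet {s(u, v)}) < 3)
    {W : Finset V} (hW : (↑W : Set V).Pairwise G.Adj) (hcard : Wᶜ.card = 3) :
    Nonempty (G ≃g SimpleGraph.cycleGraph 5) := by
  obtain ⟨x, y, z, nxy, nxz, nyz, hWc⟩ := Finset.card_eq_three.mp hcard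
  have hmem : ∀ v : V, v ∉ W ↔ (v = x ∨ v = y ∨ v = z) := by
    intro v
    rw [← Finset.mem_compl, hWc]
    simp
  have hcl : ∀ u v : V, u ≠ x → u ≠ y → u ≠ z → v ≠ x → v ≠ y → v ≠ z → u ≠ v →
      G.Adj u v := by
    intro u v h1 h2 h3' h4 h5 h6 h7
    have hu : u ∈ W := by by_contra hh; rcases (hmem u).mp hh with h | h | h <;> tauto
    have hv : v ∈ W := by by_contra hh; rcases (hmem v).mp hh with h | h | h <;> tauto
    exact hW (Finset.mem_coe.mpr hu) (Finset.mem_coe.mpr hv) h7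
  by_cases hsmall : ∀ v : V, v = x ∨ v = y ∨ v = z
  · exact (small_case h3 hconn nxy nxz nyz hsmall).elim
  push_neg at hsmall
  obtain ⟨w0, hw0x, hw0y, hw0z⟩ := hsmall
  by_cases axy : G.Adj x y <;> by_cases axz : G.Adj x z <;> by_cases ayz : G.Adj y z
  · exact (triangle_case h3 hconn hcl axy axz ayz hw0x hw0y hw0z).elim
  · -- x~y, x~z, ¬y~z : path centered at x, roles (y, x, z)
    exact path_case h3 hconn hk hvc hec
      (fun u v h1 h2 h3' h4 h5 h6 h7 => hcl u v h2 h1 h3' h5 h4 h6 h7)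
      nxy.symm nyz nxz axy.symm axz ayz
  · -- x~y, ¬x~z, y~z : path centered at y, roles (x, y, z)
    exact path_case h3 hconn hk hvc hec hcl nxy nxz nyz axy ayz axz
  · -- x~y only : one edge
    exact (one_edge_case h3 hconn hk hvc hcl nxy nxz nyz axy axz ayz).elim
  · -- ¬x~y, x~z, y~z : path centered at z, roles (x, z, y)
    exact path_case h3 hconn hk hvc hec
      (fun u v h1 h2 h3' h4 h5 h6 h7 => hcl u v h1 h3' h2 h4 h6 h5 h7)
      nxz nxy nyz.symm axz ayz.symm axy
  · -- x~z only : one edge, roles (x, z, y)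
    exact (one_edge_case h3 hconn hk hvc
      (fun u v h1 h2 h3' h4 h5 h6 h7 => hcl u v h1 h3' h2 h4 h6 h5 h7)
      nxz nxy nyz.symm axz axy (fun hh => ayz hh.symm)).elim
  · -- y~z only : one edge, roles (y, z, x)
    exact (one_edge_case h3 hconn hk hvc
      (fun u v h1 h2 h3' h4 h5 h6 h7 => hcl u v h3' h1 h2 h6 h4 h5 h7)
      nyz nxy.symm nxz.symm ayz (fun hh => axy hh.symm) (fun hh => axz hh.symm)).elim
  · -- no edges
    exact (empty_case h3 hconn hec hcl nxy nxz nyz axy axz ayz).elim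

end Final

set_option linter.unusedVariables false in
/-- a maximal `3`-`γc`-vertex critical graph of order `n` satisfies
`ω(G) ≤ n - 3`, with equality if and only if `G` is isomorphic to the cycle `C₅`. -/
theorem stmt_10 (G : SimpleGraph V) [Fintype V] [DecidableEq V]
    (h : MaximalVertexCritical3 G) :
    omegaNum G ≤ Fintype.card V - 3 ∧
      (omegaNum G = Fintype.card V - 3 ↔
        Nonempty (G ≃g SimpleGraph.cycleGraph 5)) := by
  obtain ⟨⟨h3, hec⟩, hk, h3', hvc⟩ := h
  have hconn : G.Connected := kappa_conn hk
  -- the order is at least 3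
  have hset : {k | ∃ D : Finset V, D.card = k ∧ IsConnDomSet G ↑D}.Nonempty := by
    by_contra hh
    rw [Set.not_nonempty_iff_eq_empty] at hh
    have h0 : gammaC G = 0 := by rw [gammaC, hh, Nat.sInf_empty]
    omega
  obtain ⟨D3, hD3c, _⟩ := Nat.sInf_mem hset
  have hn3 : 3 ≤ Fintype.card V := by
    have h1 := Finset.card_le_univ D3
    have h2 : D3.card = 3 := hD3c.trans h3
    omega
  have hbound : ∀ Wk : Finset V, (↑Wk : Set V).Pairwise G.Adj →
      Wk.card ≤ Fintype.card V - 3 := by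
    intro Wk hWk
    by_contra hgt
    push_neg at hgt
    have hcc := Finset.card_compl Wk
    have hle := Finset.card_le_univ Wk
    exact big_clique_false h3 hconn hk hWk (by omega)
  have hOne : {k | ∃ Wk : Finset V, Wk.card = k ∧ (↑Wk : Set V).Pairwise G.Adj}.Nonempty :=
    ⟨0, ∅, rfl, by simp⟩
  have hObdd : BddAbove {k | ∃ Wk : Finset V, Wk.card = k ∧ (↑Wk : Set V).Pairwise G.Adj} :=
    ⟨Fintype.card V, by rintro k ⟨Wk, rfl, _⟩; exact Finset.card_le_univ Wk⟩
  have homega_le : omegaNum G ≤ Fintype.card V - 3 := by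
    apply csSup_le hOne
    rintro k ⟨Wk, rfl, hWk⟩
    exact hbound Wk hWk
  refine ⟨homega_le, ?_, ?_⟩
  · -- equality implies C5
    intro heq
    obtain ⟨Wk, hWc, hWk⟩ := Nat.sSup_mem hOne hObdd
    have hWcard : Wk.card = Fintype.card V - 3 := hWc.trans heq
    have hcc := Finset.card_compl Wk
    have hle := Finset.card_le_univ Wk
    exact clique_compl_three h3 hconn hk hvc hec hWk (by omega)
  · -- C5 implies equality
    rintro ⟨e⟩
    have hcV : Fintype.card V = 5 := by
      rw [Fintype.card_congr e.toEquiv, Fintype.card_fin]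
    have hne01 : e.symm 0 ≠ e.symm 1 := by
      intro hh
      have := e.symm.toEquiv.injective hh
      exact absurd this (by decide)
    have h2mem : (2 : ℕ) ∈
        {k | ∃ Wk : Finset V, Wk.card = k ∧ (↑Wk : Set V).Pairwise G.Adj} := by
      refine ⟨{e.symm 0, e.symm 1}, Finset.card_pair hne01, ?_⟩
      intro u hu v hv huv
      simp only [Finset.coe_insert, Set.mem_insert_iff, Finset.coe_singleton,
        Set.mem_singleton_iff] at hu hv
      have hadj01 : G.Adj (e.symm 0) (e.symm 1) :=
        e.symm.map_rel_iff.mpr (by decide)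
      rcases hu with rfl | rfl <;> rcases hv with rfl | rfl
      · exact absurd rfl huv
      · exact hadj01
      · exact hadj01.symm
      · exact absurd rfl huv
    have hb2 : ∀ k ∈ {k | ∃ Wk : Finset V, Wk.card = k ∧ (↑Wk : Set V).Pairwise G.Adj},
        k ≤ 2 := by
      rintro k ⟨Wk, rfl, hWk⟩
      by_contra hgt
      push_neg at hgt
      obtain ⟨a, b, c, ha, hb, hc, hab, hac, hbc⟩ := Finset.two_lt_card_iff.mp hgt
      have h1 : G.Adj a b := hWk (Finset.mem_coe.mpr ha) (Finset.mem_coe.mpr hb) hab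
      have h2 : G.Adj a c := hWk (Finset.mem_coe.mpr ha) (Finset.mem_coe.mpr hc) hac
      have h3'' : G.Adj b c := hWk (Finset.mem_coe.mpr hb) (Finset.mem_coe.mpr hc) hbc
      have hfree : ∀ p q r : Fin 5, p ≠ q → p ≠ r → q ≠ r →
          (SimpleGraph.cycleGraph 5).Adj p q → (SimpleGraph.cycleGraph 5).Adj p r →
          ¬ (SimpleGraph.cycleGraph 5).Adj q r := by decide
      exact hfree (e a) (e b) (e c)
        (fun hh => hab (e.toEquiv.injective hh))
        (fun hh => hac (e.toEquiv.injective hh))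
        (fun hh => hbc (e.toEquiv.injective hh))
        (e.map_rel_iff.mpr h1) (e.map_rel_iff.mpr h2) (e.map_rel_iff.mpr h3'')
    have homega2 : omegaNum G = 2 :=
      le_antisymm (csSup_le hOne hb2) (le_csSup hObdd h2mem)
    rw [homega2, hcV]
end

section
/- Let G be a maximal 3-γc-vertex critical graph with α(G) = κ(G) ≥ 4, let S be a minimum cut set of G, and suppose every connected component of G − S has more than one vertex. Then for every maximum independent set I of G, the number of vertices of I lying outside S is at least 3, i.e., |I \ S| ≥ 3. -/
set_option linter.unusedSectionVars false
set_option maxHeartbeats 1000000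


open Finset

variable {V : Type*}

namespace StmtAux

section
variable {V : Type*}

/-- An adjacent pair induces a connected subgraph. -/
lemma conn_pair {G : SimpleGraph V} {a b : V} (hab : G.Adj a b) :
    (G.induce {a, b}).Connected := by
  have hne : Nonempty ({a, b} : Set V) := ⟨⟨a, Or.inl rfl⟩⟩
  refine ⟨fun x y => ?_⟩
  have key : ∀ z : ({a, b} : Set V), (G.induce {a, b}).Reachable ⟨a, Or.inl rfl⟩ z := by
    rintro ⟨z, hz | hz⟩
    · subst hz; exact SimpleGraph.Reachable.refl _
    · subst hz
      exact SimpleGraph.Adj.reachable (by simpa using hab)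
  exact (key x).symm.trans (key y)

lemma singleton_conn {G : SimpleGraph V} (a : V) : (G.induce {a}).Connected := by
  refine ⟨fun x y => ?_⟩
  have : x = y := by
    rcases x with ⟨x, hx⟩; rcases y with ⟨y, hy⟩
    simp only [Set.mem_singleton_iff] at hx hy
    subst hx; subst hy; rfl
  exact this ▸ SimpleGraph.Reachable.refl _

lemma adj_of_conn_pair {G : SimpleGraph V} {a b : V} (hne : a ≠ b)
    (h : (G.induce {a, b}).Connected) : G.Adj a b := by
  by_contra hna
  have hbot : (G.induce ({a, b} : Set V)) = ⊥ := by
    ext ⟨x, hx⟩ ⟨y, hy⟩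
    simp only [SimpleGraph.comap_adj, SimpleGraph.bot_adj, iff_false]
    rcases hx with hx | hx <;> rcases hy with hy | hy <;> subst hx <;> subst hy
    · exact G.irrefl
    · exact hna
    · exact fun h' => hna h'.symm
    · exact G.irrefl
  have := h.preconnected ⟨a, Or.inl rfl⟩ ⟨b, Or.inr rfl⟩
  rw [hbot, SimpleGraph.reachable_bot] at this
  exact hne (by simpa using congrArg Subtype.val this)


end

section
variable {V : Type*} [Fintype V] [DecidableEq V]

lemma gc_lb {G : SimpleGraph V} (h3 : gammaC G = 3) {D : Finset V}
    (hd : IsConnDomSet G ↑D) : 3 ≤ D.card := by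
  have : gammaC G ≤ D.card := Nat.sInf_le ⟨D, rfl, hd⟩
  omega

lemma no1 {G : SimpleGraph V} (h3 : gammaC G = 3) (a : V)
    (h : ∀ x, x ≠ a → G.Adj a x) : False := by
  have hd : IsConnDomSet G ↑({a} : Finset V) := by
    constructor
    · intro v
      by_cases hv : v = a
      · exact Or.inl (by simp [hv])
      · exact Or.inr ⟨a, by simp, h v hv⟩
    · rw [Finset.coe_singleton]; exact singleton_conn a
  have := gc_lb h3 hd
  simp at this

lemma no2 {G : SimpleGraph V} (h3 : gammaC G = 3) {a b : V} (hab : G.Adj a b)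
    (h : ∀ x, x ≠ a → x ≠ b → G.Adj a x ∨ G.Adj b x) : False := by
  have hne : a ≠ b := hab.ne
  have hd : IsConnDomSet G ↑({a, b} : Finset V) := by
    constructor
    · intro v
      by_cases hva : v = a
      · exact Or.inl (by simp [hva])
      by_cases hvb : v = b
      · exact Or.inl (by simp [hvb])
      · rcases h v hva hvb with h' | h'
        · exact Or.inr ⟨a, by simp, h'⟩
        · exact Or.inr ⟨b, by simp, h'⟩
    · rw [Finset.coe_insert, Finset.coe_singleton]; exact conn_pair hab
  have := gc_lb h3 hd
  have : ({a, b} : Finset V).card ≤ 2 := Finset.card_insert_le a {b} |>.trans (by simp)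
  omega

/-- helper : adjacency in `G ⊔ fromEdgeSet {s(u,v)}`. -/
lemma adj_sup {G : SimpleGraph V} {u v x y : V} (huv : u ≠ v) :
    (G ⊔ SimpleGraph.fromEdgeSet {s(u, v)}).Adj x y ↔
      G.Adj x y ∨ ((x = u ∧ y = v) ∨ (x = v ∧ y = u)) := by
  constructor
  · rintro (h | h)
    · exact Or.inl h
    · rw [SimpleGraph.fromEdgeSet_adj] at h
      rcases h with ⟨h1, _⟩
      simp only [Set.mem_singleton_iff, Sym2.eq, Sym2.rel_iff', Prod.mk.injEq, Prod.swap_prod_mk] at h1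
      tauto
  · rintro (h | ⟨⟨rfl, rfl⟩ | ⟨rfl, rfl⟩⟩)
    · exact Or.inl h
    · exact Or.inr (by rw [SimpleGraph.fromEdgeSet_adj]; exact ⟨by simp, huv⟩)
    · exact Or.inr (by rw [SimpleGraph.fromEdgeSet_adj]; refine ⟨by simp [Sym2.eq_swap], huv.symm⟩)


/-- Existence of a small connected dominating set in a supergraph `G + uv`. -/
lemma ecrit_D {G : SimpleGraph V} (h3 : gammaC G = 3) {u v : V}
    (hlt : gammaC (G ⊔ SimpleGraph.fromEdgeSet {s(u, v)}) < 3) :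
    ∃ D : Finset V, (D.card = 1 ∨ D.card = 2) ∧
      IsConnDomSet (G ⊔ SimpleGraph.fromEdgeSet {s(u, v)}) ↑D := by
  set G' := G ⊔ SimpleGraph.fromEdgeSet {s(u, v)} with hG'
  -- the set for G is nonempty
  have hGne : {k | ∃ D : Finset V, D.card = k ∧ IsConnDomSet G ↑D}.Nonempty := by
    by_contra hcon
    rw [Set.not_nonempty_iff_eq_empty] at hcon
    have : gammaC G = 0 := by rw [gammaC, hcon, Nat.sInf_empty]
    omega
  obtain ⟨D₃, hD₃card, hD₃⟩ := Nat.sInf_mem hGne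
  have hle : G ≤ G' := le_sup_left
  have hD₃' : IsConnDomSet G' ↑D₃ := by
    constructor
    · intro w
      rcases hD₃.1 w with h | ⟨x, hx, hadj⟩
      · exact Or.inl h
      · exact Or.inr ⟨x, hx, hle hadj⟩
    · exact hD₃.2.mono (fun a b hab => hle hab)
  have hne' : {k | ∃ D : Finset V, D.card = k ∧ IsConnDomSet G' ↑D}.Nonempty :=
    ⟨D₃.card, D₃, rfl, hD₃'⟩
  obtain ⟨D, hDcard, hD⟩ := Nat.sInf_mem hne'
  have hcard : D.card < 3 := by rw [hDcard]; exact hlt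
  have hpos : D.card ≠ 0 := by
    intro h0
    rw [Finset.card_eq_zero] at h0
    subst h0
    have := hD.2.nonempty
    simp only [Finset.coe_empty] at this
    exact (by simpa using this : False)
  exact ⟨D, by omega, hD⟩


/-- one-endpoint analysis helper. -/
lemma oneside {G : SimpleGraph V} (h3 : gammaC G = 3) {u v : V} (hne : u ≠ v)
    (y : V) (hyu : y ≠ u) (hyv : y ≠ v)
    (hadj : (G ⊔ SimpleGraph.fromEdgeSet {s(u, v)}).Adj u y)
    (hdm : ∀ x, x ≠ u → x ≠ y → (G ⊔ SimpleGraph.fromEdgeSet {s(u, v)}).Adj u x ∨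
        (G ⊔ SimpleGraph.fromEdgeSet {s(u, v)}).Adj y x) :
    (∃ y, y ≠ u ∧ y ≠ v ∧ G.Adj u y ∧ ¬G.Adj v y ∧
        ∀ x, x ≠ u → x ≠ y → x ≠ v → G.Adj u x ∨ G.Adj y x) := by
  have huy : G.Adj u y := by
    rcases (adj_sup hne).1 hadj with h | ⟨⟨_, h2⟩ | ⟨h1, _⟩⟩
    · exact h
    · exact absurd h2 hyv
    · exact absurd h1 hne
  have hdm' : ∀ x, x ≠ u → x ≠ y → x ≠ v → G.Adj u x ∨ G.Adj y x := by
    intro x hxu hxy hxv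
    rcases hdm x hxu hxy with h | h
    · rcases (adj_sup hne).1 h with h' | ⟨⟨_, h2⟩ | ⟨h1, _⟩⟩
      · exact Or.inl h'
      · exact absurd h2 hxv
      · exact absurd h1 hne
    · rcases (adj_sup hne).1 h with h' | ⟨⟨h1, _⟩ | ⟨h1, _⟩⟩
      · exact Or.inr h'
      · exact absurd h1 hyu
      · exact absurd h1 hyv
  have hvy : ¬G.Adj v y := by
    intro hvy
    refine no2 h3 huy (fun x hxu hxy => ?_)
    by_cases hxv : x = v
    · subst hxv; exact Or.inr hvy.symm
    · exact hdm' x hxu hxy hxv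
  exact ⟨y, hyu, hyv, huy, hvy, hdm'⟩

/-- Case analysis from edge criticality. -/
lemma master_edge {G : SimpleGraph V} (h3 : gammaC G = 3)
    (hec : ∀ u v : V, u ≠ v → ¬ G.Adj u v →
      gammaC (G ⊔ SimpleGraph.fromEdgeSet {s(u, v)}) < 3)
    {u v : V} (hne : u ≠ v) (hna : ¬G.Adj u v) :
    (∀ x, x ≠ u → x ≠ v → G.Adj u x ∨ G.Adj v x)
    ∨ (∃ y, y ≠ u ∧ y ≠ v ∧ G.Adj u y ∧ ¬G.Adj v y ∧
        ∀ x, x ≠ u → x ≠ y → x ≠ v → G.Adj u x ∨ G.Adj y x)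
    ∨ (∃ y, y ≠ v ∧ y ≠ u ∧ G.Adj v y ∧ ¬G.Adj u y ∧
        ∀ x, x ≠ v → x ≠ y → x ≠ u → G.Adj v x ∨ G.Adj y x) := by
  have hG'symm : (G ⊔ SimpleGraph.fromEdgeSet {s(u, v)}) =
      (G ⊔ SimpleGraph.fromEdgeSet {s(v, u)}) := by rw [Sym2.eq_swap]
  obtain ⟨D, hDcard, hdom, hconn⟩ := ecrit_D h3 (hec u v hne hna)
  rcases hDcard with h1 | h2
  · -- singleton
    obtain ⟨a, rfl⟩ := Finset.card_eq_one.1 h1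
    have hd1 : ∀ x, x ≠ a → (G ⊔ SimpleGraph.fromEdgeSet {s(u, v)}).Adj a x := by
      intro x hx
      rcases hdom x with h | ⟨w, hw, hadj⟩
      · exact absurd (by simpa using h) hx
      · have : w = a := by simpa using hw
        subst this; exact hadj
    by_cases hau : a = u
    · subst hau
      refine Or.inl (fun x hxu hxv => Or.inl ?_)
      rcases (adj_sup hne).1 (hd1 x hxu) with h | ⟨⟨_, h2'⟩ | ⟨h1', _⟩⟩
      · exact h
      · exact absurd h2' hxv
      · exact absurd h1' hne
    by_cases hav : a = v
    · subst hav
      refine Or.inl (fun x hxu hxv => Or.inr ?_)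
      rcases (adj_sup hne).1 (hd1 x hxv) with h | ⟨⟨h1', _⟩ | ⟨_, h2'⟩⟩
      · exact h
      · exact absurd h1' (Ne.symm hne)
      · exact absurd h2' hxu
    · exfalso
      refine no1 h3 a (fun x hx => ?_)
      rcases (adj_sup hne).1 (hd1 x hx) with h | ⟨⟨h1', _⟩ | ⟨h1', _⟩⟩
      · exact h
      · exact absurd h1' hau
      · exact absurd h1' hav
  · -- pair
    obtain ⟨a, b, hab, rfl⟩ := Finset.card_eq_two.1 h2
    have hconn' : ((G ⊔ SimpleGraph.fromEdgeSet {s(u, v)}).induce {a, b}).Connected := by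
      have hcoe : (↑({a, b} : Finset V) : Set V) = ({a, b} : Set V) := by simp
      rwa [hcoe] at hconn
    have hGab : (G ⊔ SimpleGraph.fromEdgeSet {s(u, v)}).Adj a b :=
      adj_of_conn_pair hab hconn'
    have hd2 : ∀ x, x ≠ a → x ≠ b → (G ⊔ SimpleGraph.fromEdgeSet {s(u, v)}).Adj a x ∨
        (G ⊔ SimpleGraph.fromEdgeSet {s(u, v)}).Adj b x := by
      intro x hxa hxb
      rcases hdom x with h | ⟨w, hw, hadj⟩
      · rcases (by simpa using h : x = a ∨ x = b) with h' | h'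
        · exact absurd h' hxa
        · exact absurd h' hxb
      · rcases (by simpa using hw : w = a ∨ w = b) with h' | h'
        · subst h'; exact Or.inl hadj
        · subst h'; exact Or.inr hadj
    by_cases hau : a = u
    · subst hau
      by_cases hbv : b = v
      · subst hbv
        refine Or.inl (fun x hxa hxb => ?_)
        rcases hd2 x hxa hxb with h | h
        · refine Or.inl ?_
          rcases (adj_sup hne).1 h with h' | ⟨⟨_, h2'⟩ | ⟨h1', _⟩⟩
          · exact h'
          · exact absurd h2' hxb
          · exact absurd h1' hne
        · refine Or.inr ?_
          rcases (adj_sup hne).1 h with h' | ⟨⟨h1', _⟩ | ⟨_, h2'⟩⟩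
          · exact h'
          · exact absurd h1' (Ne.symm hne)
          · exact absurd h2' hxa
      · exact Or.inr (Or.inl (oneside h3 hne b (Ne.symm hab) hbv hGab
          (fun x hxa hxb => hd2 x hxa hxb)))
    by_cases hav : a = v
    · subst hav
      by_cases hbu : b = u
      · subst hbu
        refine Or.inl (fun x hxb hxa => ?_)
        rcases hd2 x hxa hxb with h | h
        · refine Or.inr ?_
          rcases (adj_sup hne).1 h with h' | ⟨⟨h1', _⟩ | ⟨_, h2'⟩⟩
          · exact h'
          · exact absurd h1' (Ne.symm hne)
          · exact absurd h2' hxb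
        · refine Or.inl ?_
          rcases (adj_sup hne).1 h with h' | ⟨⟨_, h2'⟩ | ⟨h1', _⟩⟩
          · exact h'
          · exact absurd h2' hxa
          · exact absurd h1' hne
      · refine Or.inr (Or.inr (oneside (u := a) (v := u) h3 hne.symm b (Ne.symm hab) hbu ?_ ?_))
        · rw [← hG'symm]; exact hGab
        · intro x hxa hxb
          rw [← hG'symm]
          exact hd2 x hxa hxb
    · by_cases hbu : b = u
      · subst hbu
        refine Or.inr (Or.inl (oneside h3 hne a hab hav hGab.symm
          (fun x hxb hxa => (hd2 x hxa hxb).symm)))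
      by_cases hbv : b = v
      · subst hbv
        refine Or.inr (Or.inr (oneside (u := b) (v := u) h3 hne.symm a hab hau ?_ ?_))
        · rw [← hG'symm]; exact hGab.symm
        · intro x hxb hxa
          rw [← hG'symm]
          exact (hd2 x hxa hxb).symm
      · exfalso
        have tr : ∀ {x y : V}, x ≠ u → x ≠ v →
            (G ⊔ SimpleGraph.fromEdgeSet {s(u, v)}).Adj x y → G.Adj x y := by
          intro x y hxu hxv h
          rcases (adj_sup hne).1 h with h' | ⟨⟨h1', _⟩ | ⟨h1', _⟩⟩
          · exact h'
          · exact absurd h1' hxu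
          · exact absurd h1' hxv
        have hGab' : G.Adj a b := tr hau hav hGab
        refine no2 h3 hGab' (fun x hxa hxb => ?_)
        rcases hd2 x hxa hxb with h | h
        · exact Or.inl (tr hau hav h)
        · exact Or.inr (tr hbu hbv h)


end

section
variable {V : Type*} [Fintype V] [DecidableEq V]

lemma Gw_conn {G : SimpleGraph V} (h4 : 4 ≤ kappa G) (w : V) :
    (G.induce {x | x ≠ w}).Connected := by
  have hset : ((↑({w} : Finset V) : Set V)ᶜ) = {x | x ≠ w} := by
    ext x; simp
  by_contra hcon
  have h1 : (1 : ℕ) ∈ {k | ∃ S : Finset V, S.card = k ∧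
      (¬ (G.induce (↑S : Set V)ᶜ).Connected ∨ ((↑S : Set V)ᶜ).Subsingleton)} := by
    exact ⟨{w}, by simp, Or.inl (by rw [hset]; exact hcon)⟩
  have := Nat.sInf_le h1
  rw [kappa] at h4
  omega

/-- extraction of a small connected dominating set of `G - w`. -/
lemma vcrit_D {G : SimpleGraph V} (h4 : 4 ≤ kappa G)
    {w : V} (hv : gammaC (G.induce {x | x ≠ w}) < 3) :
    ∃ D : Finset ({x : V | x ≠ w}), (D.card = 1 ∨ D.card = 2) ∧
      IsConnDomSet (G.induce {x | x ≠ w}) ↑D := by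
  set H := G.induce {x | x ≠ w} with hH
  have hconn : H.Connected := Gw_conn h4 w
  have hne' : {k | ∃ D : Finset ({x : V | x ≠ w}), D.card = k ∧ IsConnDomSet H ↑D}.Nonempty := by
    refine ⟨(Finset.univ : Finset ({x : V | x ≠ w})).card, Finset.univ, rfl, ?_, ?_⟩
    · intro v; exact Or.inl (by simp)
    · have : (↑(Finset.univ : Finset ({x : V | x ≠ w})) : Set ({x : V | x ≠ w})) = Set.univ := by
        simp
      rw [this]
      exact (SimpleGraph.induceUnivIso H).connected_iff.mpr hconn
  obtain ⟨D, hDcard, hD⟩ := Nat.sInf_mem hne'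
  have hcard : D.card < 3 := by rw [hDcard]; exact hv
  have hpos : D.card ≠ 0 := by
    intro h0
    rw [Finset.card_eq_zero] at h0
    subst h0
    have := hD.2.nonempty
    simp only [Finset.coe_empty] at this
    exact (by simpa using this : False)
  exact ⟨D, by omega, hD⟩

/-- Case analysis from vertex criticality. -/
lemma master_vertex {G : SimpleGraph V} (h3 : gammaC G = 3) (h4 : 4 ≤ kappa G)
    (hvc : ∀ v : V, gammaC (G.induce {w | w ≠ v}) < 3) (w : V) :
    (∃ a, a ≠ w ∧ ¬G.Adj a w ∧ ∀ x, x ≠ a → x ≠ w → G.Adj a x)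
    ∨ (∃ a b, a ≠ b ∧ G.Adj a b ∧ a ≠ w ∧ b ≠ w ∧ ¬G.Adj a w ∧ ¬G.Adj b w ∧
        ∀ x, x ≠ a → x ≠ b → x ≠ w → G.Adj a x ∨ G.Adj b x) := by
  obtain ⟨D, hDcard, hdom, hconn⟩ := vcrit_D h4 (hvc w)
  rcases hDcard with h1 | h2
  · obtain ⟨A, rfl⟩ := Finset.card_eq_one.1 h1
    obtain ⟨a, ha⟩ := A
    have hdm : ∀ x, x ≠ a → x ≠ w → G.Adj a x := by
      intro x hxa hxw
      rcases hdom ⟨x, hxw⟩ with h | ⟨u, hu, hadj⟩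
      · exact absurd (by simpa using h) hxa
      · have : u = ⟨a, ha⟩ := by simpa using hu
        subst this
        exact hadj
    have hnaw : ¬G.Adj a w := by
      intro haw
      refine no1 h3 a (fun x hx => ?_)
      by_cases hxw : x = w
      · subst hxw; exact haw
      · exact hdm x hx hxw
    exact Or.inl ⟨a, ha, hnaw, hdm⟩
  · obtain ⟨A, B, hAB, rfl⟩ := Finset.card_eq_two.1 h2
    obtain ⟨a, ha⟩ := A
    obtain ⟨b, hb⟩ := B
    have hab : a ≠ b := fun h => hAB (Subtype.ext h)
    have hconn' : ((G.induce {x | x ≠ w}).induce {⟨a, ha⟩, ⟨b, hb⟩}).Connected := by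
      have hcoe : (↑({⟨a, ha⟩, ⟨b, hb⟩} : Finset ({x : V | x ≠ w})) :
          Set ({x : V | x ≠ w})) = {⟨a, ha⟩, ⟨b, hb⟩} := by simp
      rwa [hcoe] at hconn
    have hadj : G.Adj a b := adj_of_conn_pair (a := (⟨a, ha⟩ : {x : V | x ≠ w})) (b := ⟨b, hb⟩) hAB hconn'
    have hdm : ∀ x, x ≠ a → x ≠ b → x ≠ w → G.Adj a x ∨ G.Adj b x := by
      intro x hxa hxb hxw
      rcases hdom ⟨x, hxw⟩ with h | ⟨u, hu, hadj'⟩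
      · rcases (by simpa using h : x = a ∨ x = b) with h' | h'
        · exact absurd h' hxa
        · exact absurd h' hxb
      · rcases (by simpa using hu : u = (⟨a, ha⟩ : {x : V | x ≠ w}) ∨ u = ⟨b, hb⟩) with h' | h'
        · subst h'; exact Or.inl hadj'
        · subst h'; exact Or.inr hadj'
    have hnaw : ¬G.Adj a w := by
      intro haw
      refine no2 h3 hadj (fun x hxa hxb => ?_)
      by_cases hxw : x = w
      · subst hxw; exact Or.inl haw
      · exact hdm x hxa hxb hxw
    have hnbw : ¬G.Adj b w := by
      intro hbw
      refine no2 h3 hadj (fun x hxa hxb => ?_)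
      by_cases hxw : x = w
      · subst hxw; exact Or.inr hbw
      · exact hdm x hxa hxb hxw
    exact Or.inr ⟨a, b, hab, hadj, ha, hb, hnaw, hnbw, hdm⟩


end

section
variable {V : Type*}
/-- Reachability outside `S`. -/
def Rch (G : SimpleGraph V) (S : Finset V) (x y : V) : Prop :=
  ∃ (hx : x ∈ (↑S : Set V)ᶜ) (hy : y ∈ (↑S : Set V)ᶜ),
    (G.induce (↑S : Set V)ᶜ).Reachable ⟨x, hx⟩ ⟨y, hy⟩

variable {G : SimpleGraph V} {S : Finset V}

lemma notmem_coe {x : V} (hx : x ∉ S) : x ∈ (↑S : Set V)ᶜ := by simp [hx]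

lemma rch_refl {x : V} (hx : x ∉ S) : Rch G S x x :=
  ⟨notmem_coe hx, notmem_coe hx, SimpleGraph.Reachable.refl _⟩

lemma rch_left {x y : V} (h : Rch G S x y) : x ∉ S := by
  obtain ⟨hx, -, -⟩ := h; simpa using hx

lemma rch_right {x y : V} (h : Rch G S x y) : y ∉ S := by
  obtain ⟨-, hy, -⟩ := h; simpa using hy

lemma rch_symm {x y : V} (h : Rch G S x y) : Rch G S y x := by
  obtain ⟨hx, hy, hr⟩ := h; exact ⟨hy, hx, hr.symm⟩

lemma rch_trans {x y z : V} (h1 : Rch G S x y) (h2 : Rch G S y z) : Rch G S x z := by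
  obtain ⟨hx, hy, hr1⟩ := h1
  obtain ⟨hy', hz, hr2⟩ := h2
  exact ⟨hx, hz, hr1.trans (by convert hr2 using 2)⟩

lemma rch_adj {x y : V} (hx : x ∉ S) (hy : y ∉ S) (h : G.Adj x y) : Rch G S x y :=
  ⟨notmem_coe hx, notmem_coe hy, SimpleGraph.Adj.reachable (by simpa using h)⟩

/-- separation : two outside vertices which are not mutually reachable. -/
lemma rch_sep (hScut : ¬ (G.induce (↑S : Set V)ᶜ).Connected)
    (hne : ∃ x : V, x ∉ S) :
    ∃ x y : V, x ∉ S ∧ y ∉ S ∧ ¬ Rch G S x y := by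
  obtain ⟨x0, hx0⟩ := hne
  have hnemp : Nonempty ((↑S : Set V)ᶜ : Set V) := ⟨⟨x0, notmem_coe hx0⟩⟩
  have hpc : ¬ (G.induce (↑S : Set V)ᶜ).Preconnected := fun hp => hScut ⟨hp⟩
  unfold SimpleGraph.Preconnected at hpc
  push_neg at hpc
  obtain ⟨⟨x, hx⟩, ⟨y, hy⟩, hxy⟩ := hpc
  refine ⟨x, y, by simpa using hx, by simpa using hy, fun hr => ?_⟩
  obtain ⟨hx', hy', hr'⟩ := hr
  exact hxy (by convert hr' using 2)

/-- outside neighbour in the same component. -/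
lemma rch_nbr (hcomp : ∀ v : V, v ∉ S → ∃ u : V, u ∉ S ∧ G.Adj u v)
    {c : V} (hc : c ∉ S) : ∃ c' : V, c' ∉ S ∧ G.Adj c c' ∧ Rch G S c c' ∧ c' ≠ c := by
  obtain ⟨u, hu, hadj⟩ := hcomp c hc
  exact ⟨u, hu, hadj.symm, rch_adj hc hu hadj.symm, hadj.ne⟩

lemma pick_other (hScut : ¬ (G.induce (↑S : Set V)ᶜ).Connected)
    (hcomp : ∀ v : V, v ∉ S → ∃ u : V, u ∉ S ∧ G.Adj u v)
    (hne : ∃ x : V, x ∉ S)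
    (a w : V) (ha : a ∉ S) : ∃ y, y ∉ S ∧ ¬ Rch G S a y ∧ y ≠ w := by
  obtain ⟨x, y, hx, hy, hxy⟩ := rch_sep hScut hne
  have key : ∃ c, c ∉ S ∧ ¬ Rch G S a c := by
    by_cases hax : Rch G S a x
    · refine ⟨y, hy, fun h => hxy (rch_trans (rch_symm hax) h)⟩
    · exact ⟨x, hx, hax⟩
  obtain ⟨c, hc, hac⟩ := key
  by_cases hcw : c = w
  · obtain ⟨c', hc', hadj, hrch, hne'⟩ := rch_nbr hcomp hc
    refine ⟨c', hc', fun h => hac (rch_trans h (rch_symm hrch)), by rw [← hcw]; exact hne'⟩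
  · exact ⟨c, hc, hac, hcw⟩


end

section
variable {V : Type*} [Fintype V] [DecidableEq V] {G : SimpleGraph V} {S : Finset V}

/-- Lemma X : every vertex has a non-neighbour in `S`. -/
lemma lemmaX (h3 : gammaC G = 3) (h4 : 4 ≤ kappa G)
  (hvc : ∀ v : V, gammaC (G.induce {w | w ≠ v}) < 3)
  (hScut : ¬ (G.induce (↑S : Set V)ᶜ).Connected)
  (hcomp : ∀ v : V, v ∉ S → ∃ u : V, u ∉ S ∧ G.Adj u v)
  (hout : ∃ x : V, x ∉ S) (w : V) : ∃ s, s ∈ S ∧ s ≠ w ∧ ¬ G.Adj s w := by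
  rcases master_vertex h3 h4 hvc w with ⟨a, haw, hnaw, hdm⟩ |
    ⟨a, b, hab, hadj, haw, hbw, hnaw, hnbw, hdm⟩
  · by_cases haS : a ∈ S
    · exact ⟨a, haS, haw, hnaw⟩
    · exfalso
      obtain ⟨y, hyS, hray, hyw⟩ := pick_other hScut hcomp hout a w haS
      have hya : y ≠ a := by rintro rfl; exact hray (rch_refl haS)
      exact hray (rch_adj haS hyS (hdm y hya hyw))
  · by_cases haS : a ∈ S
    · exact ⟨a, haS, haw, hnaw⟩
    by_cases hbS : b ∈ S
    · exact ⟨b, hbS, hbw, hnbw⟩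
    · exfalso
      have hrab : Rch G S a b := rch_adj haS hbS hadj
      obtain ⟨y, hyS, hray, hyw⟩ := pick_other hScut hcomp hout a w haS
      have hya : y ≠ a := by rintro rfl; exact hray (rch_refl haS)
      have hyb : y ≠ b := by rintro rfl; exact hray hrab
      rcases hdm y hya hyb hyw with h | h
      · exact hray (rch_adj haS hyS h)
      · exact hray (rch_trans hrab (rch_adj hbS hyS h))

/-- Processed vertex-criticality shapes, with an `S`-vertex identified. -/
lemma vc_shapes (h3 : gammaC G = 3) (h4 : 4 ≤ kappa G)
  (hvc : ∀ v : V, gammaC (G.induce {w | w ≠ v}) < 3)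
  (hScut : ¬ (G.induce (↑S : Set V)ᶜ).Connected)
  (hcomp : ∀ v : V, v ∉ S → ∃ u : V, u ∉ S ∧ G.Adj u v)
  (hout : ∃ x : V, x ∉ S) (w : V) :
    (∃ a, a ∈ S ∧ a ≠ w ∧ ¬G.Adj a w ∧ ∀ x, x ≠ a → x ≠ w → G.Adj a x)
    ∨ (∃ a b, a ∈ S ∧ a ≠ b ∧ G.Adj a b ∧ a ≠ w ∧ b ≠ w ∧ ¬G.Adj a w ∧ ¬G.Adj b w ∧
        ∀ x, x ≠ a → x ≠ b → x ≠ w → G.Adj a x ∨ G.Adj b x) := by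
  rcases master_vertex h3 h4 hvc w with ⟨a, haw, hnaw, hdm⟩ |
    ⟨a, b, hab, hadj, haw, hbw, hnaw, hnbw, hdm⟩
  · by_cases haS : a ∈ S
    · exact Or.inl ⟨a, haS, haw, hnaw, hdm⟩
    · exfalso
      obtain ⟨y, hyS, hray, hyw⟩ := pick_other hScut hcomp hout a w haS
      have hya : y ≠ a := by rintro rfl; exact hray (rch_refl haS)
      exact hray (rch_adj haS hyS (hdm y hya hyw))
  · by_cases haS : a ∈ S
    · exact Or.inr ⟨a, b, haS, hab, hadj, haw, hbw, hnaw, hnbw, hdm⟩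
    by_cases hbS : b ∈ S
    · exact Or.inr ⟨b, a, hbS, hab.symm, hadj.symm, hbw, haw, hnbw, hnaw,
        fun x hxb hxa hxw => (hdm x hxa hxb hxw).symm⟩
    · exfalso
      have hrab : Rch G S a b := rch_adj haS hbS hadj
      obtain ⟨y, hyS, hray, hyw⟩ := pick_other hScut hcomp hout a w haS
      have hya : y ≠ a := by rintro rfl; exact hray (rch_refl haS)
      have hyb : y ≠ b := by rintro rfl; exact hray hrab
      rcases hdm y hya hyb hyw with h | h
      · exact hray (rch_adj haS hyS h)
      · exact hray (rch_trans hrab (rch_adj hbS hyS h))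

/-- Case `I = S` : impossible. -/
lemma r0_case (h3 : gammaC G = 3) (h4 : 4 ≤ kappa G)
  (hvc : ∀ v : V, gammaC (G.induce {w | w ≠ v}) < 3)
  (hScut : ¬ (G.induce (↑S : Set V)ᶜ).Connected)
  (hcomp : ∀ v : V, v ∉ S → ∃ u : V, u ∉ S ∧ G.Adj u v)
  (hout : ∃ x : V, x ∉ S)
  (hSind : ∀ a ∈ S, ∀ b ∈ S, a ≠ b → ¬G.Adj a b)
    (hcard2 : ∃ s t, s ∈ S ∧ t ∈ S ∧ s ≠ t) : False := by
  obtain ⟨c, hc⟩ := id hout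
  rcases vc_shapes h3 h4 hvc hScut hcomp hout c with ⟨a, haS, hac, hnac, hdm⟩ |
    ⟨a, b, haS, hab, hadj, hac, hbc, hnac, hnbc, hdm⟩
  · obtain ⟨s, t, hsS, htS, hst⟩ := hcard2
    have : ∃ u, u ∈ S ∧ u ≠ a := by
      by_cases hsa : s = a
      · exact ⟨t, htS, fun h => hst (hsa.trans h.symm)⟩
      · exact ⟨s, hsS, hsa⟩
    obtain ⟨u, huS, hua⟩ := this
    have huc : u ≠ c := fun h => hc (h ▸ huS)
    exact hSind a haS u huS (Ne.symm hua) (hdm u hua huc)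
  · by_cases hbS : b ∈ S
    · exact hSind a haS b hbS hadj.ne hadj
    · have hballS : ∀ s ∈ S, G.Adj b s := by
        intro s hsS
        have hsb : s ≠ b := fun h => hbS (h ▸ hsS)
        have hsc : s ≠ c := fun h => hc (h ▸ hsS)
        by_cases hsa : s = a
        · subst hsa; exact hadj.symm
        · rcases hdm s hsa hsb hsc with h | h
          · exact absurd h (hSind a haS s hsS (Ne.symm hsa))
          · exact h
      obtain ⟨s, hsS, hsb, hnsb⟩ := lemmaX h3 h4 hvc hScut hcomp hout b
      exact hnsb ((hballS s hsS).symm)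


/-- Case `|I \ S| = 1` is impossible. -/
lemma r1_case
    (h3 : gammaC G = 3)
    (hec : ∀ u v : V, u ≠ v → ¬ G.Adj u v →
      gammaC (G ⊔ SimpleGraph.fromEdgeSet {s(u, v)}) < 3)
    (h4 : 4 ≤ kappa G)
    (hvc : ∀ v : V, gammaC (G.induce {w | w ≠ v}) < 3)
    (hScut : ¬ (G.induce (↑S : Set V)ᶜ).Connected)
    (hcomp : ∀ v : V, v ∉ S → ∃ u : V, u ∉ S ∧ G.Adj u v)
    {I : Finset V}
    (hind : ∀ a ∈ I, ∀ b ∈ I, a ≠ b → ¬G.Adj a b)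
    {σ i₁ : V}
    (hσS : σ ∈ S) (hσI : σ ∉ I) (hi₁I : i₁ ∈ I) (hi₁S : i₁ ∉ S)
    (hSI : ∀ s ∈ S, s ≠ σ → s ∈ I)
    (hJ2 : ∃ j j', (j ∈ S ∧ j ∈ I) ∧ (j' ∈ S ∧ j' ∈ I) ∧ j ≠ j') : False := by
  have hout : ∃ x : V, x ∉ S := ⟨i₁, hi₁S⟩
  obtain ⟨s₁, hs₁S, hs₁σ, hs₁nσ⟩ := lemmaX h3 h4 hvc hScut hcomp hout σ
  have hs₁I : s₁ ∈ I := hSI s₁ hs₁S hs₁σ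
  -- Step 2 : the vertex b₀
  rcases vc_shapes h3 h4 hvc hScut hcomp hout σ with
    ⟨a, haS, haσ, hnaσ, hdm⟩ | ⟨a, b₀, haS, hab, hadj, haσ, hb₀σ, hnaσ, hnb₀σ, hdm⟩
  · -- single : impossible since J is independent and has 2 elements
    have haI : a ∈ I := hSI a haS haσ
    have hex : ∃ t, (t ∈ S ∧ t ∈ I) ∧ t ≠ a := by
      obtain ⟨j, j', hj, hj', hne⟩ := hJ2
      by_cases h : j = a
      · exact ⟨j', hj', fun hh => hne (h.trans hh.symm)⟩
      · exact ⟨j, hj, h⟩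
    obtain ⟨t, ⟨htS, htI⟩, hta⟩ := hex
    have htσ : t ≠ σ := fun h => hσI (h ▸ htI)
    exact hind a haI t htI (Ne.symm hta) (hdm t hta htσ)
  · have haI : a ∈ I := hSI a haS haσ
    have hb₀I : b₀ ∉ I := fun hmem => hind a haI b₀ hmem hab hadj
    have hb₀S : b₀ ∉ S := fun hmem => hb₀I (hSI b₀ hmem hb₀σ)
    have hb₀J : ∀ t, t ∈ S → t ∈ I → G.Adj b₀ t := by
      intro t htS htI
      by_cases hta : t = a
      · subst hta; exact hadj.symm
      have htb₀ : t ≠ b₀ := fun h => hb₀S (h ▸ htS)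
      have htσ : t ≠ σ := fun h => hσI (h ▸ htI)
      rcases hdm t hta htb₀ htσ with h | h
      · exact absurd h (hind a haI t htI (fun hh => hta hh.symm))
      · exact h
    have hb₀i₁ : G.Adj b₀ i₁ := by
      have h1 : i₁ ≠ a := fun h => hi₁S (h ▸ haS)
      have h2 : i₁ ≠ b₀ := fun h => hb₀I (h ▸ hi₁I)
      have h3' : i₁ ≠ σ := fun h => hi₁S (h ▸ hσS)
      rcases hdm i₁ h1 h2 h3' with h | h
      · exact absurd h (hind a haI i₁ hi₁I (fun hh => h1 hh.symm))
      · exact h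
    have rb₀ : Rch G S b₀ i₁ := rch_adj hb₀S hi₁S hb₀i₁
    -- Step 3 : σ misses at most one vertex outside the component of i₁
    have step3 : ∀ c c', c ∉ S → c' ∉ S → ¬Rch G S c i₁ → ¬Rch G S c' i₁ →
        ¬G.Adj σ c → ¬G.Adj σ c' → c ≠ c' → False := by
      intro c c' hcS hc'S hci hc'i hσc hσc' hcc'
      have hσc_ne : σ ≠ c := fun h => hcS (h ▸ hσS)
      rcases master_edge h3 hec hσc_ne hσc with hA |
        ⟨y, hyσ, hyc, hady, hncy, hdmB⟩ | ⟨y, hyc, hyσ, hady, hnσy, hdmC⟩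
      · have hb₀c : b₀ ≠ c := fun h => hci (h ▸ rb₀)
        rcases hA b₀ hb₀σ hb₀c with h | h
        · exact hnb₀σ h.symm
        · exact hci (rch_trans (rch_adj hcS hb₀S h) rb₀)
      · have hyb₀ : G.Adj y b₀ := by
          have h2 : b₀ ≠ y := fun h => hnb₀σ (h ▸ hady).symm
          have h3' : b₀ ≠ c := fun h => hci (h ▸ rb₀)
          rcases hdmB b₀ hb₀σ h2 h3' with h | h
          · exact absurd h.symm hnb₀σ
          · exact h
        have hyc' : G.Adj y c' := by
          have h1 : c' ≠ σ := fun h => hc'S (h ▸ hσS)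
          have h2 : c' ≠ y := fun h => hσc' (h ▸ hady)
          rcases hdmB c' h1 h2 (Ne.symm hcc') with h | h
          · exact absurd h hσc'
          · exact h
        by_cases hyS : y ∈ S
        · have hyI : y ∈ I := hSI y hyS hyσ
          have hs₁y : s₁ ≠ y := fun h => hs₁nσ (h ▸ hady).symm
          have hs₁c : s₁ ≠ c := fun h => hcS (h ▸ hs₁S)
          rcases hdmB s₁ hs₁σ hs₁y hs₁c with h | h
          · exact hs₁nσ h.symm
          · exact hind y hyI s₁ hs₁I (fun hh => hs₁y hh.symm) h
        · have hry : Rch G S y b₀ := rch_adj hyS hb₀S hyb₀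
          have hryi : Rch G S y i₁ := rch_trans hry rb₀
          exact hc'i (rch_trans (rch_symm (rch_adj hyS hc'S hyc')) hryi)
      · have hi₁c : i₁ ≠ c := fun h => hci (h ▸ rch_refl hi₁S)
        have hi₁y : i₁ ≠ y := fun h => hci (rch_adj hcS hi₁S (h ▸ hady))
        have hi₁σ : i₁ ≠ σ := fun h => hi₁S (h ▸ hσS)
        have hyi₁ : G.Adj y i₁ := by
          rcases hdmC i₁ hi₁c hi₁y hi₁σ with h | h
          · exact absurd (rch_adj hcS hi₁S h) hci
          · exact h
        by_cases hyS : y ∈ S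
        · have hyI : y ∈ I := hSI y hyS hyσ
          exact hind y hyI i₁ hi₁I (fun hh => hi₁y hh.symm) hyi₁
        · exact hci (rch_trans (rch_adj hcS hyS hady) (rch_adj hyS hi₁S hyi₁))
    -- Step 4 : find c outside the component of i₁ with σ ~ c
    obtain ⟨u0, hu0S, hu0n, -⟩ := pick_other hScut hcomp hout i₁ i₁ hi₁S
    have hu0n' : ¬ Rch G S u0 i₁ := fun h => hu0n (rch_symm h)
    have hcex : ∃ c, c ∉ S ∧ ¬Rch G S c i₁ ∧ G.Adj σ c := by
      by_cases h : G.Adj σ u0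
      · exact ⟨u0, hu0S, hu0n', h⟩
      · obtain ⟨u1, hu1S, hadj01, hrch01, hne01⟩ := rch_nbr hcomp hu0S
        have hu1n' : ¬ Rch G S u1 i₁ := fun hr => hu0n' (rch_trans hrch01 hr)
        by_cases h1 : G.Adj σ u1
        · exact ⟨u1, hu1S, hu1n', h1⟩
        · exact (step3 u0 u1 hu0S hu1S hu0n' hu1n' h h1 (Ne.symm hne01)).elim
    obtain ⟨c, hcS, hci, hσc⟩ := hcex
    obtain ⟨sc, hscS, hscc, hscnc⟩ := lemmaX h3 h4 hvc hScut hcomp hout c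
    have hscσ : sc ≠ σ := fun h => hscnc (h ▸ hσc)
    have hscI : sc ∈ I := hSI sc hscS hscσ
    obtain ⟨c2, hc2S, hadjc2, hrchc2, hc2c⟩ := rch_nbr hcomp hcS
    -- Step 5 : the pair (i₁, c)
    have hi₁c : i₁ ≠ c := fun h => hci (h ▸ rch_refl hi₁S)
    have hnadj : ¬ G.Adj i₁ c := fun h => hci (rch_symm (rch_adj hi₁S hcS h))
    rcases master_edge h3 hec hi₁c hnadj with hA |
      ⟨y, hyi₁, hyc, hady, hncy, hdmB⟩ | ⟨y, hyc, hyi₁, hady, hni₁y, hdmC⟩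
    · have h1 : sc ≠ i₁ := fun h => hi₁S (h ▸ hscS)
      rcases hA sc h1 hscc with h | h
      · exact hind i₁ hi₁I sc hscI (fun hh => h1 hh.symm) h
      · exact hscnc h.symm
    · have hyI : y ∉ I := fun hmem => hind i₁ hi₁I y hmem (Ne.symm hyi₁) hady
      have hJy : ∀ t, t ∈ S → t ∈ I → G.Adj y t := by
        intro t htS htI
        have h1 : t ≠ i₁ := fun h => hi₁S (h ▸ htS)
        have h2 : t ≠ y := fun h => hyI (h ▸ htI)
        have h3' : t ≠ c := fun h => hcS (h ▸ htS)
        rcases hdmB t h1 h2 h3' with h | h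
        · exact absurd h (hind i₁ hi₁I t htI (fun hh => h1 hh.symm))
        · exact h
      by_cases hyS : y ∈ S
      · by_cases hyσ : y = σ
        · subst hyσ
          exact hs₁nσ (hJy s₁ hs₁S hs₁I).symm
        · exact hyI (hSI y hyS hyσ)
      · have hry : Rch G S i₁ y := rch_adj hi₁S hyS hady
        have h1 : c2 ≠ i₁ := fun h => hci (h ▸ hrchc2)
        have h2 : c2 ≠ y := fun h => hci (rch_trans (h ▸ hrchc2) (rch_symm hry))
        rcases hdmB c2 h1 h2 hc2c with h | h
        · exact hci (rch_symm (rch_trans (rch_adj hi₁S hc2S h) (rch_symm hrchc2)))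
        · exact hci (rch_symm (rch_trans (rch_trans hry (rch_adj hyS hc2S h))
            (rch_symm hrchc2)))
    · have hb₀c2 : b₀ ≠ c := fun h => hci (h ▸ rb₀)
      have hb₀i₁ne : b₀ ≠ i₁ := fun h => hb₀I (h ▸ hi₁I)
      have hyb₀ne : b₀ ≠ y := fun h => hci (rch_trans (rch_adj hcS hb₀S (h ▸ hady)) rb₀)
      have hyb₀ : G.Adj y b₀ := by
        rcases hdmC b₀ hb₀c2 hyb₀ne hb₀i₁ne with h | h
        · exact absurd (rch_trans (rch_adj hcS hb₀S h) rb₀) hci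
        · exact h
      by_cases hyS : y ∈ S
      · by_cases hyσ : y = σ
        · subst hyσ; exact hnb₀σ hyb₀.symm
        · have hyI2 : y ∈ I := hSI y hyS hyσ
          have hscy : sc ≠ y := fun h => hscnc (h ▸ hady).symm
          have hsci₁ : sc ≠ i₁ := fun h => hi₁S (h ▸ hscS)
          rcases hdmC sc hscc hscy hsci₁ with h | h
          · exact hscnc h.symm
          · exact hind y hyI2 sc hscI (fun hh => hscy hh.symm) h
      · exact hci (rch_trans (rch_trans (rch_adj hcS hyS hady)
          (rch_adj hyS hb₀S hyb₀)) rb₀)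

/-- Core of the case `|I \ S| = 2`, after normalising via the pair `(i₁, i₂)`. -/
lemma r2_main
    (h3 : gammaC G = 3)
    (hec : ∀ u v : V, u ≠ v → ¬ G.Adj u v →
      gammaC (G ⊔ SimpleGraph.fromEdgeSet {s(u, v)}) < 3)
    (h4 : 4 ≤ kappa G)
    (hvc : ∀ v : V, gammaC (G.induce {w | w ≠ v}) < 3)
    (hScut : ¬ (G.induce (↑S : Set V)ᶜ).Connected)
    (hcomp : ∀ v : V, v ∉ S → ∃ u : V, u ∉ S ∧ G.Adj u v)
    {I : Finset V}
    (hind : ∀ a ∈ I, ∀ b ∈ I, a ≠ b → ¬G.Adj a b)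
    {σ τ i₁ i₂ : V}
    (hσS : σ ∈ S) (hτS : τ ∈ S) (hστ : σ ≠ τ) (hσI : σ ∉ I) (hτI : τ ∉ I)
    (hi₁I : i₁ ∈ I) (hi₂I : i₂ ∈ I) (hi₁S : i₁ ∉ S) (hi₂S : i₂ ∉ S) (h12 : i₁ ≠ i₂)
    (hSI : ∀ s ∈ S, s ∉ I → s = σ ∨ s = τ)
    (hIS : ∀ x ∈ I, x ∉ S → x = i₁ ∨ x = i₂)
    (hJσ : ∀ t, t ∈ S → t ∈ I → G.Adj σ t)
    (hadjσ1 : G.Adj σ i₁)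
    (hnσ2 : ¬G.Adj σ i₂)
    (hdomD : ∀ x, x ≠ i₁ → x ≠ σ → x ≠ i₂ → G.Adj i₁ x ∨ G.Adj σ x) : False := by
  have hout : ∃ x : V, x ∉ S := ⟨i₁, hi₁S⟩
  -- τ is not adjacent to σ
  have hτnσ : ¬ G.Adj τ σ := by
    obtain ⟨s', hs'S, hs'σ, hns'σ⟩ := lemmaX h3 h4 hvc hScut hcomp hout σ
    by_cases hs'I : s' ∈ I
    · exact ((hns'σ (hJσ s' hs'S hs'I).symm)).elim
    · rcases hSI s' hs'S hs'I with h | h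
      · exact (hs'σ h).elim
      · exact h ▸ hns'σ
  -- τ is adjacent to i₁
  have hadjτ1 : G.Adj i₁ τ := by
    have h1 : τ ≠ i₁ := fun h => hi₁S (h ▸ hτS)
    have h2 : τ ≠ i₂ := fun h => hi₂S (h ▸ hτS)
    rcases hdomD τ h1 hστ.symm h2 with h | h
    · exact h
    · exact (hτnσ h.symm).elim
  -- the unified pair (i₁, c)-argument
  have main_pair : ∀ z : V, z ∉ S → ¬G.Adj z σ → z ≠ i₁ → Rch G S z i₁ →
      (∀ x, x ∉ S → ¬Rch G S x i₁ → G.Adj τ x) → False := by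
    intro z hzS hnzσ hz1 rz1 hcτ
    obtain ⟨c, hcS, hnc, hci₂⟩ := pick_other hScut hcomp hout i₁ i₂ hi₁S
    have hci : ¬Rch G S c i₁ := fun h => hnc (rch_symm h)
    have hc1ne : c ≠ i₁ := fun h => hci (h ▸ rch_refl hcS)
    have hσc : G.Adj σ c := by
      have h2 : c ≠ σ := fun h => hcS (h ▸ hσS)
      rcases hdomD c hc1ne h2 hci₂ with h | h
      · exact ((hci (rch_symm (rch_adj hi₁S hcS h)))).elim
      · exact h
    have hτc : G.Adj τ c := hcτ c hcS hci
    obtain ⟨j₀, hj₀S, hj₀c, hj₀nc⟩ := lemmaX h3 h4 hvc hScut hcomp hout c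
    have hj₀I : j₀ ∈ I := by
      by_cases h : j₀ ∈ I
      · exact h
      · rcases hSI j₀ hj₀S h with h' | h'
        · exact (hj₀nc (h' ▸ hσc)).elim
        · exact (hj₀nc (h' ▸ hτc)).elim
    obtain ⟨c2, hc2S, hadjc2, hrchc2, hc2c⟩ := rch_nbr hcomp hcS
    have hnadj : ¬ G.Adj i₁ c := fun h => hci (rch_symm (rch_adj hi₁S hcS h))
    rcases master_edge h3 hec (Ne.symm hc1ne) hnadj with hA |
      ⟨y, hyi₁, hyc, hady, hncy, hdmB⟩ | ⟨y, hyc, hyi₁, hady, hni₁y, hdmC⟩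
    · have h1 : j₀ ≠ i₁ := fun h => hi₁S (h ▸ hj₀S)
      rcases hA j₀ h1 hj₀c with h | h
      · exact hind i₁ hi₁I j₀ hj₀I (fun hh => h1 hh.symm) h
      · exact hj₀nc h.symm
    · -- shape B for (i₁, c)
      have hyI : y ∉ I := fun hmem => hind i₁ hi₁I y hmem (Ne.symm hyi₁) hady
      by_cases hyS : y ∈ S
      · rcases hSI y hyS hyI with h | h
        · -- y = σ
          subst h
          have ha1 : i₂ ≠ i₁ := Ne.symm h12
          have ha2 : i₂ ≠ y := fun hh => hi₂S (hh ▸ hyS)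
          rcases hdmB i₂ ha1 ha2 (Ne.symm hci₂) with h | h
          · exact hind i₁ hi₁I i₂ hi₂I h12 h
          · exact hnσ2 h
        · -- y = τ
          subst h
          exact hncy hτc.symm
      · have hry : Rch G S i₁ y := rch_adj hi₁S hyS hady
        have h1 : c2 ≠ i₁ := fun h => hci (h ▸ hrchc2)
        have h2 : c2 ≠ y := fun h => hci (rch_trans (h ▸ hrchc2) (rch_symm hry))
        rcases hdmB c2 h1 h2 hc2c with h | h
        · exact hci (rch_symm (rch_trans (rch_adj hi₁S hc2S h) (rch_symm hrchc2)))
        · exact hci (rch_symm (rch_trans (rch_trans hry (rch_adj hyS hc2S h))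
            (rch_symm hrchc2)))
    · -- shape C for (i₁, c)
      by_cases hyi₂ : y = i₂
      · subst hyi₂
        have h1 : j₀ ≠ y := fun h => hi₂S (h ▸ hj₀S)
        have h2 : j₀ ≠ i₁ := fun h => hi₁S (h ▸ hj₀S)
        rcases hdmC j₀ hj₀c h1 h2 with h | h
        · exact hj₀nc h.symm
        · exact hind y hi₂I j₀ hj₀I (fun hh => h1 hh.symm) h
      · have hzc : z ≠ c := fun h => hci (h ▸ rz1)
        by_cases hyS : y ∈ S
        · by_cases hyI : y ∈ I
          · by_cases hj₀y : j₀ = y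
            · exact hj₀nc (hj₀y ▸ hady).symm
            · have h2 : j₀ ≠ i₁ := fun h => hi₁S (h ▸ hj₀S)
              rcases hdmC j₀ hj₀c hj₀y h2 with h | h
              · exact hj₀nc h.symm
              · exact hind y hyI j₀ hj₀I (fun hh => hj₀y hh.symm) h
          · rcases hSI y hyS hyI with h | h
            · -- y = σ
              subst h
              have h1 : z ≠ y := fun hh => hzS (hh ▸ hyS)
              rcases hdmC z hzc h1 hz1 with h | h
              · exact hci (rch_trans (rch_adj hcS hzS h) rz1)
              · exact hnzσ h.symm
            · -- y = τ
              subst h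
              exact hni₁y hadjτ1
        · have h1 : z ≠ y := fun hh => hci (rch_trans (rch_adj hcS hzS (hh ▸ hady)) rz1)
          rcases hdmC z hzc h1 hz1 with h | h
          · exact hci (rch_trans (rch_adj hcS hzS h) rz1)
          · exact hci (rch_trans (rch_trans (rch_adj hcS hyS hady)
              (rch_adj hyS hzS h)) rz1)
  -- analysis of the vertex-criticality at σ
  rcases vc_shapes h3 h4 hvc hScut hcomp hout σ with
    ⟨a, haS, haσ, hnaσ, hdm1⟩ | ⟨a, z, haS, haz, hadjaz, haσ, hzσ, hnaσ, hnzσ, hdm2⟩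
  · -- single : a = τ and τ adjacent to everything except σ : γc ≤ 2
    have haτ : a = τ := by
      by_cases haI : a ∈ I
      · exact ((hnaσ (hJσ a haS haI).symm)).elim
      · rcases hSI a haS haI with h | h
        · exact (haσ h).elim
        · exact h
    have haτ' : τ = a := haτ.symm
    subst haτ'
    refine no2 h3 hadjτ1.symm (fun x hxτ hxi₁ => ?_)
    by_cases hxσ : x = σ
    · subst hxσ; exact Or.inr hadjσ1.symm
    · exact Or.inl (hdm1 x hxτ hxσ)
  · -- pair {a, z} : a = τ
    have haτ : a = τ := by
      by_cases haI : a ∈ I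
      · exact ((hnaσ (hJσ a haS haI).symm)).elim
      · rcases hSI a haS haI with h | h
        · exact (haσ h).elim
        · exact h
    have haτ' : τ = a := haτ.symm
    subst haτ'
    have hzS : z ∉ S := by
      intro hzSmem
      by_cases hzI : z ∈ I
      · exact hnzσ (hJσ z hzSmem hzI).symm
      · rcases hSI z hzSmem hzI with h | h
        · exact hzσ h
        · exact haz h.symm
    have hz1 : z ≠ i₁ := fun h => hnzσ (h ▸ hadjσ1.symm)
    by_cases hz2 : z = i₂
    · -- z = i₂
      rw [hz2] at hadjaz hnzσ hdm2
      by_cases hB : ∀ t, t ∈ S → t ∈ I → G.Adj τ t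
      · -- τ dominates J
        have hcomps2τ : ∀ x, x ∉ S → ¬Rch G S x i₂ → G.Adj τ x := by
          intro x hxS hx2
          have h1 : x ≠ τ := fun h => hxS (h ▸ hτS)
          have h2 : x ≠ i₂ := fun h => hx2 (h ▸ rch_refl hxS)
          have h3' : x ≠ σ := fun h => hxS (h ▸ hσS)
          rcases hdm2 x h1 h2 h3' with h | h
          · exact h
          · exact ((hx2 (rch_adj hxS hi₂S h.symm))).elim
        by_cases h12r : Rch G S i₁ i₂
        · -- same component : use the unified argument with z := i₂
          exact main_pair i₂ hi₂S (fun h => hnσ2 h.symm) (Ne.symm h12) (rch_symm h12r)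
            (fun x hxS hx1 => hcomps2τ x hxS
              (fun h => hx1 (rch_trans h (rch_symm h12r))))
        · -- different components
          rcases vc_shapes h3 h4 hvc hScut hcomp hout τ with
            ⟨a', ha'S, ha'τ, hna'τ, hdm1'⟩ |
            ⟨a', z', ha'S, ha'z', hadj', ha'τ, hz'τ, hna'τ, hnz'τ, hdm2'⟩
          · have ha'σ : a' = σ := by
              by_cases ha'I : a' ∈ I
              · exact ((hna'τ (hB a' ha'S ha'I).symm)).elim
              · rcases hSI a' ha'S ha'I with h | h
                · exact h
                · exact (ha'τ h).elim
            have ha'σ' : σ = a' := ha'σ.symm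
            subst ha'σ'
            have h1 : i₂ ≠ σ := fun h => hi₂S (h ▸ hσS)
            have h2 : i₂ ≠ τ := fun h => hi₂S (h ▸ hτS)
            exact hnσ2 (hdm1' i₂ h1 h2)
          · have ha'σ : a' = σ := by
              by_cases ha'I : a' ∈ I
              · exact ((hna'τ (hB a' ha'S ha'I).symm)).elim
              · rcases hSI a' ha'S ha'I with h | h
                · exact h
                · exact (ha'τ h).elim
            have ha'σ' : σ = a' := ha'σ.symm
            subst ha'σ'
            have hz'S : z' ∉ S := by
              intro hmem
              by_cases hz'I : z' ∈ I
              · exact hnz'τ ((hB z' hmem hz'I).symm)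
              · rcases hSI z' hmem hz'I with h | h
                · exact ha'z' h.symm
                · exact hz'τ h
            have hz'1 : z' ≠ i₁ := fun h => hnz'τ (by rw [h]; exact hadjτ1)
            have hz'2 : z' ≠ i₂ := fun h => hnz'τ (by rw [h]; exact hadjaz.symm)
            have rz'2 : Rch G S z' i₂ := by
              by_contra hcon
              exact hnz'τ (hcomps2τ z' hz'S hcon).symm
            have hC₁σ : ∀ x, x ∉ S → Rch G S x i₁ → G.Adj σ x := by
              intro x hxS hx1
              have h1 : x ≠ σ := fun h => hxS (h ▸ hσS)
              have h2 : x ≠ z' := fun h => h12r (rch_trans (rch_symm hx1) (h ▸ rz'2))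
              have h3' : x ≠ τ := fun h => hxS (h ▸ hτS)
              rcases hdm2' x h1 h2 h3' with h | h
              · exact h
              · exact (h12r (rch_trans (rch_symm (rch_trans (rch_adj hz'S hxS h) hx1))
                  rz'2)).elim
            obtain ⟨c1, hc1S, hadji₁c1, hrchi₁c1, hc1i₁⟩ := rch_nbr hcomp hi₁S
            have hσc1 : G.Adj σ c1 := hC₁σ c1 hc1S (rch_symm hrchi₁c1)
            have hτc1 : G.Adj τ c1 := hcomps2τ c1 hc1S
              (fun h => h12r (rch_trans hrchi₁c1 h))
            obtain ⟨j₁, hj₁S, hj₁c1, hj₁nc1⟩ := lemmaX h3 h4 hvc hScut hcomp hout c1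
            have hj₁I : j₁ ∈ I := by
              by_cases h : j₁ ∈ I
              · exact h
              · rcases hSI j₁ hj₁S h with h' | h'
                · exact (hj₁nc1 (h' ▸ hσc1)).elim
                · exact (hj₁nc1 (h' ▸ hτc1)).elim
            rcases master_edge h3 hec hj₁c1 hj₁nc1 with hA |
              ⟨y, hyj₁, hyc1, hady', hnc1y, hdmB'⟩ |
              ⟨y, hyc1, hyj₁, hady', hnj₁y, hdmC'⟩
            · have h1 : i₂ ≠ j₁ := fun h => hi₂S (h ▸ hj₁S)
              have h2 : i₂ ≠ c1 := fun h => h12r (h ▸ hrchi₁c1)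
              rcases hA i₂ h1 h2 with h | h
              · exact hind j₁ hj₁I i₂ hi₂I (fun hh => h1 hh.symm) h
              · exact h12r (rch_trans hrchi₁c1 (rch_adj hc1S hi₂S h))
            · have hyI : y ∉ I := fun hmem =>
                hind j₁ hj₁I y hmem (Ne.symm hyj₁) hady'
              by_cases hyS : y ∈ S
              · rcases hSI y hyS hyI with h | h
                · subst h; exact hnc1y hσc1.symm
                · subst h; exact hnc1y hτc1.symm
              · have hyi₁adj : G.Adj y i₁ := by
                  have h1 : i₁ ≠ j₁ := fun h => hi₁S (h ▸ hj₁S)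
                  have h2 : i₁ ≠ y := fun h => hyI (h ▸ hi₁I)
                  rcases hdmB' i₁ h1 h2 (Ne.symm hc1i₁) with h | h
                  · exact absurd h (hind j₁ hj₁I i₁ hi₁I (fun hh => h1 hh.symm))
                  · exact h
                have rchy1 : Rch G S y i₁ := rch_adj hyS hi₁S hyi₁adj
                have h1 : i₂ ≠ j₁ := fun h => hi₂S (h ▸ hj₁S)
                have h2 : i₂ ≠ y := fun h =>
                  h12r (rch_symm (h ▸ rchy1))
                have h3' : i₂ ≠ c1 := fun h => h12r (h ▸ hrchi₁c1)
                rcases hdmB' i₂ h1 h2 h3' with h | h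
                · exact hind j₁ hj₁I i₂ hi₂I (fun hh => h1 hh.symm) h
                · exact h12r (rch_trans (rch_symm rchy1) (rch_adj hyS hi₂S h))
            · by_cases hyi₂'' : y = i₂
              · subst hyi₂''
                exact h12r (rch_trans hrchi₁c1 (rch_adj hc1S hi₂S hady'))
              · have h1 : i₂ ≠ c1 := fun h => h12r (h ▸ hrchi₁c1)
                have h2 : i₂ ≠ y := fun h => hyi₂'' h.symm
                have h3' : i₂ ≠ j₁ := fun h => hi₂S (h ▸ hj₁S)
                have hyadj2 : G.Adj y i₂ := by
                  rcases hdmC' i₂ h1 h2 h3' with h | h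
                  · exact (h12r (rch_trans hrchi₁c1 (rch_adj hc1S hi₂S h))).elim
                  · exact h
                by_cases hyS : y ∈ S
                · by_cases hyI : y ∈ I
                  · exact hind y hyI i₂ hi₂I (fun hh => h2 hh.symm) hyadj2
                  · rcases hSI y hyS hyI with h | h
                    · subst h; exact hnσ2 hyadj2
                    · subst h; exact hnj₁y (hB j₁ hj₁S hj₁I).symm
                · exact h12r (rch_trans hrchi₁c1 (rch_trans (rch_adj hc1S hyS hady')
                    (rch_adj hyS hi₂S hyadj2)))
      · -- some s₂ ∈ J not adjacent to τ : contradiction with the pair {τ, i₂}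
        push_neg at hB
        obtain ⟨s₂, hs₂S, hs₂I, hs₂nτ⟩ := hB
        have h1 : s₂ ≠ τ := fun h => hτI (h ▸ hs₂I)
        have h2 : s₂ ≠ i₂ := fun h => hi₂S (h ▸ hs₂S)
        have h3' : s₂ ≠ σ := fun h => hσI (h ▸ hs₂I)
        rcases hdm2 s₂ h1 h2 h3' with h | h
        · exact hs₂nτ h
        · exact hind i₂ hi₂I s₂ hs₂I (fun hh => h2 hh.symm) h
    · -- z ≠ i₂ : use the unified argument
      have hzI : z ∉ I := by
        intro hmem
        rcases hIS z hmem hzS with h | h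
        · exact hz1 h
        · exact hz2 h
      have rz1 : Rch G S z i₁ := by
        have h2 : z ≠ σ := hzσ
        rcases hdomD z hz1 h2 hz2 with h | h
        · exact rch_symm (rch_adj hi₁S hzS h)
        · exact (hnzσ h.symm).elim
      have hcompsτ : ∀ x, x ∉ S → ¬Rch G S x i₁ → G.Adj τ x := by
        intro x hxS hx1
        have h1 : x ≠ τ := fun h => hxS (h ▸ hτS)
        have h2 : x ≠ z := fun h => hx1 (h ▸ rz1)
        have h3' : x ≠ σ := fun h => hxS (h ▸ hσS)
        rcases hdm2 x h1 h2 h3' with h | h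
        · exact h
        · exact (hx1 (rch_trans (rch_symm (rch_adj hzS hxS h)) rz1)).elim
      exact main_pair z hzS hnzσ hz1 rz1 hcompsτ

/-- Case `|I \ S| = 2` is impossible. -/
lemma r2_case
    (h3 : gammaC G = 3)
    (hec : ∀ u v : V, u ≠ v → ¬ G.Adj u v →
      gammaC (G ⊔ SimpleGraph.fromEdgeSet {s(u, v)}) < 3)
    (h4 : 4 ≤ kappa G)
    (hvc : ∀ v : V, gammaC (G.induce {w | w ≠ v}) < 3)
    (hScut : ¬ (G.induce (↑S : Set V)ᶜ).Connected)
    (hcomp : ∀ v : V, v ∉ S → ∃ u : V, u ∉ S ∧ G.Adj u v)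
    {I : Finset V}
    (hind : ∀ a ∈ I, ∀ b ∈ I, a ≠ b → ¬G.Adj a b)
    {σ₁ σ₂ i₁ i₂ : V}
    (hσ₁S : σ₁ ∈ S) (hσ₂S : σ₂ ∈ S) (hσ12 : σ₁ ≠ σ₂) (hσ₁I : σ₁ ∉ I) (hσ₂I : σ₂ ∉ I)
    (hi₁I : i₁ ∈ I) (hi₂I : i₂ ∈ I) (hi₁S : i₁ ∉ S) (hi₂S : i₂ ∉ S) (h12 : i₁ ≠ i₂)
    (hSI : ∀ s ∈ S, s ∉ I → s = σ₁ ∨ s = σ₂)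
    (hIS : ∀ x ∈ I, x ∉ S → x = i₁ ∨ x = i₂)
    (hJne : ∃ j, j ∈ S ∧ j ∈ I) : False := by
  have hout : ∃ x : V, x ∉ S := ⟨i₁, hi₁S⟩
  have process : ∀ iA iB : V, iA ∈ I → iB ∈ I → iA ∉ S → iB ∉ S → iA ≠ iB →
      (∀ x ∈ I, x ∉ S → x = iA ∨ x = iB) →
      ∀ y, y ≠ iA → y ≠ iB → G.Adj iA y → ¬G.Adj iB y →
      (∀ x, x ≠ iA → x ≠ y → x ≠ iB → G.Adj iA x ∨ G.Adj y x) → False := by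
    intro iA iB hAI hBI hAS hBS hAB hISp y hyA hyB hady hnBy hdmP
    have hyI : y ∉ I := fun hmem => hind iA hAI y hmem (Ne.symm hyA) hady
    have hJy : ∀ t, t ∈ S → t ∈ I → G.Adj y t := by
      intro t htS htI
      have h1 : t ≠ iA := fun h => hAS (h ▸ htS)
      have h2 : t ≠ y := fun h => hyI (h ▸ htI)
      have h3' : t ≠ iB := fun h => hBS (h ▸ htS)
      rcases hdmP t h1 h2 h3' with h | h
      · exact absurd h (hind iA hAI t htI (fun hh => h1 hh.symm))
      · exact h
    have hyS : y ∈ S := by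
      by_contra hyS
      have hr : Rch G S y iA := rch_adj hyS hAS hady.symm
      obtain ⟨w, hwS, hnw, hwB⟩ := pick_other hScut hcomp hout y iB hyS
      have hw1 : w ≠ iA := fun h => hnw (h ▸ hr)
      have hw2 : w ≠ y := fun h => hnw (by rw [h]; exact rch_refl hyS)
      rcases hdmP w hw1 hw2 hwB with h | h
      · exact hnw (rch_trans hr (rch_adj hAS hwS h))
      · exact hnw (rch_adj hyS hwS h)
    have hnyB : ¬G.Adj y iB := fun h => hnBy h.symm
    rcases hSI y hyS hyI with h | h
    · subst h
      exact r2_main h3 hec h4 hvc hScut hcomp hind hσ₁S hσ₂S hσ12 hσ₁I hσ₂I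
        hAI hBI hAS hBS hAB
        (fun s hsS hsI => hSI s hsS hsI) hISp hJy hady.symm hnyB hdmP
    · subst h
      exact r2_main h3 hec h4 hvc hScut hcomp hind hσ₂S hσ₁S hσ12.symm hσ₂I hσ₁I
        hAI hBI hAS hBS hAB
        (fun s hsS hsI => (hSI s hsS hsI).symm) hISp hJy hady.symm hnyB hdmP
  have hnadj12 : ¬G.Adj i₁ i₂ := hind i₁ hi₁I i₂ hi₂I h12
  rcases master_edge h3 hec h12 hnadj12 with hA |
    ⟨y, hy1, hy2, hady, hn2y, hdmP⟩ | ⟨y, hy2, hy1, hady, hn1y, hdmP⟩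
  · obtain ⟨j, hjS, hjI⟩ := hJne
    have h1 : j ≠ i₁ := fun h => hi₁S (h ▸ hjS)
    have h2 : j ≠ i₂ := fun h => hi₂S (h ▸ hjS)
    rcases hA j h1 h2 with h | h
    · exact hind i₁ hi₁I j hjI (fun hh => h1 hh.symm) h
    · exact hind i₂ hi₂I j hjI (fun hh => h2 hh.symm) h
  · exact process i₁ i₂ hi₁I hi₂I hi₁S hi₂S h12 hIS y hy1 hy2 hady hn2y hdmP
  · exact process i₂ i₁ hi₂I hi₁I hi₂S hi₁S (Ne.symm h12)
      (fun x hx hxS => (hIS x hx hxS).symm) y hy2 hy1 hady hn1y hdmP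

end
end StmtAux

/-- let `G` be a maximal `3`-`γc`-vertex critical graph with
`α(G) = κ(G) ≥ 4`, let `S` be a minimum cut set, and suppose every component of
`G - S` has more than one vertex (equivalently, every vertex outside `S` has a
neighbour outside `S`).  Then every maximum independent set `I` satisfies
`|I \ S| ≥ 3`. -/
theorem stmt_12 (G : SimpleGraph V) [Fintype V] [DecidableEq V]
    (h : MaximalVertexCritical3 G)
    (hak : alpha G = kappa G) (h4 : 4 ≤ kappa G)
    (S : Finset V) (hScut : ¬ (G.induce (↑S : Set V)ᶜ).Connected)
    (hSmin : S.card = kappa G)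
    (hcomp : ∀ v : V, v ∉ S → ∃ u : V, u ∉ S ∧ G.Adj u v) :
    ∀ I : Finset V, (↑I : Set V).Pairwise (fun u v => ¬ G.Adj u v) →
      I.card = alpha G → 3 ≤ (I \ S).card := by
  intro I hIpair hIcard
  by_contra hlt
  push_neg at hlt
  obtain ⟨⟨h3, hec⟩, -, -, hvc⟩ := h
  have hind : ∀ a ∈ I, ∀ b ∈ I, a ≠ b → ¬G.Adj a b := fun a ha b hb hne =>
    hIpair (Finset.mem_coe.2 ha) (Finset.mem_coe.2 hb) hne
  have hcardIS : I.card = S.card := by rw [hIcard, hak, hSmin]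
  have hk4 : 4 ≤ S.card := by rw [hSmin]; exact h4
  have hIsplit : (I \ S).card + (I ∩ S).card = I.card := Finset.card_sdiff_add_card_inter I S
  have hSsplit : (S \ I).card + (S ∩ I).card = S.card := Finset.card_sdiff_add_card_inter S I
  have hinterc : (I ∩ S).card = (S ∩ I).card := by rw [Finset.inter_comm]
  have hdiffeq : (S \ I).card = (I \ S).card := by omega
  have hJbig : 2 ≤ (I ∩ S).card := by omega
  -- a vertex outside S
  have hVne : Nonempty V := by
    by_contra hemp
    rw [not_nonempty_iff] at hemp
    have h0 : (0 : ℕ) ∈ {k | ∃ T : Finset V, T.card = k ∧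
        (¬ (G.induce (↑T : Set V)ᶜ).Connected ∨ ((↑T : Set V)ᶜ).Subsingleton)} :=
      ⟨∅, by simp, Or.inr (fun x _ y _ => (hemp.false x).elim)⟩
    have := Nat.sInf_le h0
    rw [kappa] at h4
    omega
  have hout : ∃ x : V, x ∉ S := by
    by_contra hall
    push_neg at hall
    obtain ⟨v⟩ := id hVne
    have hn1 : (Fintype.card V - 1 : ℕ) ∈ {k | ∃ T : Finset V, T.card = k ∧
        (¬ (G.induce (↑T : Set V)ᶜ).Connected ∨ ((↑T : Set V)ᶜ).Subsingleton)} := by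
      refine ⟨Finset.univ.erase v, ?_, Or.inr ?_⟩
      · rw [Finset.card_erase_of_mem (Finset.mem_univ v), Finset.card_univ]
      · intro x hx y hy
        simp only [Finset.coe_erase, Set.mem_compl_iff, Set.mem_diff] at hx hy
        have hxv : x = v := by
          by_contra hxv
          exact hx ⟨by simp, by simp [hxv]⟩
        have hyv : y = v := by
          by_contra hyv
          exact hy ⟨by simp, by simp [hyv]⟩
        rw [hxv, hyv]
    have hle := Nat.sInf_le hn1
    rw [kappa] at h4 hSmin
    have hScard : S.card = Fintype.card V := by
      rw [← Finset.card_univ]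
      congr 1
      apply Finset.eq_univ_of_forall hall
    have hVpos : 1 ≤ Fintype.card V := Fintype.card_pos_iff.2 hVne
    omega
  -- case analysis on |I \ S|
  have hcases : (I \ S).card = 0 ∨ (I \ S).card = 1 ∨ (I \ S).card = 2 := by omega
  rcases hcases with hc | hc | hc
  · -- |I \ S| = 0 : I = S
    have hsub : I ⊆ S := by
      rw [← Finset.sdiff_eq_empty_iff_subset]
      exact Finset.card_eq_zero.1 hc
    have hIS : I = S := Finset.eq_of_subset_of_card_le hsub (le_of_eq hcardIS.symm)
    have hSind : ∀ a ∈ S, ∀ b ∈ S, a ≠ b → ¬G.Adj a b := by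
      intro a ha b hb hne
      exact hind a (hIS ▸ ha) b (hIS ▸ hb) hne
    have hcard2 : ∃ s t, s ∈ S ∧ t ∈ S ∧ s ≠ t := by
      obtain ⟨a, ha, b, hb, hab⟩ := Finset.one_lt_card.1 (by omega : 1 < S.card)
      exact ⟨a, b, ha, hb, hab⟩
    exact StmtAux.r0_case h3 h4 hvc hScut hcomp hout hSind hcard2
  · -- |I \ S| = 1
    obtain ⟨i₁, hi₁⟩ := Finset.card_eq_one.1 hc
    obtain ⟨σ, hσ⟩ := Finset.card_eq_one.1 (hdiffeq.trans hc)
    have hi₁I : i₁ ∈ I := (Finset.mem_sdiff.1 (hi₁ ▸ Finset.mem_singleton_self i₁)).1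
    have hi₁S : i₁ ∉ S := (Finset.mem_sdiff.1 (hi₁ ▸ Finset.mem_singleton_self i₁)).2
    have hσS : σ ∈ S := (Finset.mem_sdiff.1 (hσ ▸ Finset.mem_singleton_self σ)).1
    have hσI : σ ∉ I := (Finset.mem_sdiff.1 (hσ ▸ Finset.mem_singleton_self σ)).2
    have hSI : ∀ s ∈ S, s ≠ σ → s ∈ I := by
      intro s hs hne
      by_contra hsI
      have : s ∈ S \ I := Finset.mem_sdiff.2 ⟨hs, hsI⟩
      rw [hσ, Finset.mem_singleton] at this
      exact hne this
    have hJ2 : ∃ j j', (j ∈ S ∧ j ∈ I) ∧ (j' ∈ S ∧ j' ∈ I) ∧ j ≠ j' := by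
      obtain ⟨a, ha, b, hb, hab⟩ := Finset.one_lt_card.1 (by omega : 1 < (I ∩ S).card)
      rw [Finset.mem_inter] at ha hb
      exact ⟨a, b, ⟨ha.2, ha.1⟩, ⟨hb.2, hb.1⟩, hab⟩
    exact StmtAux.r1_case h3 hec h4 hvc hScut hcomp hind hσS hσI hi₁I hi₁S hSI hJ2
  · -- |I \ S| = 2
    obtain ⟨i₁, i₂, h12, hi⟩ := Finset.card_eq_two.1 hc
    obtain ⟨σ₁, σ₂, hσ12, hσ⟩ := Finset.card_eq_two.1 (hdiffeq.trans hc)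
    have hi₁m : i₁ ∈ I \ S := hi ▸ Finset.mem_insert_self i₁ {i₂}
    have hi₂m : i₂ ∈ I \ S := hi ▸ Finset.mem_insert_of_mem (Finset.mem_singleton_self i₂)
    have hσ₁m : σ₁ ∈ S \ I := hσ ▸ Finset.mem_insert_self σ₁ {σ₂}
    have hσ₂m : σ₂ ∈ S \ I := hσ ▸ Finset.mem_insert_of_mem (Finset.mem_singleton_self σ₂)
    rw [Finset.mem_sdiff] at hi₁m hi₂m hσ₁m hσ₂m
    have hSI : ∀ s ∈ S, s ∉ I → s = σ₁ ∨ s = σ₂ := by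
      intro s hs hsI
      have : s ∈ S \ I := Finset.mem_sdiff.2 ⟨hs, hsI⟩
      rw [hσ] at this
      simpa using this
    have hIS : ∀ x ∈ I, x ∉ S → x = i₁ ∨ x = i₂ := by
      intro x hx hxS
      have : x ∈ I \ S := Finset.mem_sdiff.2 ⟨hx, hxS⟩
      rw [hi] at this
      simpa using this
    have hJne : ∃ j, j ∈ S ∧ j ∈ I := by
      obtain ⟨a, ha⟩ := Finset.card_pos.1 (by omega : 0 < (I ∩ S).card)
      rw [Finset.mem_inter] at ha
      exact ⟨a, ha.2, ha.1⟩
    exact StmtAux.r2_case h3 hec h4 hvc hScut hcomp hind hσ₁m.1 hσ₂m.1 hσ12 hσ₁m.2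
      hσ₂m.2 hi₁m.1 hi₂m.1 hi₁m.2 hi₂m.2 h12 hSI hIS hJne
end

section
/- For every s ≥ 3, the graph G₃(s) is a maximal 3-γc-vertex critical graph. -/
open Finset

variable {V : Type*}

/-- The graph `G₃(s)` on the `4s` vertices `(0, i) = rᵢ`, `(1, i) = tᵢ`, `(2, i) = wᵢ`,
`(3, i) = zᵢ`: `R` and `Z` are cliques, `T` and `W` are independent sets, `rᵢ` is
adjacent to every vertex of `T ∪ W` except `tᵢ`, `tᵢ` is adjacent to every vertex of
`W ∪ Z` except `wᵢ`, `wᵢ` is adjacent to every vertex of `Z` except `zᵢ`, and there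
are no edges between `R` and `Z`. -/
def G3 (s : ℕ) : SimpleGraph (Fin 4 × Fin s) :=
  SimpleGraph.fromRel fun a b =>
    (a.1 = 0 ∧ b.1 = 0 ∧ a.2 ≠ b.2) ∨
    (a.1 = 3 ∧ b.1 = 3 ∧ a.2 ≠ b.2) ∨
    (a.1 = 0 ∧ b.1 = 1 ∧ a.2 ≠ b.2) ∨
    (a.1 = 0 ∧ b.1 = 2) ∨
    (a.1 = 1 ∧ b.1 = 2 ∧ a.2 ≠ b.2) ∨
    (a.1 = 1 ∧ b.1 = 3) ∨
    (a.1 = 2 ∧ b.1 = 3 ∧ a.2 ≠ b.2)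

open SimpleGraph

lemma pair_conn {G : SimpleGraph V} {a b : V} (h : G.Adj a b) :
    (G.induce {a,b}).Connected := by
  rw [SimpleGraph.connected_iff]
  refine ⟨fun u v => ?_, ⟨⟨a, by simp⟩⟩⟩
  have key : ∀ w : ({a,b} : Set V), (G.induce {a,b}).Reachable ⟨a, by simp⟩ w := by
    rintro ⟨w, hw⟩
    rcases hw with rfl | rfl
    · exact Reachable.refl _
    · exact Adj.reachable (by simpa [SimpleGraph.comap] using h)
  exact (key u).symm.trans (key v)

lemma triple_conn {G : SimpleGraph V} {a b c : V} (hab : G.Adj a b) (hbc : G.Adj b c) :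
    (G.induce {a,b,c}).Connected := by
  rw [SimpleGraph.connected_iff]
  refine ⟨fun u v => ?_, ⟨⟨a, by simp⟩⟩⟩
  have key : ∀ w : ({a,b,c} : Set V), (G.induce {a,b,c}).Reachable ⟨a, by simp⟩ w := by
    rintro ⟨w, hw⟩
    have hb : (G.induce {a,b,c}).Reachable ⟨a, by simp⟩ ⟨b, by simp⟩ :=
      Adj.reachable (by simpa [SimpleGraph.comap] using hab)
    rcases hw with rfl | rfl | rfl
    · exact Reachable.refl _
    · exact hb
    · exact hb.trans (Adj.reachable (by simpa [SimpleGraph.comap] using hbc))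
  exact (key u).symm.trans (key v)

lemma pair_nonadj {G : SimpleGraph V} {a b : V} (hne : a ≠ b) (hnadj : ¬ G.Adj a b) :
    ¬ (G.induce {a,b}).Connected := by
  intro h
  have hle : (G.induce ({a,b} : Set V)) ≤ ⊥ := by
    rintro ⟨u, hu⟩ ⟨v, hv⟩ huv
    have hG : G.Adj u v := huv
    exfalso
    rcases hu with rfl | rfl <;> rcases hv with rfl | rfl
    · exact G.loopless.irrefl _ hG
    · exact hnadj hG
    · exact hnadj hG.symm
    · exact G.loopless.irrefl _ hG
  have h2 := (h.preconnected ⟨a, by simp⟩ ⟨b, by simp⟩).mono hle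
  rw [SimpleGraph.reachable_bot, Subtype.ext_iff] at h2
  exact hne h2

lemma conn_of_cds [Nonempty V] {G : SimpleGraph V} {D : Set V}
    (h : IsConnDomSet G D) : G.Connected := by
  obtain ⟨hdom, hconn⟩ := h
  rw [SimpleGraph.connected_iff]
  refine ⟨fun u v => ?_, inferInstance⟩
  have reach : ∀ x : V, ∃ d ∈ D, G.Reachable x d := by
    intro x
    rcases hdom x with hx | ⟨d, hd, hadj⟩
    · exact ⟨x, hx, Reachable.refl x⟩
    · exact ⟨d, hd, hadj.symm.reachable⟩
  obtain ⟨du, hdu, hru⟩ := reach u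
  obtain ⟨dv, hdv, hrv⟩ := reach v
  have hdd : G.Reachable du dv :=
    (hconn.preconnected ⟨du, hdu⟩ ⟨dv, hdv⟩).map (SimpleGraph.Embedding.induce D).toHom
  exact hru.trans (hdd.trans hrv.symm)

lemma cds_pair [DecidableEq V] {G : SimpleGraph V} {a b : V} (hab : G.Adj a b)
    (hdom : ∀ v, v = a ∨ v = b ∨ G.Adj a v ∨ G.Adj b v) :
    IsConnDomSet G ↑({a,b} : Finset V) := by
  constructor
  · intro v
    rcases hdom v with rfl | rfl | h | h
    · left; simp
    · left; simp
    · exact Or.inr ⟨a, by simp, h⟩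
    · exact Or.inr ⟨b, by simp, h⟩
  · have hset : (↑({a,b} : Finset V) : Set V) = {a,b} := by simp
    rw [hset]; exact pair_conn hab

lemma cds_triple [DecidableEq V] {G : SimpleGraph V} {a b c : V}
    (hab : G.Adj a b) (hbc : G.Adj b c)
    (hdom : ∀ v, v = a ∨ v = b ∨ v = c ∨ G.Adj a v ∨ G.Adj b v ∨ G.Adj c v) :
    IsConnDomSet G ↑({a,b,c} : Finset V) := by
  constructor
  · intro v
    rcases hdom v with rfl | rfl | rfl | h | h | h
    · left; simp
    · left; simp
    · left; simp
    · exact Or.inr ⟨a, by simp, h⟩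
    · exact Or.inr ⟨b, by simp, h⟩
    · exact Or.inr ⟨c, by simp, h⟩
  · have hset : (↑({a,b,c} : Finset V) : Set V) = {a,b,c} := by simp
    rw [hset]; exact triple_conn hab hbc

lemma undominated {G : SimpleGraph V} {D : Finset V}
    (hdom : ∀ v : V, v ∈ (↑D : Set V) ∨ ∃ u ∈ (↑D : Set V), G.Adj u v)
    (x : V) (hx : x ∉ D) (hadj : ∀ u ∈ D, ¬ G.Adj u x) : False := by
  rcases hdom x with h | ⟨u, hu, h⟩
  · exact hx (by exact_mod_cast h)
  · exact hadj u (by exact_mod_cast hu) h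

lemma no_small (s : ℕ) (hs : 3 ≤ s) (D : Finset (Fin 4 × Fin s))
    (h : IsConnDomSet (G3 s) ↑D) : 3 ≤ D.card := by
  by_contra hlt
  push_neg at hlt
  obtain ⟨hdom, hconn⟩ := h
  have i0 : Fin s := ⟨0, by omega⟩
  have h012 : D.card = 0 ∨ D.card = 1 ∨ D.card = 2 := by omega
  rcases h012 with h0 | h1 | h2
  · rw [Finset.card_eq_zero] at h0
    subst h0
    rcases hdom (1, i0) with hmem | ⟨u, hu, _⟩ <;> simp_all
  · obtain ⟨a, rfl⟩ := Finset.card_eq_one.mp h1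
    obtain ⟨c, i⟩ := a
    fin_cases c
    · exact undominated hdom (3, i0) (by simp [Prod.ext_iff])
        (by intro u hu; simp at hu; subst hu; simp [G3, Prod.ext_iff])
    · exact undominated hdom (0, i) (by simp [Prod.ext_iff])
        (by intro u hu; simp at hu; subst hu; simp [G3, Prod.ext_iff])
    · exact undominated hdom (3, i) (by simp [Prod.ext_iff])
        (by intro u hu; simp at hu; subst hu; simp [G3, Prod.ext_iff])
    · exact undominated hdom (0, i0) (by simp [Prod.ext_iff])
        (by intro u hu; simp at hu; subst hu; simp [G3, Prod.ext_iff])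
  · obtain ⟨a, b, hab, rfl⟩ := Finset.card_eq_two.mp h2
    have hset : (↑({a,b} : Finset (Fin 4 × Fin s)) : Set (Fin 4 × Fin s)) = {a,b} := by simp
    rw [hset] at hconn
    have hadj : (G3 s).Adj a b := by
      by_contra hn
      exact pair_nonadj hab hn hconn
    obtain ⟨c, i⟩ := a
    obtain ⟨d, j⟩ := b
    fin_cases c <;> fin_cases d
    · exact undominated hdom (3, i0) (by simp [Prod.ext_iff])
        (by intro u hu; simp at hu; rcases hu with rfl | rfl <;>
            simp [G3, Prod.ext_iff])
    · simp [G3, Prod.ext_iff] at hadj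
      exact undominated hdom ((1 : Fin 4), i) (by simp [Prod.ext_iff, hadj])
        (by intro u hu; simp at hu; rcases hu with rfl | rfl <;>
            simp [G3, Prod.ext_iff, hadj])
    · exact undominated hdom ((3 : Fin 4), j) (by simp [Prod.ext_iff])
        (by intro u hu; simp at hu; rcases hu with rfl | rfl <;>
            simp [G3, Prod.ext_iff])
    · simp [G3, Prod.ext_iff] at hadj
    · simp [G3, Prod.ext_iff] at hadj
      exact undominated hdom ((1 : Fin 4), j) (by simp [Prod.ext_iff, hadj])
        (by intro u hu; simp at hu; rcases hu with rfl | rfl <;>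
            simp [G3, Prod.ext_iff, hadj])
    · simp [G3, Prod.ext_iff] at hadj
    · simp [G3, Prod.ext_iff] at hadj
      exact undominated hdom ((1 : Fin 4), j) (by simp [Prod.ext_iff, hadj, Ne.symm hadj])
        (by intro u hu; simp at hu; rcases hu with rfl | rfl <;>
            simp [G3, Prod.ext_iff, hadj])
    · exact undominated hdom ((0 : Fin 4), i) (by simp [Prod.ext_iff])
        (by intro u hu; simp at hu; rcases hu with rfl | rfl <;>
            simp [G3, Prod.ext_iff])
    · exact undominated hdom ((3 : Fin 4), i) (by simp [Prod.ext_iff])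
        (by intro u hu; simp at hu; rcases hu with rfl | rfl <;>
            simp [G3, Prod.ext_iff])
    · simp [G3, Prod.ext_iff] at hadj
      exact undominated hdom ((1 : Fin 4), i) (by simp [Prod.ext_iff, hadj, Ne.symm hadj])
        (by intro u hu; simp at hu; rcases hu with rfl | rfl <;>
            simp [G3, Prod.ext_iff, hadj])
    · simp [G3, Prod.ext_iff] at hadj
    · simp [G3, Prod.ext_iff] at hadj
      exact undominated hdom ((2 : Fin 4), j) (by simp [Prod.ext_iff, hadj, Ne.symm hadj])
        (by intro u hu; simp at hu; rcases hu with rfl | rfl <;>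
            simp [G3, Prod.ext_iff, hadj])
    · simp [G3, Prod.ext_iff] at hadj
    · exact undominated hdom ((0 : Fin 4), j) (by simp [Prod.ext_iff])
        (by intro u hu; simp at hu; rcases hu with rfl | rfl <;>
            simp [G3, Prod.ext_iff])
    · simp [G3, Prod.ext_iff] at hadj
      exact undominated hdom ((2 : Fin 4), i) (by simp [Prod.ext_iff, hadj, Ne.symm hadj])
        (by intro u hu; simp at hu; rcases hu with rfl | rfl <;>
            simp [G3, Prod.ext_iff, hadj])
    · exact undominated hdom (0, i0) (by simp [Prod.ext_iff])
        (by intro u hu; simp at hu; rcases hu with rfl | rfl <;>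
            simp [G3, Prod.ext_iff])

lemma edge_cds (s : ℕ) (hs : 3 ≤ s) (u v : Fin 4 × Fin s) (hne : u ≠ v)
    (hnadj : ¬ (G3 s).Adj u v) :
    ∃ D : Finset (Fin 4 × Fin s), D.card = 2 ∧
      IsConnDomSet (G3 s ⊔ SimpleGraph.fromEdgeSet {s(u, v)}) ↑D := by
  have hnew : (G3 s ⊔ SimpleGraph.fromEdgeSet {s(u, v)}).Adj u v := by
    simp [SimpleGraph.sup_adj, SimpleGraph.fromEdgeSet_adj, hne]
  obtain ⟨c, i⟩ := u
  obtain ⟨d, j⟩ := v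
  fin_cases c <;> fin_cases d
  -- (0,0)
  · simp [Prod.ext_iff] at hne
    simp [G3, Prod.ext_iff, hne] at hnadj
  -- (0,1)
  · simp [G3, Prod.ext_iff] at hnadj
    subst hnadj
    refine ⟨{((0 : Fin 4), i), ((1 : Fin 4), i)}, Finset.card_pair (by simp [Prod.ext_iff]),
      cds_pair hnew ?_⟩
    rintro ⟨e, k⟩
    fin_cases e <;>
      simp [G3, SimpleGraph.sup_adj, SimpleGraph.fromEdgeSet_adj, Prod.ext_iff] <;>
      (try simp only [ne_eq, Fin.ext_iff]) <;> omega
  -- (0,2)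
  · simp [G3, Prod.ext_iff] at hnadj
  -- (0,3)
  · refine ⟨{((0 : Fin 4), i), ((3 : Fin 4), j)}, Finset.card_pair (by simp [Prod.ext_iff]),
      cds_pair hnew ?_⟩
    rintro ⟨e, k⟩
    fin_cases e <;>
      simp [G3, SimpleGraph.sup_adj, SimpleGraph.fromEdgeSet_adj, Prod.ext_iff] <;>
      (try simp only [ne_eq, Fin.ext_iff]) <;> omega
  -- (1,0)
  · simp [G3, Prod.ext_iff] at hnadj
    subst hnadj
    refine ⟨{((1 : Fin 4), j), ((0 : Fin 4), j)}, Finset.card_pair (by simp [Prod.ext_iff]),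
      cds_pair hnew ?_⟩
    rintro ⟨e, k⟩
    fin_cases e <;>
      simp [G3, SimpleGraph.sup_adj, SimpleGraph.fromEdgeSet_adj, Prod.ext_iff] <;>
      (try simp only [ne_eq, Fin.ext_iff]) <;> omega
  -- (1,1)
  · have hij : (i : ℕ) ≠ (j : ℕ) := by simpa [Prod.ext_iff, Fin.ext_iff] using hne
    refine ⟨{((0 : Fin 4), i), ((1 : Fin 4), j)}, Finset.card_pair (by simp [Prod.ext_iff]),
      cds_pair (by simp [SimpleGraph.sup_adj, G3, Prod.ext_iff, Fin.ext_iff, -Fin.val_eq_zero_iff] <;> omega) ?_⟩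
    rintro ⟨e, k⟩
    fin_cases e <;>
      simp [G3, SimpleGraph.sup_adj, SimpleGraph.fromEdgeSet_adj, Prod.ext_iff] <;>
      (try simp only [ne_eq, Fin.ext_iff]) <;> omega
  -- (1,2)
  · simp [G3, Prod.ext_iff] at hnadj
    subst hnadj
    refine ⟨{((1 : Fin 4), i), ((2 : Fin 4), i)}, Finset.card_pair (by simp [Prod.ext_iff]),
      cds_pair hnew ?_⟩
    rintro ⟨e, k⟩
    fin_cases e <;>
      simp [G3, SimpleGraph.sup_adj, SimpleGraph.fromEdgeSet_adj, Prod.ext_iff] <;>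
      (try simp only [ne_eq, Fin.ext_iff]) <;> omega
  -- (1,3)
  · simp [G3, Prod.ext_iff] at hnadj
  -- (2,0)
  · simp [G3, Prod.ext_iff] at hnadj
  -- (2,1)
  · simp [G3, Prod.ext_iff] at hnadj
    subst hnadj
    refine ⟨{((2 : Fin 4), j), ((1 : Fin 4), j)}, Finset.card_pair (by simp [Prod.ext_iff]),
      cds_pair hnew ?_⟩
    rintro ⟨e, k⟩
    fin_cases e <;>
      simp [G3, SimpleGraph.sup_adj, SimpleGraph.fromEdgeSet_adj, Prod.ext_iff] <;>
      (try simp only [ne_eq, Fin.ext_iff]) <;> omega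
  -- (2,2)
  · have hij : (i : ℕ) ≠ (j : ℕ) := by simpa [Prod.ext_iff, Fin.ext_iff] using hne
    refine ⟨{((2 : Fin 4), j), ((3 : Fin 4), i)}, Finset.card_pair (by simp [Prod.ext_iff]),
      cds_pair (by simp [SimpleGraph.sup_adj, G3, Prod.ext_iff, Fin.ext_iff, -Fin.val_eq_zero_iff] <;> omega) ?_⟩
    rintro ⟨e, k⟩
    fin_cases e <;>
      simp [G3, SimpleGraph.sup_adj, SimpleGraph.fromEdgeSet_adj, Prod.ext_iff] <;>
      (try simp only [ne_eq, Fin.ext_iff]) <;> omega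
  -- (2,3)
  · simp [G3, Prod.ext_iff] at hnadj
    subst hnadj
    refine ⟨{((2 : Fin 4), i), ((3 : Fin 4), i)}, Finset.card_pair (by simp [Prod.ext_iff]),
      cds_pair hnew ?_⟩
    rintro ⟨e, k⟩
    fin_cases e <;>
      simp [G3, SimpleGraph.sup_adj, SimpleGraph.fromEdgeSet_adj, Prod.ext_iff] <;>
      (try simp only [ne_eq, Fin.ext_iff]) <;> omega
  -- (3,0)
  · refine ⟨{((3 : Fin 4), i), ((0 : Fin 4), j)}, Finset.card_pair (by simp [Prod.ext_iff]),
      cds_pair hnew ?_⟩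
    rintro ⟨e, k⟩
    fin_cases e <;>
      simp [G3, SimpleGraph.sup_adj, SimpleGraph.fromEdgeSet_adj, Prod.ext_iff] <;>
      (try simp only [ne_eq, Fin.ext_iff]) <;> omega
  -- (3,1)
  · simp [G3, Prod.ext_iff] at hnadj
  -- (3,2)
  · simp [G3, Prod.ext_iff] at hnadj
    subst hnadj
    refine ⟨{((3 : Fin 4), j), ((2 : Fin 4), j)}, Finset.card_pair (by simp [Prod.ext_iff]),
      cds_pair hnew ?_⟩
    rintro ⟨e, k⟩
    fin_cases e <;>
      simp [G3, SimpleGraph.sup_adj, SimpleGraph.fromEdgeSet_adj, Prod.ext_iff] <;>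
      (try simp only [ne_eq, Fin.ext_iff]) <;> omega
  -- (3,3)
  · simp [Prod.ext_iff] at hne
    simp [G3, Prod.ext_iff, hne] at hnadj


lemma cds3 (s : ℕ) (hs : 3 ≤ s) :
    ∃ D : Finset (Fin 4 × Fin s), D.card = 3 ∧ IsConnDomSet (G3 s) ↑D := by
  have i0 : Fin s := ⟨0, by omega⟩
  have i1 : Fin s := ⟨1, by omega⟩
  refine ⟨{((0 : Fin 4), (⟨0, by omega⟩ : Fin s)), ((2 : Fin 4), (⟨0, by omega⟩ : Fin s)),
    ((3 : Fin 4), (⟨1, by omega⟩ : Fin s))}, ?_, ?_⟩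
  · rw [Finset.card_insert_of_notMem (by simp [Prod.ext_iff]),
      Finset.card_insert_of_notMem (by simp [Prod.ext_iff]), Finset.card_singleton]
  · refine cds_triple (by simp [G3, Prod.ext_iff]) ?_ ?_
    · simp [G3, Prod.ext_iff, Fin.ext_iff, -Fin.val_eq_zero_iff]
    · rintro ⟨e, k⟩
      fin_cases e <;>
        simp [G3, Prod.ext_iff] <;>
        (try simp only [ne_eq, Fin.ext_iff]) <;> omega

lemma gamma3 (s : ℕ) (hs : 3 ≤ s) : gammaC (G3 s) = 3 := by
  obtain ⟨D, hcard, hD⟩ := cds3 s hs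
  have h3 : 3 ∈ {k | ∃ D : Finset (Fin 4 × Fin s), D.card = k ∧ IsConnDomSet (G3 s) ↑D} :=
    ⟨D, hcard, hD⟩
  refine le_antisymm (Nat.sInf_le h3) (le_csInf ⟨3, h3⟩ ?_)
  rintro k ⟨D', rfl, hD'⟩
  exact no_small s hs D' hD'

lemma vert_cds (s : ℕ) (hs : 3 ≤ s) (v : Fin 4 × Fin s) :
    ∃ D : Finset ↥{w : Fin 4 × Fin s | w ≠ v}, D.card = 2 ∧
      IsConnDomSet ((G3 s).induce {w | w ≠ v}) ↑D := by
  haveI : Nontrivial (Fin s) := Fin.nontrivial_iff_two_le.mpr (by omega)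
  have fcast : ∀ a b : Fin s, a = b ↔ (a : ℕ) = (b : ℕ) := fun _ _ => Fin.ext_iff
  obtain ⟨c, i⟩ := v
  obtain ⟨j, hj⟩ := exists_ne i
  have hj' : (j : ℕ) ≠ (i : ℕ) := by simpa [Fin.ext_iff] using hj
  fin_cases c
  -- v = (0,i) : D = {(1,i),(3,j)}
  · refine ⟨{⟨((1 : Fin 4), i), by simp [Prod.ext_iff]⟩, ⟨((3 : Fin 4), j), by simp [Prod.ext_iff]⟩},
      Finset.card_pair (by simp [Subtype.ext_iff, Prod.ext_iff]),
      cds_pair (by simp [G3, Prod.ext_iff, fcast] <;> omega) ?_⟩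
    rintro ⟨⟨e, k⟩, hx⟩
    fin_cases e <;>
      (try simp [Prod.ext_iff, fcast] at hx) <;>
      simp [G3, Prod.ext_iff, Subtype.ext_iff, fcast] <;> omega
  -- v = (1,i) : D = {(0,i),(1,j)}
  · refine ⟨{⟨((0 : Fin 4), i), by simp [Prod.ext_iff]⟩, ⟨((1 : Fin 4), j), by simp [Prod.ext_iff, hj]⟩},
      Finset.card_pair (by simp [Subtype.ext_iff, Prod.ext_iff]),
      cds_pair (by simp [G3, Prod.ext_iff, fcast] <;> omega) ?_⟩
    rintro ⟨⟨e, k⟩, hx⟩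
    fin_cases e <;>
      (try simp [Prod.ext_iff, fcast] at hx) <;>
      simp [G3, Prod.ext_iff, Subtype.ext_iff, fcast] <;> omega
  -- v = (2,i) : D = {(2,j),(3,i)}
  · refine ⟨{⟨((2 : Fin 4), j), by simp [Prod.ext_iff, hj]⟩, ⟨((3 : Fin 4), i), by simp [Prod.ext_iff]⟩},
      Finset.card_pair (by simp [Subtype.ext_iff, Prod.ext_iff]),
      cds_pair (by simp [G3, Prod.ext_iff, fcast] <;> omega) ?_⟩
    rintro ⟨⟨e, k⟩, hx⟩
    fin_cases e <;>
      (try simp [Prod.ext_iff, fcast] at hx) <;>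
      simp [G3, Prod.ext_iff, Subtype.ext_iff, fcast] <;> omega
  -- v = (3,i) : D = {(0,j),(2,i)}
  · refine ⟨{⟨((0 : Fin 4), j), by simp [Prod.ext_iff]⟩, ⟨((2 : Fin 4), i), by simp [Prod.ext_iff]⟩},
      Finset.card_pair (by simp [Subtype.ext_iff, Prod.ext_iff]),
      cds_pair (by simp [G3, Prod.ext_iff, fcast] <;> omega) ?_⟩
    rintro ⟨⟨e, k⟩, hx⟩
    fin_cases e <;>
      (try simp [Prod.ext_iff, fcast] at hx) <;>
      simp [G3, Prod.ext_iff, Subtype.ext_iff, fcast] <;> omega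





lemma G3_connected (s : ℕ) (hs : 3 ≤ s) : (G3 s).Connected := by
  obtain ⟨D, _, hD⟩ := cds3 s hs
  haveI : Nonempty (Fin 4 × Fin s) := ⟨(0, ⟨0, by omega⟩)⟩
  exact conn_of_cds hD

lemma G3_del_connected (s : ℕ) (hs : 3 ≤ s) (v : Fin 4 × Fin s) :
    ((G3 s).induce {w | w ≠ v}).Connected := by
  obtain ⟨D, hcard, hD⟩ := vert_cds s hs v
  have hD2 : D.Nonempty := Finset.card_pos.mp (by omega)
  obtain ⟨a, _⟩ := hD2
  haveI : Nonempty ↥{w : Fin 4 × Fin s | w ≠ v} := ⟨a⟩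
  exact conn_of_cds hD

lemma kappa2 (s : ℕ) (hs : 3 ≤ s) : 2 ≤ kappa (G3 s) := by
  classical
  have i0 : Fin s := ⟨0, by omega⟩
  set T := {k | ∃ S : Finset (Fin 4 × Fin s), S.card = k ∧
    (¬ ((G3 s).induce (↑S : Set (Fin 4 × Fin s))ᶜ).Connected ∨
      ((↑S : Set (Fin 4 × Fin s))ᶜ).Subsingleton)} with hTdef
  have hkappa : kappa (G3 s) = sInf T := rfl
  set t0 : Fin 4 × Fin s := (1, ⟨0, by omega⟩) with ht0
  set t1 : Fin 4 × Fin s := (1, ⟨1, by omega⟩) with ht1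
  set S0 : Finset (Fin 4 × Fin s) := ({t0, t1} : Finset (Fin 4 × Fin s))ᶜ with hS0def
  have hS0 : (↑S0 : Set (Fin 4 × Fin s))ᶜ = {t0, t1} := by
    ext x
    simp [hS0def]
    tauto
  have hW : S0.card ∈ T := by
    refine ⟨S0, rfl, Or.inl ?_⟩
    rw [hS0]
    exact pair_nonadj (by simp [ht0, ht1, Prod.ext_iff, Fin.ext_iff])
      (by simp [G3, ht0, ht1, Prod.ext_iff])
  have hne : T.Nonempty := ⟨_, hW⟩
  have hmem := Nat.sInf_mem hne
  by_contra hlt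
  push_neg at hlt
  rw [hkappa] at hlt
  obtain ⟨S, hScard, hbad⟩ := hmem
  have h01 : S.card = 0 ∨ S.card = 1 := by omega
  rcases h01 with h0 | h1
  · rw [Finset.card_eq_zero] at h0
    subst h0
    have huniv : (↑(∅ : Finset (Fin 4 × Fin s)) : Set (Fin 4 × Fin s))ᶜ = Set.univ := by simp
    rw [huniv] at hbad
    rcases hbad with hnc | hss
    · exact hnc ((SimpleGraph.induceUnivIso (G3 s)).connected_iff.mpr (G3_connected s hs))
    · have := hss (Set.mem_univ ((0 : Fin 4), (⟨0, by omega⟩ : Fin s)))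
        (Set.mem_univ ((1 : Fin 4), (⟨0, by omega⟩ : Fin s)))
      simp [Prod.ext_iff] at this
  · obtain ⟨v, rfl⟩ := Finset.card_eq_one.mp h1
    have hsetv : (↑({v} : Finset (Fin 4 × Fin s)) : Set (Fin 4 × Fin s))ᶜ = {w | w ≠ v} := by
      ext x; simp
    rw [hsetv] at hbad
    rcases hbad with hnc | hss
    · exact hnc (G3_del_connected s hs v)
    · by_cases h0 : v = ((0 : Fin 4), (⟨0, by omega⟩ : Fin s))
      · have := hss (show ((1 : Fin 4), (⟨0, by omega⟩ : Fin s)) ≠ v by simp [h0, Prod.ext_iff])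
          (show ((2 : Fin 4), (⟨0, by omega⟩ : Fin s)) ≠ v by simp [h0, Prod.ext_iff])
        simp [Prod.ext_iff] at this
      · by_cases h1' : v = ((1 : Fin 4), (⟨0, by omega⟩ : Fin s))
        · have := hss (show ((0 : Fin 4), (⟨0, by omega⟩ : Fin s)) ≠ v by simp [h1', Prod.ext_iff])
            (show ((2 : Fin 4), (⟨0, by omega⟩ : Fin s)) ≠ v by simp [h1', Prod.ext_iff])
          simp [Prod.ext_iff] at this
        · have := hss (show ((0 : Fin 4), (⟨0, by omega⟩ : Fin s)) ≠ v from fun h => h0 h.symm)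
            (show ((1 : Fin 4), (⟨0, by omega⟩ : Fin s)) ≠ v from fun h => h1' h.symm)
          simp [Prod.ext_iff] at this

/-- for every `s ≥ 3`, the graph `G₃(s)` is a maximal
`3`-`γc`-vertex critical graph. -/
theorem stmt_15 (s : ℕ) (hs : 3 ≤ s) : MaximalVertexCritical3 (G3 s) := by
  refine ⟨⟨gamma3 s hs, fun u v hne hnadj => ?_⟩, kappa2 s hs, gamma3 s hs, fun v => ?_⟩
  · obtain ⟨D, hcard, hD⟩ := edge_cds s hs u v hne hnadj
    have h2 : gammaC (G3 s ⊔ SimpleGraph.fromEdgeSet {s(u, v)}) ≤ 2 :=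
      Nat.sInf_le ⟨D, hcard, hD⟩
    omega
  · obtain ⟨D, hcard, hD⟩ := vert_cds s hs v
    have h2 : gammaC ((G3 s).induce {w | w ≠ v}) ≤ 2 := Nat.sInf_le ⟨D, hcard, hD⟩
    omega
end

section
/- For every s ≥ 3, the graph G₃(s) is regular of degree 3s − 2, has independence number α(G₃(s)) = s, and has vertex connectivity κ(G₃(s)) = 2s; in particular α(G₃(s)) < κ(G₃(s)) < δ(G₃(s)). -/
open Finset

variable {V : Type*}

instance (s : ℕ) : DecidableRel (G3 s).Adj := fun a b =>
  decidable_of_iff _ (SimpleGraph.fromRel_adj _ a b).symm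

section
variable {s : ℕ} {i j : Fin s}
@[simp] lemma adj00 : (G3 s).Adj (0, i) (0, j) ↔ i ≠ j := by
  simp [G3, SimpleGraph.fromRel_adj, Prod.ext_iff]; tauto
@[simp] lemma adj01 : (G3 s).Adj (0, i) (1, j) ↔ i ≠ j := by
  simp [G3, SimpleGraph.fromRel_adj, Prod.ext_iff]
@[simp] lemma adj02 : (G3 s).Adj (0, i) (2, j) := by
  simp [G3, SimpleGraph.fromRel_adj, Prod.ext_iff]
@[simp] lemma adj03 : ¬ (G3 s).Adj (0, i) (3, j) := by
  simp [G3, SimpleGraph.fromRel_adj, Prod.ext_iff]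
@[simp] lemma adj11 : ¬ (G3 s).Adj (1, i) (1, j) := by
  simp [G3, SimpleGraph.fromRel_adj, Prod.ext_iff]
@[simp] lemma adj12 : (G3 s).Adj (1, i) (2, j) ↔ i ≠ j := by
  simp [G3, SimpleGraph.fromRel_adj, Prod.ext_iff]
@[simp] lemma adj13 : (G3 s).Adj (1, i) (3, j) := by
  simp [G3, SimpleGraph.fromRel_adj, Prod.ext_iff]
@[simp] lemma adj22 : ¬ (G3 s).Adj (2, i) (2, j) := by
  simp [G3, SimpleGraph.fromRel_adj, Prod.ext_iff]
@[simp] lemma adj23 : (G3 s).Adj (2, i) (3, j) ↔ i ≠ j := by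
  simp [G3, SimpleGraph.fromRel_adj, Prod.ext_iff]
@[simp] lemma adj33 : (G3 s).Adj (3, i) (3, j) ↔ i ≠ j := by
  simp [G3, SimpleGraph.fromRel_adj, Prod.ext_iff]; tauto
end

lemma fiber_card {s : ℕ} (p : Fin 4 × Fin s → Prop) [DecidablePred p] :
    (univ.filter p).card = ∑ k : Fin 4, (univ.filter fun j => p (k, j)).card := by
  rw [Finset.card_eq_sum_card_fiberwise (f := Prod.fst) (t := univ) (fun x _ => mem_univ _)]
  refine Finset.sum_congr rfl fun k _ => ?_
  refine Finset.card_bij' (fun x _ => x.2) (fun j _ => (k, j)) ?_ ?_ ?_ ?_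
  · rintro ⟨a, b⟩ hx
    simp only [Finset.mem_filter, Finset.mem_univ, true_and] at hx ⊢
    rw [← hx.2]; exact hx.1
  · intro j hj
    simp only [Finset.mem_filter, Finset.mem_univ, true_and] at hj ⊢
    simp [hj]
  · rintro ⟨a, b⟩ hx
    simp only [Finset.mem_filter, Finset.mem_univ, true_and] at hx
    simp [hx.2]
  · intro j hj; rfl

lemma filter_ne_card {s : ℕ} (i : Fin s) : (univ.filter fun j : Fin s => i ≠ j).card = s - 1 := by
  have : (univ.filter fun j : Fin s => i ≠ j) = univ.erase i := by
    ext j; simp [ne_comm, eq_comm]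
  rw [this, Finset.card_erase_of_mem (mem_univ i), Finset.card_univ, Fintype.card_fin]


section
variable {s : ℕ} {i j : Fin s}
@[simp] lemma adj10 : (G3 s).Adj (1, i) (0, j) ↔ i ≠ j := by
  rw [SimpleGraph.adj_comm, adj01, ne_comm]
@[simp] lemma adj20 : (G3 s).Adj (2, i) (0, j) := by
  rw [SimpleGraph.adj_comm]; exact adj02
@[simp] lemma adj30 : ¬ (G3 s).Adj (3, i) (0, j) := by
  rw [SimpleGraph.adj_comm]; exact adj03
@[simp] lemma adj21 : (G3 s).Adj (2, i) (1, j) ↔ i ≠ j := by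
  rw [SimpleGraph.adj_comm, adj12, ne_comm]
@[simp] lemma adj31 : (G3 s).Adj (3, i) (1, j) := by
  rw [SimpleGraph.adj_comm]; exact adj13
@[simp] lemma adj32 : (G3 s).Adj (3, i) (2, j) ↔ i ≠ j := by
  rw [SimpleGraph.adj_comm, adj23, ne_comm]
end


lemma fin4 (k : Fin 4) : k = 0 ∨ k = 1 ∨ k = 2 ∨ k = 3 := by fin_cases k <;> simp


lemma class_invar {s : ℕ} {x y : Fin 4 × Fin s} (h : (G3 s).Adj x y)
    (hx : x.1 = 0 ∨ x.1 = 3) (hy : y.1 = 0 ∨ y.1 = 3) : x.1 = y.1 := by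
  obtain ⟨a, i⟩ := x; obtain ⟨b, j⟩ := y
  dsimp at hx hy ⊢
  rcases hx with rfl | rfl <;> rcases hy with rfl | rfl <;> simp_all

lemma not_conn {s : ℕ} (hs : 3 ≤ s) :
    ¬ ((G3 s).induce (↑(({1, 2} : Finset (Fin 4)) ×ˢ (univ : Finset (Fin s))) : Set (Fin 4 × Fin s))ᶜ).Connected := by
  intro h
  set C := (↑(({1, 2} : Finset (Fin 4)) ×ˢ (univ : Finset (Fin s))) : Set (Fin 4 × Fin s))ᶜ with hC
  have hmem : ∀ x : Fin 4 × Fin s, x ∈ C ↔ (x.1 = 0 ∨ x.1 = 3) := by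
    intro ⟨k, i⟩
    simp only [hC, Set.mem_compl_iff, Finset.coe_product, Set.mem_prod, Finset.mem_coe,
      Finset.mem_insert, Finset.mem_singleton, Finset.mem_univ, and_true]
    rcases fin4 k with rfl | rfl | rfl | rfl <;> simp
  have hz : s ≠ 0 := by omega
  have h0 : ((0 : Fin 4), (⟨0, by omega⟩ : Fin s)) ∈ C := by rw [hmem]; left; rfl
  have h3 : ((3 : Fin 4), (⟨0, by omega⟩ : Fin s)) ∈ C := by rw [hmem]; right; rfl
  have hkey : ∀ u v : ↥C, ((G3 s).induce C).Reachable u v → (u : Fin 4 × Fin s).1 = (v : Fin 4 × Fin s).1 := by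
    intro u v ⟨w⟩
    induction w with
    | nil => rfl
    | cons hadj p ih =>
      rename_i a b c
      have hab : (G3 s).Adj a.1 b.1 := hadj
      have := class_invar hab ((hmem _).1 a.2) ((hmem _).1 b.2)
      rw [this]; exact ih
  have := hkey ⟨_, h0⟩ ⟨_, h3⟩ (h.preconnected _ _)
  simp at this


lemma conn_del {s : ℕ} (hs : 3 ≤ s) (S : Finset (Fin 4 × Fin s)) (hcard : S.card < 2 * s) :
    ((G3 s).induce (↑S : Set (Fin 4 × Fin s))ᶜ).Connected := by
  classical
  set C : Set (Fin 4 × Fin s) := (↑S : Set (Fin 4 × Fin s))ᶜ with hCdef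
  have memC : ∀ x : Fin 4 × Fin s, x ∈ C ↔ x ∉ S := by intro x; simp [hCdef]
  set rem : Fin 4 → Finset (Fin s) := fun k => univ.filter fun j => ((k, j) : Fin 4 × Fin s) ∉ S with hremdef
  have memrem : ∀ (k : Fin 4) (j : Fin s), j ∈ rem k ↔ ((k, j) : Fin 4 × Fin s) ∈ C := by
    intro k j; simp [hremdef, memC]
  have hle : ∀ k, (rem k).card ≤ s := by
    intro k
    calc (rem k).card ≤ (univ : Finset (Fin s)).card := Finset.card_filter_le _ _
    _ = s := by simp
  have hsum : 2 * s + 1 ≤ (rem 0).card + (rem 1).card + (rem 2).card + (rem 3).card := by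
    have h1 : (univ.filter fun x : Fin 4 × Fin s => x ∉ S).card = ∑ k : Fin 4, (rem k).card :=
      fiber_card _
    have h2 : (univ.filter fun x : Fin 4 × Fin s => x ∉ S) = univ \ S := by
      ext x; simp
    have h4 : (univ : Finset (Fin 4 × Fin s)).card = 4 * s := by
      simp [Finset.card_univ]
    have h5 := Finset.card_sdiff_of_subset (Finset.subset_univ S)
    have h6 := Finset.card_le_univ S
    rw [Fin.sum_univ_four, h2, h5, h4] at h1
    omega
  set G' := (G3 s).induce C with hG'
  have step : ∀ {x y : Fin 4 × Fin s} (hx : x ∈ C) (hy : y ∈ C), (G3 s).Adj x y →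
      G'.Reachable ⟨x, hx⟩ ⟨y, hy⟩ := by
    intro x y hx hy h
    exact SimpleGraph.Adj.reachable (show G'.Adj ⟨x, hx⟩ ⟨y, hy⟩ from h)
  suffices h : ∃ hub : ↥C, ∀ v : ↥C, G'.Reachable v hub by
    obtain ⟨hub, H⟩ := h
    rw [SimpleGraph.connected_iff]
    exact ⟨fun u v => (H u).trans (H v).symm, ⟨hub⟩⟩
  by_cases hR : (rem 0).Nonempty
  · obtain ⟨p, hp⟩ := hR
    have hpC : ((0 : Fin 4), p) ∈ C := (memrem _ _).1 hp
    have reach0 : ∀ (m : Fin s) (hm : ((0 : Fin 4), m) ∈ C),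
        G'.Reachable ⟨(0, m), hm⟩ ⟨(0, p), hpC⟩ := by
      intro m hm
      by_cases hmp : m = p
      · subst hmp; rfl
      · exact step hm hpC (adj00.2 hmp)
    have reach2 : ∀ (m : Fin s) (hm : ((2 : Fin 4), m) ∈ C),
        G'.Reachable ⟨(2, m), hm⟩ ⟨(0, p), hpC⟩ := fun m hm => step hm hpC adj20
    by_cases hZ : (rem 3).Nonempty
    · -- Case A
      obtain ⟨q, hq⟩ := hZ
      have hqC : ((3 : Fin 4), q) ∈ C := (memrem _ _).1 hq
      have reach3 : ∀ (m : Fin s) (hm : ((3 : Fin 4), m) ∈ C),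
          G'.Reachable ⟨(3, m), hm⟩ ⟨(3, q), hqC⟩ := by
        intro m hm
        by_cases hmq : m = q
        · subst hmq; rfl
        · exact step hm hqC (adj33.2 hmq)
      have reach1 : ∀ (m : Fin s) (hm : ((1 : Fin 4), m) ∈ C),
          G'.Reachable ⟨(1, m), hm⟩ ⟨(3, q), hqC⟩ := fun m hm => step hm hqC adj13
      -- bridge
      have hbr : ∃ (k l : Fin 4) (a b : Fin s) (ha : ((k, a) : Fin 4 × Fin s) ∈ C)
          (hb : ((l, b) : Fin 4 × Fin s) ∈ C), (G3 s).Adj (k, a) (l, b) ∧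
          (k = 0 ∨ k = 2) ∧ (l = 1 ∨ l = 3) := by
        have hTW : (rem 1).Nonempty ∨ (rem 2).Nonempty := by
          by_contra hcon
          push_neg at hcon
          obtain ⟨e1, e2⟩ := hcon
          have := hle 0; have := hle 3
          rw [e1, e2] at hsum
          simp at hsum
          omega
        rcases hTW with ⟨m, hm⟩ | ⟨m, hm⟩
        · -- t_m remains
          by_cases h1 : ∃ j ∈ rem 0, j ≠ m
          · obtain ⟨j, hj, hjm⟩ := h1
            exact ⟨0, 1, j, m, (memrem _ _).1 hj, (memrem _ _).1 hm, adj01.2 hjm,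
              Or.inl rfl, Or.inl rfl⟩
          · push_neg at h1
            by_cases h2 : ∃ j ∈ rem 2, j ≠ m
            · obtain ⟨j, hj, hjm⟩ := h2
              exact ⟨2, 1, j, m, (memrem _ _).1 hj, (memrem _ _).1 hm, adj21.2 hjm,
                Or.inr rfl, Or.inl rfl⟩
            · push_neg at h2
              have hr0 : (rem 0).card ≤ 1 :=
                Finset.card_le_one.2 fun a ha b hb => (h1 a ha).trans (h1 b hb).symm
              have hr2 : (rem 2).card ≤ 1 :=
                Finset.card_le_one.2 fun a ha b hb => (h2 a ha).trans (h2 b hb).symm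
              have h1c : 2 ≤ (rem 1).card := by have := hle 3; omega
              obtain ⟨j, hj, hjm⟩ :=
                Finset.exists_mem_ne (show 1 < (rem 1).card by omega) m
              have hpm : p = m := h1 p hp
              exact ⟨0, 1, m, j, hpm ▸ hpC, (memrem _ _).1 hj, adj01.2 (Ne.symm hjm),
                Or.inl rfl, Or.inl rfl⟩
        · -- w_m remains
          by_cases h1 : ∃ j ∈ rem 3, j ≠ m
          · obtain ⟨j, hj, hjm⟩ := h1
            exact ⟨2, 3, m, j, (memrem _ _).1 hm, (memrem _ _).1 hj, adj23.2 (Ne.symm hjm),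
              Or.inr rfl, Or.inr rfl⟩
          · push_neg at h1
            by_cases h2 : ∃ j ∈ rem 1, j ≠ m
            · obtain ⟨j, hj, hjm⟩ := h2
              exact ⟨2, 1, m, j, (memrem _ _).1 hm, (memrem _ _).1 hj, adj21.2 (Ne.symm hjm),
                Or.inr rfl, Or.inl rfl⟩
            · push_neg at h2
              have hr3 : (rem 3).card ≤ 1 :=
                Finset.card_le_one.2 fun a ha b hb => (h1 a ha).trans (h1 b hb).symm
              have hr1 : (rem 1).card ≤ 1 :=
                Finset.card_le_one.2 fun a ha b hb => (h2 a ha).trans (h2 b hb).symm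
              have h2c : 2 ≤ (rem 2).card := by have := hle 0; omega
              obtain ⟨j, hj, hjm⟩ :=
                Finset.exists_mem_ne (show 1 < (rem 2).card by omega) m
              have hqm : q = m := h1 q hq
              exact ⟨2, 3, j, m, (memrem _ _).1 hj, hqm ▸ hqC, adj23.2 hjm,
                Or.inr rfl, Or.inr rfl⟩
      obtain ⟨k, l, a, b, ha, hb, hadj, hk, hl⟩ := hbr
      have ru : G'.Reachable ⟨(k, a), ha⟩ ⟨(0, p), hpC⟩ := by
        rcases hk with rfl | rfl
        · exact reach0 a ha
        · exact reach2 a ha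
      have rv : G'.Reachable ⟨(l, b), hb⟩ ⟨(3, q), hqC⟩ := by
        rcases hl with rfl | rfl
        · exact reach1 b hb
        · exact reach3 b hb
      have hbridge : G'.Reachable ⟨(0, p), hpC⟩ ⟨(3, q), hqC⟩ :=
        ru.symm.trans ((step ha hb hadj).trans rv)
      refine ⟨⟨(0, p), hpC⟩, ?_⟩
      rintro ⟨⟨k, m⟩, hv⟩
      rcases fin4 k with rfl | rfl | rfl | rfl
      · exact reach0 m hv
      · exact (reach1 m hv).trans hbridge.symm
      · exact reach2 m hv
      · exact (reach3 m hv).trans hbridge.symm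
    · -- Case B : no z remains
      rw [Finset.not_nonempty_iff_eq_empty] at hZ
      refine ⟨⟨(0, p), hpC⟩, ?_⟩
      rintro ⟨⟨k, m⟩, hv⟩
      rcases fin4 k with rfl | rfl | rfl | rfl
      · exact reach0 m hv
      · have h02 : 2 ≤ (rem 0).card ∨ 2 ≤ (rem 2).card := by
          have := hle 1; rw [hZ] at hsum; simp at hsum; omega
        rcases h02 with h2c | h2c
        · obtain ⟨j, hj, hjm⟩ :=
            Finset.exists_mem_ne (show 1 < (rem 0).card by omega) m
          exact (step hv ((memrem _ _).1 hj) (adj10.2 (Ne.symm hjm))).trans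
            (reach0 j ((memrem _ _).1 hj))
        · obtain ⟨j, hj, hjm⟩ :=
            Finset.exists_mem_ne (show 1 < (rem 2).card by omega) m
          exact (step hv ((memrem _ _).1 hj) (adj12.2 (Ne.symm hjm))).trans
            (reach2 j ((memrem _ _).1 hj))
      · exact reach2 m hv
      · exact absurd ((memrem 3 m).2 hv) (by rw [hZ]; simp)
  · -- Case C : no r remains
    rw [Finset.not_nonempty_iff_eq_empty] at hR
    have hZ : (rem 3).Nonempty := by
      rw [← Finset.card_pos]
      have := hle 1; have := hle 2; rw [hR] at hsum; simp at hsum; omega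
    obtain ⟨q, hq⟩ := hZ
    have hqC : ((3 : Fin 4), q) ∈ C := (memrem _ _).1 hq
    have reach3 : ∀ (m : Fin s) (hm : ((3 : Fin 4), m) ∈ C),
        G'.Reachable ⟨(3, m), hm⟩ ⟨(3, q), hqC⟩ := by
      intro m hm
      by_cases hmq : m = q
      · subst hmq; rfl
      · exact step hm hqC (adj33.2 hmq)
    have reach1 : ∀ (m : Fin s) (hm : ((1 : Fin 4), m) ∈ C),
        G'.Reachable ⟨(1, m), hm⟩ ⟨(3, q), hqC⟩ := fun m hm => step hm hqC adj13
    refine ⟨⟨(3, q), hqC⟩, ?_⟩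
    rintro ⟨⟨k, m⟩, hv⟩
    rcases fin4 k with rfl | rfl | rfl | rfl
    · exact absurd ((memrem 0 m).2 hv) (by rw [hR]; simp)
    · exact reach1 m hv
    · have h13 : 2 ≤ (rem 1).card ∨ 2 ≤ (rem 3).card := by
        have := hle 2; rw [hR] at hsum; simp at hsum; omega
      rcases h13 with h2c | h2c
      · obtain ⟨j, hj, hjm⟩ :=
          Finset.exists_mem_ne (show 1 < (rem 1).card by omega) m
        exact (step hv ((memrem _ _).1 hj) (adj21.2 (Ne.symm hjm))).trans
          (reach1 j ((memrem _ _).1 hj))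
      · obtain ⟨j, hj, hjm⟩ :=
          Finset.exists_mem_ne (show 1 < (rem 3).card by omega) m
        exact (step hv ((memrem _ _).1 hj) (adj23.2 (Ne.symm hjm))).trans
          (reach3 j ((memrem _ _).1 hj))
    · exact reach3 m hv


lemma indep_le {s : ℕ} (hs : 3 ≤ s) (I : Finset (Fin 4 × Fin s))
    (hI : (↑I : Set (Fin 4 × Fin s)).Pairwise fun u v => ¬ (G3 s).Adj u v) : I.card ≤ s := by
  classical
  have hnadj : ∀ u ∈ I, ∀ v ∈ I, (G3 s).Adj u v → False := by
    intro u hu v hv h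
    exact hI (Finset.mem_coe.2 hu) (Finset.mem_coe.2 hv) h.ne h
  by_cases hA : 2 ≤ (I.filter fun x => x.1 = 1).card
  · obtain ⟨⟨ka, a⟩, ha, ⟨kb, b⟩, hb, hab⟩ :=
      Finset.one_lt_card.1 (show 1 < (I.filter fun x => x.1 = 1).card by omega)
    simp only [Finset.mem_filter] at ha hb
    obtain ⟨ha, rfl⟩ := ha
    obtain ⟨hb, rfl⟩ := hb
    have hab' : a ≠ b := fun h => hab (by rw [h])
    have hIsub : I ⊆ ({1} : Finset (Fin 4)) ×ˢ (univ : Finset (Fin s)) := by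
      rintro ⟨k, m⟩ hx
      simp only [Finset.mem_product, Finset.mem_singleton, Finset.mem_univ, and_true]
      rcases fin4 k with rfl | rfl | rfl | rfl
      · have e1 : m = a := by by_contra hne; exact hnadj _ hx _ ha (adj01.2 hne)
        have e2 : m = b := by by_contra hne; exact hnadj _ hx _ hb (adj01.2 hne)
        exact absurd (e1.symm.trans e2) hab'
      · rfl
      · have e1 : m = a := by by_contra hne; exact hnadj _ hx _ ha (adj21.2 hne)
        have e2 : m = b := by by_contra hne; exact hnadj _ hx _ hb (adj21.2 hne)
        exact absurd (e1.symm.trans e2) hab'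
      · exact (hnadj _ hx _ ha adj31).elim
    calc I.card ≤ _ := Finset.card_le_card hIsub
      _ = s := by simp
  · by_cases hB : 2 ≤ (I.filter fun x => x.1 = 2).card
    · obtain ⟨⟨ka, a⟩, ha, ⟨kb, b⟩, hb, hab⟩ :=
        Finset.one_lt_card.1 (show 1 < (I.filter fun x => x.1 = 2).card by omega)
      simp only [Finset.mem_filter] at ha hb
      obtain ⟨ha, rfl⟩ := ha
      obtain ⟨hb, rfl⟩ := hb
      have hab' : a ≠ b := fun h => hab (by rw [h])
      have hIsub : I ⊆ ({2} : Finset (Fin 4)) ×ˢ (univ : Finset (Fin s)) := by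
        rintro ⟨k, m⟩ hx
        simp only [Finset.mem_product, Finset.mem_singleton, Finset.mem_univ, and_true]
        rcases fin4 k with rfl | rfl | rfl | rfl
        · exact (hnadj _ hx _ ha adj02).elim
        · have e1 : m = a := by by_contra hne; exact hnadj _ hx _ ha (adj12.2 hne)
          have e2 : m = b := by by_contra hne; exact hnadj _ hx _ hb (adj12.2 hne)
          exact absurd (e1.symm.trans e2) hab'
        · rfl
        · have e1 : m = a := by by_contra hne; exact hnadj _ hx _ ha (adj32.2 hne)
          have e2 : m = b := by by_contra hne; exact hnadj _ hx _ hb (adj32.2 hne)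
          exact absurd (e1.symm.trans e2) hab'
      calc I.card ≤ _ := Finset.card_le_card hIsub
        _ = s := by simp
    · have h0 : (I.filter fun x => x.1 = 0).card ≤ 1 := by
        rw [Finset.card_le_one]
        rintro ⟨ka, a⟩ ha ⟨kb, b⟩ hb
        simp only [Finset.mem_filter] at ha hb
        obtain ⟨ha, rfl⟩ := ha
        obtain ⟨hb, rfl⟩ := hb
        by_contra hne
        exact hnadj _ ha _ hb (adj00.2 fun h => hne (by rw [h]))
      have h3 : (I.filter fun x => x.1 = 3).card ≤ 1 := by
        rw [Finset.card_le_one]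
        rintro ⟨ka, a⟩ ha ⟨kb, b⟩ hb
        simp only [Finset.mem_filter] at ha hb
        obtain ⟨ha, rfl⟩ := ha
        obtain ⟨hb, rfl⟩ := hb
        by_contra hne
        exact hnadj _ ha _ hb (adj33.2 fun h => hne (by rw [h]))
      have h02 : (I.filter fun x => x.1 = 0) = ∅ ∨ (I.filter fun x => x.1 = 2) = ∅ := by
        by_contra hcon
        push_neg at hcon
        obtain ⟨h1, h2⟩ := hcon
        obtain ⟨⟨ka, a⟩, ha⟩ := h1
        obtain ⟨⟨kb, b⟩, hb⟩ := h2
        simp only [Finset.mem_filter] at ha hb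
        obtain ⟨ha, rfl⟩ := ha
        obtain ⟨hb, rfl⟩ := hb
        exact hnadj _ ha _ hb adj02
      have hdec : I.card = ∑ k : Fin 4, (I.filter fun x => x.1 = k).card :=
        Finset.card_eq_sum_card_fiberwise (fun x _ => mem_univ _)
      rw [Fin.sum_univ_four] at hdec
      rcases h02 with he | he <;> rw [he] at hdec <;> simp at hdec <;> omega


lemma ncard_nb {s : ℕ} (hs : 1 ≤ s) (v : Fin 4 × Fin s) :
    ((G3 s).neighborSet v).ncard = 3 * s - 2 := by
  obtain ⟨k, i⟩ := v
  have h1 : ((G3 s).neighborSet (k, i)).ncard = (univ.filter ((G3 s).Adj (k, i))).card := by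
    rw [Set.ncard_eq_toFinset_card']
    congr 1; ext w; rw [Set.mem_toFinset]; simp [SimpleGraph.neighborSet]
  rw [h1, fiber_card, Fin.sum_univ_four]
  fin_cases k <;>
    simp [filter_ne_card, Finset.filter_true_of_mem, Finset.filter_false_of_mem] <;> omega


lemma alpha_eq {s : ℕ} (hs : 3 ≤ s) : alpha (G3 s) = s := by
  have hmem : s ∈ {k | ∃ I : Finset (Fin 4 × Fin s), I.card = k ∧
      (↑I : Set (Fin 4 × Fin s)).Pairwise fun u v => ¬ (G3 s).Adj u v} := by
    refine ⟨univ.image fun j => ((1 : Fin 4), j), ?_, ?_⟩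
    · rw [Finset.card_image_of_injective _ fun a b h => (Prod.ext_iff.1 h).2]
      simp
    · rintro ⟨k, a⟩ ha ⟨l, b⟩ hb hne
      simp only [Finset.coe_image, Set.mem_image, Finset.mem_coe, Finset.mem_univ,
        Prod.mk.injEq, coe_univ, Set.image_univ, Set.mem_range] at ha hb
      obtain ⟨j1, hj1, hj1'⟩ := ha
      obtain ⟨j2, hj2, hj2'⟩ := hb
      rw [← hj1, ← hj2]
      exact adj11
  have hub : ∀ k ∈ {k | ∃ I : Finset (Fin 4 × Fin s), I.card = k ∧
      (↑I : Set (Fin 4 × Fin s)).Pairwise fun u v => ¬ (G3 s).Adj u v}, k ≤ s := by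
    rintro k ⟨I, rfl, hI⟩
    exact indep_le hs I hI
  exact le_antisymm (csSup_le ⟨s, hmem⟩ hub) (le_csSup ⟨s, hub⟩ hmem)

lemma kappa_eq {s : ℕ} (hs : 3 ≤ s) : kappa (G3 s) = 2 * s := by
  have hmem : 2 * s ∈ {k | ∃ S : Finset (Fin 4 × Fin s), S.card = k ∧
      (¬ ((G3 s).induce (↑S : Set (Fin 4 × Fin s))ᶜ).Connected ∨
        ((↑S : Set (Fin 4 × Fin s))ᶜ).Subsingleton)} := by
    refine ⟨({1, 2} : Finset (Fin 4)) ×ˢ (univ : Finset (Fin s)), ?_, Or.inl (not_conn hs)⟩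
    rw [Finset.card_product]
    simp
  have hlb : ∀ k ∈ {k | ∃ S : Finset (Fin 4 × Fin s), S.card = k ∧
      (¬ ((G3 s).induce (↑S : Set (Fin 4 × Fin s))ᶜ).Connected ∨
        ((↑S : Set (Fin 4 × Fin s))ᶜ).Subsingleton)}, 2 * s ≤ k := by
    rintro k ⟨S, rfl, hdis | hsub⟩
    · by_contra hlt
      push_neg at hlt
      exact hdis (conn_del hs S hlt)
    · by_contra hlt
      push_neg at hlt
      have h4 : (univ : Finset (Fin 4 × Fin s)).card = 4 * s := by simp [Finset.card_univ]
      have hcard2 : 1 < (univ \ S).card := by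
        rw [Finset.card_sdiff_of_subset (Finset.subset_univ S), h4]
        have := Finset.card_le_univ S
        omega
      obtain ⟨a, ha, b, hb, hab⟩ := Finset.one_lt_card.1 hcard2
      simp only [Finset.mem_sdiff, Finset.mem_univ, true_and] at ha hb
      exact hab (hsub ha hb)
  exact le_antisymm (Nat.sInf_le hmem) (le_csInf ⟨_, hmem⟩ hlb)

lemma minDeg_eq {s : ℕ} (hs : 3 ≤ s) : minDeg (G3 s) = 3 * s - 2 := by
  have hmem : 3 * s - 2 ∈ {k | ∃ v : Fin 4 × Fin s, ((G3 s).neighborSet v).ncard = k} :=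
    ⟨((0 : Fin 4), (⟨0, by omega⟩ : Fin s)), ncard_nb (by omega) _⟩
  refine le_antisymm (Nat.sInf_le hmem) (le_csInf ⟨_, hmem⟩ ?_)
  rintro k ⟨v, rfl⟩
  rw [ncard_nb (by omega) v]


/-- for every `s ≥ 3`, the graph `G₃(s)` is regular of degree `3s - 2`,
has independence number `s` and vertex connectivity `2s`; in particular
`α(G₃(s)) < κ(G₃(s)) < δ(G₃(s))`. -/
theorem stmt_16 (s : ℕ) (hs : 3 ≤ s) :
    (∀ v : Fin 4 × Fin s, ((G3 s).neighborSet v).ncard = 3 * s - 2) ∧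
    alpha (G3 s) = s ∧ kappa (G3 s) = 2 * s ∧
    alpha (G3 s) < kappa (G3 s) ∧ kappa (G3 s) < minDeg (G3 s) := by
  refine ⟨fun v => ncard_nb (by omega) v, alpha_eq hs, kappa_eq hs, ?_, ?_⟩
  · rw [alpha_eq hs, kappa_eq hs]; omega
  · rw [kappa_eq hs, minDeg_eq hs]; omega
end
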